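/- arXiv:2108.04887 — 7 statements merged into one kernel-verified Lean document; each statement's English description precedes it below -/
import Mathlib

section
/- Let N ≥ 3 and let Φ : (x,y) ↦ (X,Y) be a map of the form X = x + x² + x³θ₄(x,y) + yθ₅(x,y), Y = −y(1 − λx + yθ₁(x,y) + x²θ₂(x,y)) + x^N θ₃(x,y), with θ₁,…,θ₅ C^∞ near the origin and λ > 0. Then there exists γ ∈ ℝ such that in the new coordinates ỹ = y + γx^N, Ỹ = Y + γX^N, the conjugated map Φ̃ : (x, ỹ) ↦ (X, Ỹ) has the same form with N replaced by N+1; that is, there exist C^∞ functions θ̃₁,…,θ̃₅ such that X = x + x² + x³θ̃₄(x,ỹ) + ỹθ̃₅(x,ỹ) and Ỹ = −ỹ(1 − λx + ỹθ̃₁(x,ỹ) + x²θ̃₂(x,ỹ)) + x^(N+1)θ̃₃(x,ỹ). -/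
open Set Filter Asymptotics Topology

section Aux
open Set Filter MeasureTheory Metric intervalIntegral
set_option synthInstance.maxHeartbeats 1000000
set_option maxHeartbeats 1000000
noncomputable def Rf : ℕ → ℝ → ℝ → ℝ
  | 0, _, _ => 0
  | (k+1), q, e => (q + e) * Rf k q e + k * q^(k-1)

theorem powR : ∀ (k : ℕ) (q e : ℝ),
    (q + e)^(k+1) = q^(k+1) + ((k:ℝ)+1) * q^k * e + e^2 * Rf (k+1) q e := by
  intro k
  induction k with
  | zero => intro q e; simp [Rf]
  | succ k ih =>
    intro q e
    have : (q+e)^(k+1+1) = (q+e)^(k+1) * (q+e) := by ring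
    rw [this, ih]
    show _ = _ + _ + e^2 * ((q+e) * Rf (k+1) q e + (↑(k+1):ℝ) * q^k)
    push_cast
    ring

theorem contDiff_Rf (k : ℕ) : ContDiff ℝ (⊤ : ℕ∞) (fun qe : ℝ × ℝ => Rf k qe.1 qe.2) := by
  induction k with
  | zero => simpa [Rf] using contDiff_const (c := (0:ℝ))
  | succ k ih =>
    show ContDiff ℝ (⊤ : ℕ∞) (fun qe : ℝ × ℝ =>
      (qe.1 + qe.2) * Rf k qe.1 qe.2 + (k:ℝ) * qe.1^(k-1))
    exact ((contDiff_fst.add contDiff_snd).mul ih).add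
      (contDiff_const.mul (contDiff_fst.pow _))

theorem contDiff_param_integral (n : ℕ) :
    ∀ {E : Type} [NormedAddCommGroup E] [NormedSpace ℝ E] [CompleteSpace E]
      (f : ℝ × (ℝ × ℝ) → E), ContDiff ℝ (⊤ : ℕ∞) f →
      ContDiff ℝ (n : ℕ) (fun p : ℝ × ℝ => ∫ t in (0:ℝ)..1, f (t, p)) := by
  induction n with
  | zero =>
    intro E _ _ _ f hf
    rw [show ((0 : ℕ) : WithTop ℕ∞) = 0 from rfl, contDiff_zero]
    refine continuous_iff_continuousAt.mpr fun p₀ => ?_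
    obtain ⟨C, hC⟩ := (isCompact_Icc.prod (isCompact_closedBall p₀ 1)).exists_bound_of_continuousOn
      (hf.continuous.continuousOn : ContinuousOn f (Icc (0:ℝ) 1 ×ˢ closedBall p₀ 1))
    apply intervalIntegral.continuousAt_of_dominated_interval (bound := fun _ => C)
    · filter_upwards with p
      exact ((hf.continuous.comp (continuous_id.prodMk continuous_const)).aestronglyMeasurable).restrict
    · filter_upwards [closedBall_mem_nhds p₀ one_pos] with p hp
      filter_upwards with t ht
      exact hC (t, p) ⟨Ioc_subset_Icc_self (by simpa [uIoc_of_le (zero_le_one : (0:ℝ) ≤ 1)] using ht), hp⟩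
    · exact intervalIntegrable_const
    · filter_upwards with t ht
      exact (hf.continuous.comp (continuous_const.prodMk continuous_id)).continuousAt
  | succ n ih =>
    intro E _ _ _ f hf
    set g : ℝ × (ℝ × ℝ) → (ℝ × ℝ) →L[ℝ] E :=
      fun tp => fderiv ℝ (fun q => f (tp.1, q)) tp.2 with hgdef
    have h₁ : ContDiff ℝ (⊤ : ℕ∞) (fun z : (ℝ × (ℝ × ℝ)) × (ℝ × ℝ) => f (z.1.1, z.2)) :=
      hf.comp (contDiff_fst.fst.prodMk contDiff_snd)
    have hg : ContDiff ℝ (⊤ : ℕ∞) g :=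
      ContDiff.fderiv (f := fun (tp : ℝ × (ℝ × ℝ)) (q : ℝ × ℝ) => f (tp.1, q))
        (g := fun tp : ℝ × (ℝ × ℝ) => tp.2) h₁ contDiff_snd (mod_cast le_top)
    have hdiff : ∀ t : ℝ, ∀ p : ℝ × ℝ, HasFDerivAt (fun q => f (t, q)) (g (t, p)) p := by
      intro t p
      exact ((hf.comp (contDiff_const.prodMk contDiff_id)).differentiable (by simp) p).hasFDerivAt
    have key : ∀ p₀ : ℝ × ℝ, HasFDerivAt (fun p : ℝ × ℝ => ∫ t in (0:ℝ)..1, f (t, p))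
        (∫ t in (0:ℝ)..1, g (t, p₀)) p₀ := by
      intro p₀
      obtain ⟨C, hC⟩ := (isCompact_Icc.prod (isCompact_closedBall p₀ 1)).exists_bound_of_continuousOn
        (hg.continuous.continuousOn : ContinuousOn g (Icc (0:ℝ) 1 ×ˢ closedBall p₀ 1))
      apply intervalIntegral.hasFDerivAt_integral_of_dominated_of_fderiv_le
        (F := fun p t => f (t, p)) (F' := fun p t => g (t, p)) (bound := fun _ => C) (ball_mem_nhds p₀ one_pos)
      · filter_upwards with p
        exact ((hf.continuous.comp (continuous_id.prodMk continuous_const)).aestronglyMeasurable).restrict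
      · exact (hf.continuous.comp (continuous_id.prodMk continuous_const)).intervalIntegrable 0 1
      · exact ((hg.continuous.comp (continuous_id.prodMk continuous_const)).aestronglyMeasurable).restrict
      · filter_upwards with t ht p hp
        exact hC (t, p) ⟨Ioc_subset_Icc_self (by simpa [uIoc_of_le (zero_le_one : (0:ℝ) ≤ 1)] using ht),
          ball_subset_closedBall hp⟩
      · exact intervalIntegrable_const
      · filter_upwards with t ht p hp
        exact hdiff t p
    have : ContDiff ℝ ((n : WithTop ℕ∞) + 1) (fun p : ℝ × ℝ => ∫ t in (0:ℝ)..1, f (t, p)) := by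
      rw [contDiff_succ_iff_fderiv]
      refine ⟨fun p => (key p).differentiableAt, by simp, ?_⟩
      have : (fderiv ℝ fun p : ℝ × ℝ => ∫ t in (0:ℝ)..1, f (t, p))
          = fun p : ℝ × ℝ => ∫ t in (0:ℝ)..1, g (t, p) := funext fun p => (key p).fderiv
      rw [this]
      exact ih g hg
    exact_mod_cast this

theorem hadamard (f : ℝ × ℝ → ℝ) (hf : ContDiff ℝ (⊤ : ℕ∞) f) :
    ∃ A B : ℝ × ℝ → ℝ, ContDiff ℝ (⊤ : ℕ∞) A ∧ ContDiff ℝ (⊤ : ℕ∞) B ∧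
      ∀ p : ℝ × ℝ, f p = f 0 + p.1 * A p + p.2 * B p := by
  have hfd : ContDiff ℝ (⊤ : ℕ∞) (fderiv ℝ f) := hf.fderiv_right (mod_cast le_top)
  have hsm : ContDiff ℝ (⊤ : ℕ∞) (fun tp : ℝ × (ℝ × ℝ) => fderiv ℝ f (tp.1 • tp.2)) :=
    hfd.comp (contDiff_fst.smul contDiff_snd)
  have hg : ∀ v : ℝ × ℝ, ContDiff ℝ (⊤ : ℕ∞)
      (fun tp : ℝ × (ℝ × ℝ) => (fderiv ℝ f (tp.1 • tp.2)) v) := fun v =>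
    hsm.clm_apply contDiff_const
  have hsmooth : ∀ v : ℝ × ℝ, ContDiff ℝ (⊤ : ℕ∞)
      (fun p : ℝ × ℝ => ∫ t in (0:ℝ)..1, (fderiv ℝ f (t • p)) v) := by
    intro v
    have : ∀ n : ℕ, ContDiff ℝ (n : ℕ)
        (fun p : ℝ × ℝ => ∫ t in (0:ℝ)..1, (fderiv ℝ f (t • p)) v) := fun n =>
      contDiff_param_integral n _ (hg v)
    exact contDiff_infty.mpr this
  refine ⟨_, _, hsmooth (1, 0), hsmooth (0, 1), fun p => ?_⟩
  have hcont : Continuous fun t : ℝ => (fderiv ℝ f (t • p)) p :=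
    ((hg p).comp (contDiff_id.prodMk contDiff_const)).continuous
  have hderiv : ∀ t ∈ uIcc (0:ℝ) 1, HasDerivAt (fun t : ℝ => f (t • p))
      ((fderiv ℝ f (t • p)) p) t := by
    intro t _
    have h1 : HasFDerivAt f (fderiv ℝ f (t • p)) (t • p) :=
      (hf.differentiable (by simp) (t • p)).hasFDerivAt
    have h2 : HasDerivAt (fun t : ℝ => t • p) p t := by
      simpa using (hasDerivAt_id t).smul_const p
    exact h1.comp_hasDerivAt t h2
  have hFTC : ∫ t in (0:ℝ)..1, (fderiv ℝ f (t • p)) p = f p - f 0 := by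
    have := intervalIntegral.integral_eq_sub_of_hasDerivAt hderiv
      (hcont.intervalIntegrable 0 1)
    simpa using this
  have hrepr : ∀ t : ℝ, (fderiv ℝ f (t • p)) p
      = p.1 * (fderiv ℝ f (t • p)) (1, 0) + p.2 * (fderiv ℝ f (t • p)) (0, 1) := by
    intro t
    have hp : p = p.1 • ((1:ℝ), (0:ℝ)) + p.2 • ((0:ℝ), (1:ℝ)) := by
      ext <;> simp
    rw [show (fderiv ℝ f (t • p)) p
        = (fderiv ℝ f (t • p)) (p.1 • ((1:ℝ), (0:ℝ)) + p.2 • ((0:ℝ), (1:ℝ))) from by rw [← hp]]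
    rw [ContinuousLinearMap.map_add, ContinuousLinearMap.map_smul, ContinuousLinearMap.map_smul,
      smul_eq_mul, smul_eq_mul]
  have hint : ∀ v : ℝ × ℝ, IntervalIntegrable (fun t : ℝ => (fderiv ℝ f (t • p)) v)
      MeasureTheory.volume 0 1 := fun v =>
    (((hg v).comp (contDiff_id.prodMk contDiff_const)).continuous).intervalIntegrable 0 1
  have : ∫ t in (0:ℝ)..1, (fderiv ℝ f (t • p)) p
      = p.1 * (∫ t in (0:ℝ)..1, (fderiv ℝ f (t • p)) (1, 0))
        + p.2 * (∫ t in (0:ℝ)..1, (fderiv ℝ f (t • p)) (0, 1)) := by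
    calc ∫ t in (0:ℝ)..1, (fderiv ℝ f (t • p)) p
        = ∫ t in (0:ℝ)..1, (p.1 * (fderiv ℝ f (t • p)) (1, 0)
            + p.2 * (fderiv ℝ f (t • p)) (0, 1)) :=
          intervalIntegral.integral_congr fun t _ => hrepr t
      _ = (∫ t in (0:ℝ)..1, p.1 * (fderiv ℝ f (t • p)) (1, 0))
            + ∫ t in (0:ℝ)..1, p.2 * (fderiv ℝ f (t • p)) (0, 1) :=
          intervalIntegral.integral_add ((hint (1,0)).const_mul _) ((hint (0,1)).const_mul _)
      _ = p.1 * (∫ t in (0:ℝ)..1, (fderiv ℝ f (t • p)) (1, 0))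
            + p.2 * (∫ t in (0:ℝ)..1, (fderiv ℝ f (t • p)) (0, 1)) := by
          rw [intervalIntegral.integral_const_mul, intervalIntegral.integral_const_mul]
  rw [hFTC] at this
  linarith [this]

end Aux

open Metric in
set_option maxHeartbeats 1000000 in
/-- **Change of coordinates.** For a map
`X = x + x² + x³θ₄(x,y) + yθ₅(x,y)`,
`Y = -y(1 - λx + yθ₁(x,y) + x²θ₂(x,y)) + x^N θ₃(x,y)` with `θᵢ` smooth near the
origin, `λ > 0`, `N ≥ 3`, there is `γ ∈ ℝ` such that in the coordinates
`ỹ = y + γxᴺ`, `Ỹ = Y + γXᴺ` the map takes the same form with `N+1` in place of `N`. -/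
theorem coordinate_change_raises_order
    (θ₁ θ₂ θ₃ θ₄ θ₅ : ℝ × ℝ → ℝ) (V : Set (ℝ × ℝ)) (hV : V ∈ 𝓝 (0 : ℝ × ℝ))
    (hθ₁ : ContDiffOn ℝ (⊤ : ℕ∞) θ₁ V) (hθ₂ : ContDiffOn ℝ (⊤ : ℕ∞) θ₂ V)
    (hθ₃ : ContDiffOn ℝ (⊤ : ℕ∞) θ₃ V) (hθ₄ : ContDiffOn ℝ (⊤ : ℕ∞) θ₄ V)
    (hθ₅ : ContDiffOn ℝ (⊤ : ℕ∞) θ₅ V)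
    (lam : ℝ) (hlam : 0 < lam) (N : ℕ) (hN : 3 ≤ N) :
    ∃ γ : ℝ, ∃ W : Set (ℝ × ℝ), W ∈ 𝓝 (0 : ℝ × ℝ) ∧ W ⊆ V ∧
      ∃ t₁ t₂ t₃ t₄ t₅ : ℝ × ℝ → ℝ,
        ContDiffOn ℝ (⊤ : ℕ∞) t₁ W ∧ ContDiffOn ℝ (⊤ : ℕ∞) t₂ W ∧
        ContDiffOn ℝ (⊤ : ℕ∞) t₃ W ∧ ContDiffOn ℝ (⊤ : ℕ∞) t₄ W ∧
        ContDiffOn ℝ (⊤ : ℕ∞) t₅ W ∧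
        ∀ x y : ℝ, (x, y) ∈ W →
          (x + x ^ 2 + x ^ 3 * θ₄ (x, y) + y * θ₅ (x, y)
              = x + x ^ 2 + x ^ 3 * t₄ (x, y + γ * x ^ N)
                + (y + γ * x ^ N) * t₅ (x, y + γ * x ^ N)) ∧
          ((-y * (1 - lam * x + y * θ₁ (x, y) + x ^ 2 * θ₂ (x, y)) + x ^ N * θ₃ (x, y))
              + γ * (x + x ^ 2 + x ^ 3 * θ₄ (x, y) + y * θ₅ (x, y)) ^ N
            = -(y + γ * x ^ N) * (1 - lam * x
                  + (y + γ * x ^ N) * t₁ (x, y + γ * x ^ N)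
                  + x ^ 2 * t₂ (x, y + γ * x ^ N))
              + x ^ (N + 1) * t₃ (x, y + γ * x ^ N)) := by
  obtain ⟨n, rfl⟩ : ∃ n : ℕ, N = n + 3 := ⟨N - 3, by omega⟩
  clear hN
  set U := interior V with hUdef
  have hUopen : IsOpen U := isOpen_interior
  have hU0 : (0 : ℝ × ℝ) ∈ U := mem_interior_iff_mem_nhds.mpr hV
  obtain ⟨ε, hε, hball⟩ : ∃ ε > 0, closedBall (0 : ℝ × ℝ) ε ⊆ U := by
    rcases Metric.nhds_basis_closedBall.mem_iff.mp (hUopen.mem_nhds hU0) with ⟨ε, hε, h⟩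
    exact ⟨ε, hε, h⟩
  set χ : ContDiffBump (0 : ℝ × ℝ) := ⟨ε/2, ε, by positivity, by linarith⟩ with hχdef
  set θ : ℝ × ℝ → ℝ := fun p => χ p * θ₃ p with hθdef
  have hθsmooth : ContDiff ℝ (⊤ : ℕ∞) θ := by
    rw [contDiff_iff_contDiffAt]
    intro p
    by_cases hp : p ∈ closedBall (0 : ℝ × ℝ) ε
    · exact (χ.contDiff.contDiffAt).mul
        ((hθ₃.mono interior_subset).contDiffAt (hUopen.mem_nhds (hball hp)))
    · have hev : ∀ᶠ q in 𝓝 p, θ q = 0 := by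
        filter_upwards [Metric.isClosed_closedBall.isOpen_compl.mem_nhds hp] with q hq
        have hq' : χ q = 0 := by
          apply χ.zero_of_le_dist
          have h2 : ¬ dist q (0 : ℝ × ℝ) ≤ ε := by simpa [Metric.mem_closedBall] using hq
          show (χ.rOut : ℝ) ≤ dist q 0
          have h3 : χ.rOut = ε := rfl
          rw [h3]
          linarith [not_le.mp h2]
        simp [hθdef, hq']
      exact (contDiffAt_const (c := (0:ℝ))).congr_of_eventuallyEq hev
  obtain ⟨A, B, hA, hB, hHad⟩ := hadamard θ hθsmooth
  have hθ0 : θ 0 = θ₃ 0 := by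
    have h1 : χ (0 : ℝ × ℝ) = 1 :=
      χ.one_of_mem_closedBall (mem_closedBall_self (by positivity))
    simp [hθdef, h1]
  obtain ⟨γ, hγdef⟩ : ∃ γ : ℝ, γ = -(θ₃ 0)/2 := ⟨_, rfl⟩
  -- auxiliary functions (opaque)
  obtain ⟨M, hMdef⟩ : ∃ M : ℝ × ℝ → ℝ, M = fun p => 1 + p.1 + p.1^2 * θ₄ p := ⟨_, rfl⟩
  obtain ⟨T, hTdef⟩ : ∃ T : ℝ × ℝ → ℝ,
    T = fun p => ∑ i ∈ Finset.range (n+3), (M p)^i := ⟨_, rfl⟩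
  obtain ⟨R, hRdef⟩ : ∃ R : ℝ × ℝ → ℝ,
    R = fun p => Rf (n+3) (p.1 * M p) (p.2 * θ₅ p) := ⟨_, rfl⟩
  obtain ⟨g₁, hg₁def⟩ : ∃ g : ℝ × ℝ → ℝ,
    g = fun p => θ₁ p - γ * (θ₅ p)^2 * R p := ⟨_, rfl⟩
  obtain ⟨g₂, hg₂def⟩ : ∃ g : ℝ × ℝ → ℝ,
    g = fun p => θ₂ p - p.1^(n+1) * B p
      - ((n:ℝ)+3) * γ * p.1^n * (M p)^(n+2) * θ₅ p - 2 * γ * p.1^(n+1) * g₁ p := ⟨_, rfl⟩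
  obtain ⟨g₃, hg₃def⟩ : ∃ g : ℝ × ℝ → ℝ,
    g = fun p => -γ*lam + A p + γ * (1 + p.1 * θ₄ p) * T p
      + γ * p.1 * g₂ p + γ^2 * p.1^(n+2) * g₁ p := ⟨_, rfl⟩
  obtain ⟨g₄, hg₄def⟩ : ∃ g : ℝ × ℝ → ℝ,
    g = fun p => θ₄ p - γ * p.1^n * θ₅ p := ⟨_, rfl⟩
  obtain ⟨σ, hσdef⟩ : ∃ σ : ℝ × ℝ → ℝ × ℝ,
    σ = fun q => (q.1, q.2 - γ * q.1^(n+3)) := ⟨_, rfl⟩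
  have hσsmooth : ContDiff ℝ (⊤ : ℕ∞) σ := by
    rw [hσdef]
    exact contDiff_fst.prodMk (contDiff_snd.sub (contDiff_const.mul (contDiff_fst.pow _)))
  obtain ⟨W, hWdef⟩ : ∃ W : Set (ℝ × ℝ),
    W = (U ∩ ball (0:ℝ×ℝ) (ε/2)) ∩ σ ⁻¹' U := ⟨_, rfl⟩
  have hWnhds : W ∈ 𝓝 (0 : ℝ × ℝ) := by
    have hσ0 : (0 : ℝ × ℝ) ∈ σ ⁻¹' U := by
      have h0 : σ (0 : ℝ × ℝ) = 0 := by rw [hσdef]; simp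
      simp only [mem_preimage, h0]; exact hU0
    have hop : IsOpen W := by
      rw [hWdef]
      exact (hUopen.inter isOpen_ball).inter (hUopen.preimage hσsmooth.continuous)
    exact hop.mem_nhds (by
      rw [hWdef]
      exact ⟨⟨hU0, mem_ball_self (by positivity)⟩, hσ0⟩)
  -- smoothness on U
  have hθ₁U : ContDiffOn ℝ (⊤ : ℕ∞) θ₁ U := hθ₁.mono interior_subset
  have hθ₂U : ContDiffOn ℝ (⊤ : ℕ∞) θ₂ U := hθ₂.mono interior_subset
  have hθ₄U : ContDiffOn ℝ (⊤ : ℕ∞) θ₄ U := hθ₄.mono interior_subset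
  have hθ₅U : ContDiffOn ℝ (⊤ : ℕ∞) θ₅ U := hθ₅.mono interior_subset
  have hMU : ContDiffOn ℝ (⊤ : ℕ∞) M U := by
    rw [hMdef]
    exact (contDiffOn_const.add contDiff_fst.contDiffOn).add
      ((contDiff_fst.pow 2).contDiffOn.mul hθ₄U)
  have hTU : ContDiffOn ℝ (⊤ : ℕ∞) T U := by
    rw [hTdef]; exact ContDiffOn.sum fun i _ => hMU.pow i
  have hRU : ContDiffOn ℝ (⊤ : ℕ∞) R U := by
    rw [hRdef]
    exact (contDiff_Rf (n+3)).comp_contDiffOn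
      ((contDiff_fst.contDiffOn.mul hMU).prodMk (contDiff_snd.contDiffOn.mul hθ₅U))
  have hg₁U : ContDiffOn ℝ (⊤ : ℕ∞) g₁ U := by
    rw [hg₁def]
    exact hθ₁U.sub ((contDiffOn_const.mul (hθ₅U.pow 2)).mul hRU)
  have hg₂U : ContDiffOn ℝ (⊤ : ℕ∞) g₂ U := by
    rw [hg₂def]
    refine ContDiffOn.sub (ContDiffOn.sub (hθ₂U.sub
      ((contDiff_fst.pow (n+1)).contDiffOn.mul hB.contDiffOn)) ?_) ?_
    · exact (((contDiffOn_const.mul (contDiff_fst.pow n).contDiffOn).mul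
        (hMU.pow (n+2)))).mul hθ₅U
    · exact (contDiffOn_const.mul (contDiff_fst.pow (n+1)).contDiffOn).mul hg₁U
  have hg₃U : ContDiffOn ℝ (⊤ : ℕ∞) g₃ U := by
    rw [hg₃def]
    refine ContDiffOn.add (ContDiffOn.add (ContDiffOn.add (contDiffOn_const.add
      hA.contDiffOn) ?_) ?_) ?_
    · exact (contDiffOn_const.mul (contDiffOn_const.add
        (contDiff_fst.contDiffOn.mul hθ₄U))).mul hTU
    · exact (contDiffOn_const.mul contDiff_fst.contDiffOn).mul hg₂U
    · exact (contDiffOn_const.mul (contDiff_fst.pow (n+2)).contDiffOn).mul hg₁U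
  have hg₄U : ContDiffOn ℝ (⊤ : ℕ∞) g₄ U := by
    rw [hg₄def]
    exact hθ₄U.sub ((contDiffOn_const.mul (contDiff_fst.pow n).contDiffOn).mul hθ₅U)
  have hmaps : MapsTo σ W U := by rw [hWdef]; exact fun q hq => hq.2
  have hWsubV : W ⊆ V := by
    rw [hWdef]
    exact fun q hq => interior_subset hq.1.1
  refine ⟨γ, W, hWnhds, hWsubV,
    g₁ ∘ σ, g₂ ∘ σ, g₃ ∘ σ, g₄ ∘ σ, θ₅ ∘ σ,
    hg₁U.comp hσsmooth.contDiffOn hmaps, hg₂U.comp hσsmooth.contDiffOn hmaps,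
    hg₃U.comp hσsmooth.contDiffOn hmaps, hg₄U.comp hσsmooth.contDiffOn hmaps,
    hθ₅U.comp hσsmooth.contDiffOn hmaps, ?_⟩
  intro x y hxy
  have hshift : σ (x, y + γ * x ^ (n+3)) = (x, y) := by
    rw [hσdef]; simp
  have hcomp : ∀ g : ℝ × ℝ → ℝ, (g ∘ σ) (x, y + γ * x ^ (n+3)) = g (x, y) := by
    intro g; rw [Function.comp_apply, hshift]
  constructor
  · rw [hcomp g₄, hcomp θ₅, hg₄def]
    ring
  · rw [hcomp g₁, hcomp g₂, hcomp g₃]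
    have hmem : (x, y) ∈ closedBall (0:ℝ×ℝ) (ε/2) := by
      rw [hWdef] at hxy
      exact ball_subset_closedBall hxy.1.2
    have hχ1 : χ (x, y) = 1 := χ.one_of_mem_closedBall hmem
    have hθ₃p : θ₃ (x, y) = -(2*γ) + x * A (x, y) + y * B (x, y) := by
      have h1 := hHad (x, y)
      rw [hθ0] at h1
      have h2 : θ (x, y) = θ₃ (x, y) := by simp [hθdef, hχ1]
      rw [h2] at h1
      rw [h1, hγdef]
      ring
    have hMv : M (x, y) = 1 + x + x^2 * θ₄ (x, y) := by rw [hMdef]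
    have hgeom : (M (x, y))^(n+3) = 1 + x * (1 + x * θ₄ (x, y)) * T (x, y) := by
      have h1 := geom_sum_mul (M (x, y)) (n+3)
      have h2 : T (x, y) = ∑ i ∈ Finset.range (n+3), (M (x, y))^i := by rw [hTdef]
      have h3 : M (x, y) - 1 = x * (1 + x * θ₄ (x, y)) := by rw [hMv]; ring
      rw [h2]
      linear_combination (-1 : ℝ) * h1 + (∑ i ∈ Finset.range (n+3), (M (x, y))^i) * h3
    have hXpow : (x + x ^ 2 + x ^ 3 * θ₄ (x, y) + y * θ₅ (x, y)) ^ (n+3)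
        = x^(n+3) * (1 + x * (1 + x * θ₄ (x, y)) * T (x, y))
          + ((n:ℝ)+3) * x^(n+2) * (M (x, y))^(n+2) * (y * θ₅ (x, y))
          + (y * θ₅ (x, y))^2 * R (x, y) := by
      have e1 : x + x ^ 2 + x ^ 3 * θ₄ (x, y) + y * θ₅ (x, y)
          = x * M (x, y) + y * θ₅ (x, y) := by rw [hMv]; ring
      have e2 : R (x, y) = Rf (n+3) (x * M (x, y)) (y * θ₅ (x, y)) := by rw [hRdef]
      rw [e1, powR (n+2) (x * M (x, y)) (y * θ₅ (x, y)), ← e2, mul_pow, mul_pow, hgeom]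
      push_cast
      ring
    rw [hθ₃p, hXpow, hg₃def, hg₂def, hg₁def]
    push_cast
    ring
end

section
/- Let Φ be of the form (IA). Then there exists δ₀ > 0 such that for all (x,y) with x ∈ [0, 10δ₀] and |y| ≤ x^N, the image (X,Y) = Φ(x,y) satisfies |Y| ≤ X^N. Moreover X ≥ x for such (x,y). -/
open Set Filter Asymptotics Topology

/-- First component of a map `Φ` of the form (IA):
`X = x + x² + x³ θ_A(x,y) + y θ_B(x,y)`. -/
noncomputable def XIA (θA θB : ℝ × ℝ → ℝ) (x y : ℝ) : ℝ :=
  x + x ^ 2 + x ^ 3 * θA (x, y) + y * θB (x, y)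

/-- Second component of a map `Φ` of the form (IA):
`Y = -y(1 - λx + y θ_C(x,y) + x² θ_D(x,y)) + x^(N+100) θ_E(x,y)`. -/
noncomputable def YIA (θC θD θE : ℝ × ℝ → ℝ) (lam : ℝ) (N : ℕ) (x y : ℝ) : ℝ :=
  -y * (1 - lam * x + y * θC (x, y) + x ^ 2 * θD (x, y)) + x ^ (N + 100) * θE (x, y)

set_option maxHeartbeats 1000000 in
/-- **Assertion 1.** For `Φ` of the form (IA) there is `δ₀ > 0` such
that for `x ∈ [0, 10δ₀]` and `|y| ≤ xᴺ`, the image `(X,Y) = Φ(x,y)` satisfies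
`|Y| ≤ Xᴺ`; moreover `X ≥ x`. -/
theorem assertion1
    (θA θB θC θD θE : ℝ × ℝ → ℝ) (V : Set (ℝ × ℝ)) (hV : V ∈ 𝓝 (0 : ℝ × ℝ))
    (hθA : ContDiffOn ℝ (⊤ : ℕ∞) θA V) (hθB : ContDiffOn ℝ (⊤ : ℕ∞) θB V)
    (hθC : ContDiffOn ℝ (⊤ : ℕ∞) θC V) (hθD : ContDiffOn ℝ (⊤ : ℕ∞) θD V)
    (hθE : ContDiffOn ℝ (⊤ : ℕ∞) θE V)
    (lam : ℝ) (hlam : 0 < lam) (N : ℕ) (hN : 100 ≤ N)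
    :
    ∃ δ₀ > (0 : ℝ), ∀ x y : ℝ, x ∈ Icc (0 : ℝ) (10 * δ₀) → |y| ≤ x ^ N →
      |YIA θC θD θE lam N x y| ≤ (XIA θA θB x y) ^ N ∧ x ≤ XIA θA θB x y := by
  obtain ⟨ε, hε, hball⟩ := Metric.mem_nhds_iff.mp hV
  set K : Set (ℝ × ℝ) := Metric.closedBall 0 (ε / 2) with hKdef
  have hKV : K ⊆ V := fun p hp => hball (by
    have : dist p 0 ≤ ε / 2 := Metric.mem_closedBall.mp hp
    exact Metric.mem_ball.mpr (lt_of_le_of_lt this (by linarith)))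
  have hK : IsCompact K := isCompact_closedBall _ _
  have bd : ∀ θ : ℝ × ℝ → ℝ, ContDiffOn ℝ (⊤ : ℕ∞) θ V →
      ∃ M : ℝ, ∀ p ∈ K, |θ p| ≤ M := by
    intro θ hθ
    obtain ⟨M, hM⟩ := hK.exists_bound_of_continuousOn (hθ.continuousOn.mono hKV)
    exact ⟨M, fun p hp => by simpa [Real.norm_eq_abs] using hM p hp⟩
  obtain ⟨MA, hMA⟩ := bd θA hθA
  obtain ⟨MB, hMB⟩ := bd θB hθB
  obtain ⟨MC, hMC⟩ := bd θC hθC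
  obtain ⟨MD, hMD⟩ := bd θD hθD
  obtain ⟨ME, hME⟩ := bd θE hθE
  set M : ℝ := max 1 (max (max MA MB) (max (max MC MD) ME)) with hMdef
  have hM1 : (1 : ℝ) ≤ M := le_max_left _ _
  have hM0 : (0 : ℝ) < M := lt_of_lt_of_le one_pos hM1
  have hMA' : ∀ p ∈ K, |θA p| ≤ M := fun p hp =>
    (hMA p hp).trans (le_max_of_le_right (le_max_of_le_left (le_max_left _ _)))
  have hMB' : ∀ p ∈ K, |θB p| ≤ M := fun p hp =>
    (hMB p hp).trans (le_max_of_le_right (le_max_of_le_left (le_max_right _ _)))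
  have hMC' : ∀ p ∈ K, |θC p| ≤ M := fun p hp =>
    (hMC p hp).trans (le_max_of_le_right (le_max_of_le_right (le_max_of_le_left (le_max_left _ _))))
  have hMD' : ∀ p ∈ K, |θD p| ≤ M := fun p hp =>
    (hMD p hp).trans (le_max_of_le_right (le_max_of_le_right (le_max_of_le_left (le_max_right _ _))))
  have hME' : ∀ p ∈ K, |θE p| ≤ M := fun p hp =>
    (hME p hp).trans (le_max_of_le_right (le_max_of_le_right (le_max_right _ _)))
  set m : ℝ := min (min 1 (ε / 2)) (min (1 / (2 * M)) (min (1 / lam) (lam / (3 * M)))) with hmdef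
  have hm0 : 0 < m := by
    refine lt_min (lt_min one_pos (by linarith)) (lt_min (by positivity) (lt_min (by positivity) (by positivity)))
  refine ⟨m / 10, by positivity, ?_⟩
  intro x y hx hy
  have hx0 : 0 ≤ x := hx.1
  have hxm : x ≤ m := by have := hx.2; linarith
  have hx1 : x ≤ 1 := hxm.trans ((min_le_left _ _).trans (min_le_left _ _))
  have hxε : x ≤ ε / 2 := hxm.trans ((min_le_left _ _).trans (min_le_right _ _))
  have hx2M : x ≤ 1 / (2 * M) := hxm.trans ((min_le_right _ _).trans (min_le_left _ _))
  have hxlam : x ≤ 1 / lam := hxm.trans ((min_le_right _ _).trans ((min_le_right _ _).trans (min_le_left _ _)))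
  have hx3M : x ≤ lam / (3 * M) := hxm.trans ((min_le_right _ _).trans ((min_le_right _ _).trans (min_le_right _ _)))
  have h2Mx : 2 * M * x ≤ 1 := by
    rw [le_div_iff₀ (by positivity)] at hx2M; linarith [hx2M]
  have hlamx : lam * x ≤ 1 := by
    rw [le_div_iff₀ hlam] at hxlam; linarith [hxlam]
  have h3Mx : 3 * M * x ≤ lam := by
    rw [le_div_iff₀ (by positivity)] at hx3M; linarith [hx3M]
  have hxN0 : 0 ≤ x ^ N := pow_nonneg hx0 N
  have hxNx : x ^ N ≤ x := pow_le_of_le_one hx0 hx1 (by omega)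
  have hxN2 : x ^ N ≤ x ^ 2 := pow_le_pow_of_le_one hx0 hx1 (by omega)
  have hxN3 : x ^ N ≤ x ^ 3 := pow_le_pow_of_le_one hx0 hx1 (by omega)
  have hx100 : x ^ 100 ≤ x ^ 2 := pow_le_pow_of_le_one hx0 hx1 (by omega)
  have hmem : ((x, y) : ℝ × ℝ) ∈ K := by
    rw [hKdef, Metric.mem_closedBall, dist_zero_right]
    rw [Prod.norm_def]
    simp only [Real.norm_eq_abs]
    refine max_le ?_ ?_
    · rw [abs_of_nonneg hx0]; exact hxε
    · exact hy.trans (hxNx.trans hxε)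
  have ha := hMA' _ hmem
  have hb := hMB' _ hmem
  have hc := hMC' _ hmem
  have hd := hMD' _ hmem
  have he := hME' _ hmem
  set a := θA (x, y); set b := θB (x, y); set c := θC (x, y)
  set d := θD (x, y); set e := θE (x, y)
  -- bound |y * b|
  have hyb : |y * b| ≤ x ^ N * M := by
    rw [abs_mul]; exact mul_le_mul hy hb (abs_nonneg _) hxN0
  have hx3a : |x ^ 3 * a| ≤ x ^ 3 * M := by
    rw [abs_mul, abs_of_nonneg (by positivity : (0:ℝ) ≤ x ^ 3)]
    exact mul_le_mul_of_nonneg_left ha (by positivity)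
  -- X ≥ x
  have hXx : x ≤ XIA θA θB x y := by
    have h1 : -(x ^ 3 * M) ≤ x ^ 3 * a := neg_le_of_abs_le hx3a
    have h2 : -(x ^ N * M) ≤ y * b := neg_le_of_abs_le hyb
    have h3 : x ^ N * M ≤ x ^ 3 * M := mul_le_mul_of_nonneg_right hxN3 hM0.le
    simp only [XIA]
    nlinarith [mul_nonneg (mul_nonneg hx0 hx0) (sub_nonneg.mpr h2Mx), sq_nonneg x]
  have hX0 : 0 ≤ XIA θA θB x y := hx0.trans hXx
  refine ⟨?_, hXx⟩
  -- |Y| ≤ x^N ≤ X^N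
  have hYxN : |YIA θC θD θE lam N x y| ≤ x ^ N := by
    simp only [YIA]
    have hP : |1 - lam * x + y * c + x ^ 2 * d| ≤ 1 - lam * x + 2 * M * x ^ 2 := by
      have h1 : |1 - lam * x| = 1 - lam * x := abs_of_nonneg (by linarith)
      have h2 : |y * c| ≤ x ^ 2 * M := by
        rw [abs_mul]
        calc |y| * |c| ≤ x ^ N * M := mul_le_mul hy hc (abs_nonneg _) hxN0
          _ ≤ x ^ 2 * M := mul_le_mul_of_nonneg_right hxN2 hM0.le
      have h3 : |x ^ 2 * d| ≤ x ^ 2 * M := by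
        rw [abs_mul, abs_of_nonneg (by positivity : (0:ℝ) ≤ x ^ 2)]
        exact mul_le_mul_of_nonneg_left hd (by positivity)
      calc |1 - lam * x + y * c + x ^ 2 * d|
          ≤ |1 - lam * x + y * c| + |x ^ 2 * d| := abs_add_le _ _
        _ ≤ |1 - lam * x| + |y * c| + |x ^ 2 * d| := by linarith [abs_add_le (1 - lam * x) (y * c)]
        _ ≤ 1 - lam * x + 2 * M * x ^ 2 := by rw [h1]; linarith
    have hE : |x ^ (N + 100) * e| ≤ x ^ N * x ^ 2 * M := by
      rw [abs_mul, abs_of_nonneg (by positivity : (0:ℝ) ≤ x ^ (N + 100)), pow_add]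
      calc x ^ N * x ^ 100 * |e| ≤ x ^ N * x ^ 100 * M :=
            mul_le_mul_of_nonneg_left he (by positivity)
        _ ≤ x ^ N * x ^ 2 * M := by
            have := mul_le_mul_of_nonneg_left hx100 hxN0
            exact mul_le_mul_of_nonneg_right (this) hM0.le
    have habs : |(-y) * (1 - lam * x + y * c + x ^ 2 * d) + x ^ (N + 100) * e|
        ≤ |y| * |1 - lam * x + y * c + x ^ 2 * d| + |x ^ (N + 100) * e| := by
      calc _ ≤ |(-y) * (1 - lam * x + y * c + x ^ 2 * d)| + |x ^ (N + 100) * e| := abs_add_le _ _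
        _ = |y| * |1 - lam * x + y * c + x ^ 2 * d| + |x ^ (N + 100) * e| := by
            rw [abs_mul, abs_neg]
    have hP0 : (0:ℝ) ≤ |1 - lam * x + y * c + x ^ 2 * d| := abs_nonneg _
    have hmain : |y| * |1 - lam * x + y * c + x ^ 2 * d| ≤ x ^ N * (1 - lam * x + 2 * M * x ^ 2) :=
      mul_le_mul hy hP hP0 hxN0
    have hfin : x ^ N * (1 - lam * x + 2 * M * x ^ 2) + x ^ N * x ^ 2 * M ≤ x ^ N := by
      nlinarith [mul_nonneg hxN0 (mul_nonneg hx0 (sub_nonneg.mpr h3Mx))]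
    exact habs.trans (le_trans (add_le_add hmain hE) hfin)
  calc |YIA θC θD θE lam N x y| ≤ x ^ N := hYxN
    _ ≤ (XIA θA θB x y) ^ N := pow_le_pow_left₀ hx0 hXx N
end

section
/- Let Φ be of the form (IA). For every constant K₁ > 0 there exists δ > 0 (depending on Φ and K₁) such that the following holds. Let f : [0, x_MAX] → ℝ be C^∞ with 0 < x_MAX ≤ 10δ, |f(x)| ≤ x^N and |f'(x)| ≤ K₁ x^(N−1) on [0, x_MAX]. Define X(x) as the first component of Φ(x, f(x)). Then dX/dx ≥ 1 for all x ∈ [0, x_MAX]. -/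
open Set Filter Asymptotics Topology

/-- **Assertion 2.** For `Φ` of the form (IA) and any `K₁ > 0` there is
`δ > 0` such that: if `f` is `C^∞` on `[0, x_MAX]`, `0 < x_MAX ≤ 10δ`, `|f(x)| ≤ xᴺ`
and `|f'(x)| ≤ K₁ x^(N-1)` there, then the first component `X(x)` of `Φ(x, f(x))`
satisfies `dX/dx ≥ 1` on `[0, x_MAX]`. -/
theorem assertion2
    (θA θB θC θD θE : ℝ × ℝ → ℝ) (V : Set (ℝ × ℝ)) (hV : V ∈ 𝓝 (0 : ℝ × ℝ))
    (hθA : ContDiffOn ℝ (⊤ : ℕ∞) θA V) (hθB : ContDiffOn ℝ (⊤ : ℕ∞) θB V)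
    (hθC : ContDiffOn ℝ (⊤ : ℕ∞) θC V) (hθD : ContDiffOn ℝ (⊤ : ℕ∞) θD V)
    (hθE : ContDiffOn ℝ (⊤ : ℕ∞) θE V)
    (lam : ℝ) (hlam : 0 < lam) (N : ℕ) (hN : 100 ≤ N)
    :
    ∀ K₁ > (0 : ℝ), ∃ δ > (0 : ℝ), ∀ (xMAX : ℝ) (f : ℝ → ℝ),
      0 < xMAX → xMAX ≤ 10 * δ →
      ContDiffOn ℝ (⊤ : ℕ∞) f (Icc 0 xMAX) →
      (∀ x ∈ Icc (0 : ℝ) xMAX, |f x| ≤ x ^ N) →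
      (∀ x ∈ Icc (0 : ℝ) xMAX, |derivWithin f (Icc 0 xMAX) x| ≤ K₁ * x ^ (N - 1)) →
      ∀ x ∈ Icc (0 : ℝ) xMAX,
        1 ≤ derivWithin (fun t => XIA θA θB t (f t)) (Icc 0 xMAX) x := by
  intro K₁ hK₁
  -- Choose a closed ball inside `V` where everything is bounded.
  have h0 : (0 : ℝ × ℝ) ∈ interior V := mem_interior_iff_mem_nhds.2 hV
  obtain ⟨ε, hε, hball⟩ := Metric.isOpen_iff.1 isOpen_interior _ h0
  set r := ε / 2 with hrdef
  have hrpos : 0 < r := by positivity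
  have hsubU : Metric.closedBall (0 : ℝ × ℝ) r ⊆ interior V :=
    (Metric.closedBall_subset_ball (by simp only [hrdef]; linarith)).trans hball
  have hsubV : Metric.closedBall (0 : ℝ × ℝ) r ⊆ V := hsubU.trans interior_subset
  have hcomp : IsCompact (Metric.closedBall (0 : ℝ × ℝ) r) := isCompact_closedBall _ _
  have h1top : (1 : ℕ∞) ≤ ((⊤ : ℕ∞) : ℕ∞) := le_top
  obtain ⟨MA, hMA⟩ := hcomp.exists_bound_of_continuousOn (hθA.continuousOn.mono hsubV)
  obtain ⟨MB, hMB⟩ := hcomp.exists_bound_of_continuousOn (hθB.continuousOn.mono hsubV)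
  obtain ⟨MA', hMA'⟩ := hcomp.exists_bound_of_continuousOn
    (((hθA.mono interior_subset).continuousOn_fderiv_of_isOpen isOpen_interior
      (by exact_mod_cast le_top)).mono hsubU)
  obtain ⟨MB', hMB'⟩ := hcomp.exists_bound_of_continuousOn
    (((hθB.mono interior_subset).continuousOn_fderiv_of_isOpen isOpen_interior
      (by exact_mod_cast le_top)).mono hsubU)
  set M := max 1 (max (max MA MB) (max MA' MB')) with hMdef
  have hM1 : (1 : ℝ) ≤ M := le_max_left _ _
  have hMpos : (0 : ℝ) < M := lt_of_lt_of_le one_pos hM1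
  have hMA_le : MA ≤ M := le_trans (le_trans (le_max_left _ _) (le_max_left _ _)) (le_max_right _ _)
  have hMB_le : MB ≤ M := le_trans (le_trans (le_max_right _ _) (le_max_left _ _)) (le_max_right _ _)
  have hMA'_le : MA' ≤ M := le_trans (le_trans (le_max_left _ _) (le_max_right _ _)) (le_max_right _ _)
  have hMB'_le : MB' ≤ M := le_trans (le_trans (le_max_right _ _) (le_max_right _ _)) (le_max_right _ _)
  set C := 3 * M + 2 * (M * (1 + K₁)) + K₁ * M with hCdef
  have hC : 0 < C := by nlinarith [mul_pos hMpos hK₁]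
  have hδpos : 0 < min r (min 1 (2 / C)) / 10 :=
    div_pos (lt_min hrpos (lt_min one_pos (div_pos two_pos hC))) (by norm_num)
  refine ⟨min r (min 1 (2 / C)) / 10, hδpos, ?_⟩
  intro xMAX f hxMAXpos hxMAXle hf hfb hfd x hx
  set s := Icc (0 : ℝ) xMAX with hsdef
  have hx0 : 0 ≤ x := hx.1
  have hxm : x ≤ min r (min 1 (2 / C)) := le_trans hx.2 (by linarith)
  have hxr : x ≤ r := le_trans hxm (min_le_left _ _)
  have hx1 : x ≤ 1 := le_trans hxm (le_trans (min_le_right _ _) (min_le_left _ _))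
  have hx2C : x ≤ 2 / C := le_trans hxm (le_trans (min_le_right _ _) (min_le_right _ _))
  have hfx : |f x| ≤ x ^ N := hfb x hx
  have hxN2 : x ^ N ≤ x ^ 2 := pow_le_pow_of_le_one hx0 hx1 (by omega)
  have hxN1 : x ^ (N - 1) ≤ x ^ 2 := pow_le_pow_of_le_one hx0 hx1 (by omega)
  have hxNx : x ^ N ≤ x := by
    calc x ^ N ≤ x ^ 1 := pow_le_pow_of_le_one hx0 hx1 (by omega)
    _ = x := pow_one x
  have hx32 : x ^ 3 ≤ x ^ 2 := pow_le_pow_of_le_one hx0 hx1 (by omega)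
  have hfx2 : |f x| ≤ x ^ 2 := hfx.trans hxN2
  have hmem : (x, f x) ∈ Metric.closedBall (0 : ℝ × ℝ) r := by
    rw [Metric.mem_closedBall, dist_zero_right, Prod.norm_def]
    apply max_le
    · simpa [Real.norm_eq_abs, abs_of_nonneg hx0] using hxr
    · exact le_trans (by simpa [Real.norm_eq_abs] using hfx) (le_trans hxNx hxr)
  have hA : HasFDerivAt θA (fderiv ℝ θA (x, f x)) (x, f x) :=
    (((hθA.mono interior_subset).contDiffAt
      (isOpen_interior.mem_nhds (hsubU hmem))).differentiableAt
      (by simp)).hasFDerivAt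
  have hB : HasFDerivAt θB (fderiv ℝ θB (x, f x)) (x, f x) :=
    (((hθB.mono interior_subset).contDiffAt
      (isOpen_interior.mem_nhds (hsubU hmem))).differentiableAt
      (by simp)).hasFDerivAt
  set f' := derivWithin f s x with hf'def
  have hfd' : |f'| ≤ K₁ * x ^ (N - 1) := hfd x hx
  have hf'2 : |f'| ≤ K₁ * x ^ 2 := hfd'.trans (mul_le_mul_of_nonneg_left hxN1 hK₁.le)
  have hxN1le1 : x ^ (N - 1) ≤ 1 := pow_le_one₀ hx0 hx1
  have hf'K : |f'| ≤ K₁ := hfd'.trans (by nlinarith)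
  have hder : HasDerivWithinAt f f' s x :=
    (hf.differentiableOn (by simp) x hx).hasDerivWithinAt
  set a := θA (x, f x) with hadef
  set b := θB (x, f x) with hbdef
  set da := fderiv ℝ θA (x, f x) (1, f') with hdadef
  set db := fderiv ℝ θB (x, f x) (1, f') with hdbdef
  have hX : HasDerivWithinAt (fun t => XIA θA θB t (f t))
      (1 + 2 * x + (3 * x ^ 2 * a + x ^ 3 * da) + (f' * b + f x * db)) s x := by
    have hpair : HasDerivWithinAt (fun t => (t, f t)) (1, f') s x :=
      (hasDerivWithinAt_id x s).prodMk hder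
    have hAc : HasDerivWithinAt (fun t => θA (t, f t)) da s x :=
      hA.comp_hasDerivWithinAt x hpair
    have hBc : HasDerivWithinAt (fun t => θB (t, f t)) db s x :=
      hB.comp_hasDerivWithinAt x hpair
    have h1 : HasDerivWithinAt (fun t : ℝ => t) 1 s x := hasDerivWithinAt_id x s
    have h2 := h1.pow 2
    have h3 := h1.pow 3
    have := ((h1.add h2).add (h3.mul hAc)).add (hder.mul hBc)
    refine this.congr_deriv ?_
    simp only [Pi.pow_apply, hadef, hbdef]
    ring
  rw [hX.derivWithin ((uniqueDiffOn_Icc hxMAXpos) x hx)]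
  -- bounds on the four perturbation terms
  have ha : |a| ≤ M := le_trans (by simpa [Real.norm_eq_abs] using hMA _ hmem) hMA_le
  have hb : |b| ≤ M := le_trans (by simpa [Real.norm_eq_abs] using hMB _ hmem) hMB_le
  have hpairnorm : ‖((1 : ℝ), f')‖ ≤ 1 + K₁ := by
    rw [Prod.norm_def]
    apply max_le
    · simp; linarith
    · rw [Real.norm_eq_abs]; linarith
  have hda : |da| ≤ M * (1 + K₁) := by
    calc |da| = ‖fderiv ℝ θA (x, f x) (1, f')‖ := (Real.norm_eq_abs _).symm
    _ ≤ ‖fderiv ℝ θA (x, f x)‖ * ‖((1 : ℝ), f')‖ := ContinuousLinearMap.le_opNorm _ _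
    _ ≤ M * (1 + K₁) := mul_le_mul (le_trans (hMA' _ hmem) hMA'_le) hpairnorm
        (norm_nonneg _) hMpos.le
  have hdb : |db| ≤ M * (1 + K₁) := by
    calc |db| = ‖fderiv ℝ θB (x, f x) (1, f')‖ := (Real.norm_eq_abs _).symm
    _ ≤ ‖fderiv ℝ θB (x, f x)‖ * ‖((1 : ℝ), f')‖ := ContinuousLinearMap.le_opNorm _ _
    _ ≤ M * (1 + K₁) := mul_le_mul (le_trans (hMB' _ hmem) hMB'_le) hpairnorm
        (norm_nonneg _) hMpos.le
  have H1 : |3 * x ^ 2 * a| ≤ 3 * x ^ 2 * M := by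
    rw [abs_mul, abs_of_nonneg (by positivity : (0:ℝ) ≤ 3 * x ^ 2)]
    exact mul_le_mul_of_nonneg_left ha (by positivity)
  have H2 : |x ^ 3 * da| ≤ x ^ 2 * (M * (1 + K₁)) := by
    rw [abs_mul, abs_of_nonneg (by positivity : (0:ℝ) ≤ x ^ 3)]
    exact mul_le_mul hx32 hda (abs_nonneg _) (by positivity)
  have H3 : |f' * b| ≤ K₁ * x ^ 2 * M := by
    rw [abs_mul]
    exact mul_le_mul hf'2 hb (abs_nonneg _) (by positivity)
  have H4 : |f x * db| ≤ x ^ 2 * (M * (1 + K₁)) := by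
    rw [abs_mul]
    exact mul_le_mul hfx2 hdb (abs_nonneg _) (by positivity)
  have L1 : -(3 * x ^ 2 * M) ≤ 3 * x ^ 2 * a := by
    have := neg_abs_le (3 * x ^ 2 * a); linarith
  have L2 : -(x ^ 2 * (M * (1 + K₁))) ≤ x ^ 3 * da := by
    have := neg_abs_le (x ^ 3 * da); linarith
  have L3 : -(K₁ * x ^ 2 * M) ≤ f' * b := by
    have := neg_abs_le (f' * b); linarith
  have L4 : -(x ^ 2 * (M * (1 + K₁))) ≤ f x * db := by
    have := neg_abs_le (f x * db); linarith
  have hxC : x * C ≤ 2 := (le_div_iff₀ hC).1 hx2C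
  have hxCx : x * C * x ≤ 2 * x := mul_le_mul_of_nonneg_right hxC hx0
  have hsum : 3 * x ^ 2 * M + x ^ 2 * (M * (1 + K₁)) + K₁ * x ^ 2 * M
      + x ^ 2 * (M * (1 + K₁)) ≤ 2 * x := by
    have heq : 3 * x ^ 2 * M + x ^ 2 * (M * (1 + K₁)) + K₁ * x ^ 2 * M
        + x ^ 2 * (M * (1 + K₁)) = x * C * x := by rw [hCdef]; ring
    linarith [heq ▸ hxCx]
  linarith
end

section
/- Let Φ be of the form (IA). There exist constants K₁ > 0 and δ > 0 (depending only on Φ and on Φ, K₁ respectively) such that the following holds. Let f : [0, x_MAX] → ℝ be C^∞ with 0 < x_MAX ≤ δ, |f(x)| ≤ x^N and |f'(x)| ≤ K₁ x^(N−1) on [0, x_MAX]. Then the image Φ({(x, f(x)) : x ∈ [0, x_MAX]}) equals {(X, F(X)) : X ∈ [0, X_MAX]} for some X_MAX > 0 and some C^∞ function F satisfying |F(X)| ≤ X^N and |F'(X)| ≤ K₁ X^(N−1) for all X ∈ [0, X_MAX]. -/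
open Set Filter Asymptotics Topology

open Set Filter Topology

lemma inv_hasDerivWithinAt {g h : ℝ → ℝ} {s t : Set ℝ} {x₀ d : ℝ}
    (hg : HasDerivWithinAt g d s x₀) (hd : d ≠ 0)
    (hmaps : MapsTo h t s) (hcont : ContinuousWithinAt h t (g x₀))
    (hgh : ∀ X ∈ t, g (h X) = X) (hhg : h (g x₀) = x₀) :
    HasDerivWithinAt h d⁻¹ t (g x₀) := by
  rw [hasDerivWithinAt_iff_tendsto_slope] at hg ⊢
  have A : Tendsto h (𝓝[t \ {g x₀}] (g x₀)) (𝓝[s \ {x₀}] x₀) := by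
    apply tendsto_nhdsWithin_of_tendsto_nhds_of_eventually_within
    · have := hcont.tendsto
      rw [hhg] at this
      exact this.mono_left (nhdsWithin_mono _ diff_subset)
    · filter_upwards [self_mem_nhdsWithin] with X hX
      refine ⟨hmaps hX.1, ?_⟩
      intro hcontra
      apply hX.2
      simp only [mem_singleton_iff] at hcontra ⊢
      rw [← hgh X hX.1, hcontra]
  have B : Tendsto (fun X => slope g x₀ (h X)) (𝓝[t \ {g x₀}] (g x₀)) (𝓝 d) := hg.comp A
  have C : Tendsto (fun X => (slope g x₀ (h X))⁻¹) (𝓝[t \ {g x₀}] (g x₀)) (𝓝 d⁻¹) :=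
    B.inv₀ hd
  refine C.congr' ?_
  filter_upwards [self_mem_nhdsWithin] with X hX
  rw [slope_def_field, slope_def_field, inv_div, hgh X hX.1, hhg]
lemma comp_inv_contDiffOn {g h : ℝ → ℝ} {s t : Set ℝ}
    (hs : UniqueDiffOn ℝ s) (ht : UniqueDiffOn ℝ t)
    (hg : ContDiffOn ℝ (⊤ : ℕ∞) g s)
    (hd : ∀ x ∈ s, derivWithin g s x ≠ 0)
    (hmaps : MapsTo h t s) (hcont : ContinuousOn h t)
    (hgh : ∀ X ∈ t, g (h X) = X) (hhg : ∀ x ∈ s, h (g x) = x) :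
    ∀ (n : ℕ) (w : ℝ → ℝ), ContDiffOn ℝ (⊤ : ℕ∞) w s →
      ContDiffOn ℝ (n : ℕ∞) (fun X => w (h X)) t := by
  have h1 : (1 : WithTop ℕ∞) ≤ ((⊤ : ℕ∞) : WithTop ℕ∞) := by
    exact_mod_cast le_top
  have Hh : ∀ X ∈ t, HasDerivWithinAt h (derivWithin g s (h X))⁻¹ t X := by
    intro X hX
    have hx : h X ∈ s := hmaps hX
    have hgd : HasDerivWithinAt g (derivWithin g s (h X)) s (h X) :=
      ((hg.differentiableOn (by simp)) (h X) hx).hasDerivWithinAt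
    have := inv_hasDerivWithinAt hgd (hd _ hx) hmaps
      (by rw [hgh X hX]; exact hcont X hX) hgh (hhg _ hx)
    rwa [hgh X hX] at this
  intro n
  induction n with
  | zero =>
    intro w hw
    simpa [Function.comp_def] using (hw.continuousOn.comp hcont hmaps)
  | succ n ih =>
    intro w hw
    have hw' : DifferentiableOn ℝ w s := hw.differentiableOn (by simp)
    have Hcomp : ∀ X ∈ t, HasDerivWithinAt (fun X => w (h X))
        (derivWithin w s (h X) * (derivWithin g s (h X))⁻¹) t X := by
      intro X hX
      exact ((hw' (h X) (hmaps hX)).hasDerivWithinAt).comp X (Hh X hX) hmaps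
    have hcast : (((n + 1 : ℕ) : ℕ∞) : WithTop ℕ∞) = ((n : ℕ∞) : WithTop ℕ∞) + 1 := by
      push_cast; rfl
    rw [hcast, contDiffOn_succ_iff_derivWithin ht]
    refine ⟨fun X hX => (Hcomp X hX).differentiableWithinAt, by simp, ?_⟩
    have hw2 : ContDiffOn ℝ (⊤ : ℕ∞) (fun x => derivWithin w s x * (derivWithin g s x)⁻¹) s :=
      (hw.derivWithin hs (le_of_eq rfl)).mul ((hg.derivWithin hs (le_of_eq rfl)).inv hd)
    refine (ih _ hw2).congr ?_
    intro X hX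
    exact (Hcomp X hX).derivWithin (ht X hX)

-- x-power facts
lemma pow_le_del_sq {x δ : ℝ} (hx0 : 0 ≤ x) (hxδ : x ≤ δ) (hδ1 : δ ≤ 1) {n : ℕ} (hn : 3 ≤ n) :
    x ^ n ≤ δ * x ^ 2 := by
  have hx1 : x ≤ 1 := hxδ.trans hδ1
  calc x ^ n = x ^ (n - 2) * x ^ 2 := by rw [← pow_add]; congr 1; omega
    _ ≤ δ * x ^ 2 := by
        apply mul_le_mul_of_nonneg_right _ (by positivity)
        exact (pow_le_of_le_one hx0 hx1 (by omega)).trans hxδ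

lemma pow_le_del_x {x δ : ℝ} (hx0 : 0 ≤ x) (hxδ : x ≤ δ) (hδ1 : δ ≤ 1) {n m : ℕ}
    (hnm : m + 2 ≤ n) : x ^ n ≤ δ * (x ^ m * x) := by
  have hx1 : x ≤ 1 := hxδ.trans hδ1
  calc x ^ n = x ^ (n - m - 1) * (x ^ m * x) := by
        rw [← pow_succ, ← pow_add]; congr 1; omega
    _ ≤ δ * (x ^ m * x) := by
        apply mul_le_mul_of_nonneg_right _ (by positivity)
        exact (pow_le_of_le_one hx0 hx1 (by omega)).trans hxδ

-- Q estimate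
lemma estQ {M lam δ x fx tC tD : ℝ} {k : ℕ}
    (hM : 1 ≤ M) (hlam : 0 ≤ lam) (hδ1 : δ ≤ 1)
    (hx0 : 0 ≤ x) (hxδ : x ≤ δ)
    (hlamδ : lam * δ ≤ 1/2)
    (htC : |tC| ≤ M) (htD : |tD| ≤ M) (hfx : |fx| ≤ x ^ (k + 100)) :
    |1 - lam*x + fx*tC + x^2*tD| ≤ 1 - lam*x + 2*M*x^2 := by
  have hx1 : x ≤ 1 := hxδ.trans hδ1
  have hxk : x ^ (k+100) ≤ x ^ 2 := pow_le_pow_of_le_one hx0 hx1 (by omega)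
  have h1 : |fx*tC| ≤ M*x^2 := by
    rw [abs_mul]
    calc |fx| * |tC| ≤ x ^ (k+100) * M :=
          mul_le_mul hfx htC (abs_nonneg _) (pow_nonneg hx0 _)
      _ ≤ x^2 * M := mul_le_mul_of_nonneg_right hxk (by linarith)
      _ = M * x^2 := mul_comm _ _
  have h2 : |x^2*tD| ≤ M*x^2 := by
    rw [abs_mul, abs_of_nonneg (by positivity : (0:ℝ) ≤ x^2)]
    calc x^2 * |tD| ≤ x^2 * M := mul_le_mul_of_nonneg_left htD (by positivity)
      _ = M * x^2 := mul_comm _ _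
  have hlx : lam * x ≤ 1/2 := (mul_le_mul_of_nonneg_left hxδ hlam).trans hlamδ
  have := abs_le.1 h1
  have := abs_le.1 h2
  rw [abs_le]
  constructor <;> nlinarith [sq_nonneg x]

-- gd estimate
lemma est_gd {M K₁ δ x fx f'x tA dA tB dB : ℝ} {k : ℕ}
    (hM : 1 ≤ M) (hK₁ : 1 ≤ K₁) (hδ0 : 0 ≤ δ) (hδ1 : δ ≤ 1)
    (hx0 : 0 ≤ x) (hxδ : x ≤ δ)
    (hMδ : M*K₁*δ + M*δ ≤ 1/20) (hδ40 : 40*δ ≤ 1)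
    (htA : |tA| ≤ M) (hdA : |dA| ≤ M) (htB : |tB| ≤ M) (hdB : |dB| ≤ M)
    (hfx : |fx| ≤ x ^ (k+100)) (hf'x : |f'x| ≤ K₁ * x ^ (k+99)) :
    1 + x ≤ 1 + 2*x + (3*x^2*tA + x^3*dA) + (f'x*tB + fx*dB) ∧
      1 + 2*x + (3*x^2*tA + x^3*dA) + (f'x*tB + fx*dB) ≤ 2 := by
  have hx1 : x ≤ 1 := hxδ.trans hδ1
  have hk99 : x ^ (k+99) ≤ δ * x^2 := pow_le_del_sq hx0 hxδ hδ1 (by omega)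
  have hk100 : x ^ (k+100) ≤ δ * x^2 := pow_le_del_sq hx0 hxδ hδ1 (by omega)
  have b1 : |3*x^2*tA| ≤ 3*M*x^2 := by
    rw [abs_mul, abs_of_nonneg (by positivity : (0:ℝ) ≤ 3*x^2)]
    calc 3*x^2 * |tA| ≤ 3*x^2 * M := mul_le_mul_of_nonneg_left htA (by positivity)
      _ = 3*M*x^2 := by ring
  have b2 : |x^3*dA| ≤ M*x^2 := by
    rw [abs_mul, abs_of_nonneg (by positivity : (0:ℝ) ≤ x^3)]
    have hx32 : x^3 ≤ x^2 := pow_le_pow_of_le_one hx0 hx1 (by omega)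
    calc x^3 * |dA| ≤ x^3 * M := mul_le_mul_of_nonneg_left hdA (by positivity)
      _ ≤ x^2 * M := mul_le_mul_of_nonneg_right hx32 (by linarith)
      _ = M * x^2 := mul_comm _ _
  have b3 : |f'x*tB| ≤ K₁*(δ*x^2)*M := by
    rw [abs_mul]
    calc |f'x| * |tB| ≤ (K₁ * x^(k+99)) * M :=
          mul_le_mul hf'x htB (abs_nonneg _) (mul_nonneg (by linarith) (pow_nonneg hx0 _))
      _ ≤ K₁*(δ*x^2)*M := by
          apply mul_le_mul_of_nonneg_right _ (by linarith)
          exact mul_le_mul_of_nonneg_left hk99 (by linarith)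
  have b4 : |fx*dB| ≤ (δ*x^2)*M := by
    rw [abs_mul]
    calc |fx| * |dB| ≤ x^(k+100) * M :=
          mul_le_mul hfx hdB (abs_nonneg _) (pow_nonneg hx0 _)
      _ ≤ (δ*x^2)*M := mul_le_mul_of_nonneg_right hk100 (by linarith)
  have hxx : x^2 ≤ δ*x := by
    have := mul_le_mul_of_nonneg_right hxδ hx0
    nlinarith [this]
  have hx2x : x^2 ≤ x := by nlinarith [mul_le_mul_of_nonneg_right hx1 hx0]
  have hMδ' : M*δ ≤ 1/20 := by
    nlinarith [mul_nonneg (mul_nonneg (by linarith : (0:ℝ) ≤ M) (by linarith : (0:ℝ) ≤ K₁)) hδ0]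
  have e1 : M*x^2 ≤ (1/20)*x :=
    calc M*x^2 ≤ M*(δ*x) := mul_le_mul_of_nonneg_left hxx (by linarith)
      _ = (M*δ)*x := by ring
      _ ≤ (1/20)*x := mul_le_mul_of_nonneg_right hMδ' hx0
  have e2 : K₁*(δ*x^2)*M + (δ*x^2)*M ≤ (1/20)*x :=
    calc K₁*(δ*x^2)*M + (δ*x^2)*M = (M*K₁*δ + M*δ)*x^2 := by ring
      _ ≤ (1/20)*x^2 := mul_le_mul_of_nonneg_right hMδ (by positivity)
      _ ≤ (1/20)*x := by linarith
  have hj : |3*x^2*tA + x^3*dA + (f'x*tB + fx*dB)| ≤ x/2 := by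
    calc |3*x^2*tA + x^3*dA + (f'x*tB + fx*dB)|
        ≤ |3*x^2*tA + x^3*dA| + |f'x*tB + fx*dB| := abs_add_le _ _
      _ ≤ (|3*x^2*tA| + |x^3*dA|) + (|f'x*tB| + |fx*dB|) :=
          add_le_add (abs_add_le _ _) (abs_add_le _ _)
      _ ≤ (3*M*x^2 + M*x^2) + (K₁*(δ*x^2)*M + (δ*x^2)*M) := by linarith
      _ ≤ x/2 := by linarith
  have hj' := abs_le.1 hj
  constructor
  · linarith [hj'.1]
  · linarith [hj'.2, hxδ, hδ40]

lemma est_g_ge {M δ x fx tA tB : ℝ} {k : ℕ}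
    (hM : 1 ≤ M) (hδ0 : 0 ≤ δ) (hδ1 : δ ≤ 1) (hx0 : 0 ≤ x) (hxδ : x ≤ δ)
    (hMδ' : M*δ ≤ 1/20)
    (htA : |tA| ≤ M) (htB : |tB| ≤ M) (hfx : |fx| ≤ x^(k+100)) :
    x ≤ x + x^2 + x^3*tA + fx*tB := by
  have hk100 : x ^ (k+100) ≤ δ * x^2 := pow_le_del_sq hx0 hxδ hδ1 (by omega)
  have h3 : x^3 ≤ δ * x^2 := pow_le_del_sq hx0 hxδ hδ1 (by omega)
  have b2 : |x^3*tA| ≤ (1/20)*x^2 := by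
    rw [abs_mul, abs_of_nonneg (by positivity : (0:ℝ) ≤ x^3)]
    calc x^3*|tA| ≤ (δ*x^2)*M := mul_le_mul h3 htA (abs_nonneg _) (by positivity)
      _ = (M*δ)*x^2 := by ring
      _ ≤ (1/20)*x^2 := mul_le_mul_of_nonneg_right hMδ' (by positivity)
  have b3 : |fx*tB| ≤ (1/20)*x^2 := by
    rw [abs_mul]
    calc |fx| * |tB| ≤ (δ*x^2)*M :=
          mul_le_mul (hfx.trans hk100) htB (abs_nonneg _) (by positivity)
      _ = (M*δ)*x^2 := by ring
      _ ≤ (1/20)*x^2 := mul_le_mul_of_nonneg_right hMδ' (by positivity)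
  have hb2 := abs_le.1 b2
  have hb3 := abs_le.1 b3
  nlinarith [sq_nonneg x, hb2.1, hb3.1]

lemma est_Yf {M lam δ x fx tC tD tE : ℝ} {k : ℕ}
    (hM : 1 ≤ M) (hlam : 0 ≤ lam) (hδ0 : 0 ≤ δ) (hδ1 : δ ≤ 1)
    (hx0 : 0 ≤ x) (hxδ : x ≤ δ)
    (hlamδ : lam*δ ≤ 1/2) (hMδ3 : 3*M*δ ≤ lam)
    (htC : |tC| ≤ M) (htD : |tD| ≤ M) (htE : |tE| ≤ M)
    (hfx : |fx| ≤ x^(k+100)) :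
    |(-fx)*(1 - lam*x + fx*tC + x^2*tD) + x^(k+200)*tE| ≤ x^(k+100) := by
  have hQ := estQ hM hlam hδ1 hx0 hxδ hlamδ htC htD hfx
  have t1 : |(-fx)*(1 - lam*x + fx*tC + x^2*tD)| ≤ x^(k+100)*(1 - lam*x + 2*M*x^2) := by
    rw [abs_mul, abs_neg]
    exact mul_le_mul hfx hQ (abs_nonneg _) (pow_nonneg hx0 _)
  have t2 : |x^(k+200)*tE| ≤ (δ*(x^(k+100)*x))*M := by
    rw [abs_mul, abs_of_nonneg (pow_nonneg hx0 _)]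
    exact mul_le_mul (pow_le_del_x hx0 hxδ hδ1 (by omega)) htE (abs_nonneg _)
      (mul_nonneg hδ0 (mul_nonneg (pow_nonneg hx0 _) hx0))
  have hxx : x^2 ≤ δ*x := by rw [pow_two]; exact mul_le_mul_of_nonneg_right hxδ hx0
  have key : 2*M*x^2 + M*δ*x ≤ lam*x := by
    have e1 : 2*M*x^2 ≤ 2*M*(δ*x) := mul_le_mul_of_nonneg_left hxx (by linarith)
    have e2 : (3*M*δ)*x ≤ lam*x := mul_le_mul_of_nonneg_right hMδ3 hx0
    nlinarith
  calc |(-fx)*(1 - lam*x + fx*tC + x^2*tD) + x^(k+200)*tE|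
      ≤ |(-fx)*(1 - lam*x + fx*tC + x^2*tD)| + |x^(k+200)*tE| := abs_add_le _ _
    _ ≤ x^(k+100)*(1 - lam*x + 2*M*x^2) + (δ*(x^(k+100)*x))*M := add_le_add t1 t2
    _ = x^(k+100)*(1 - lam*x + 2*M*x^2 + M*δ*x) := by ring
    _ ≤ x^(k+100)*1 := mul_le_mul_of_nonneg_left (by linarith) (pow_nonneg hx0 _)
    _ = x^(k+100) := mul_one _

lemma est_Yd {M K₁ lam δ x fx f'x tC dC tD dD tE dE : ℝ} {k : ℕ}
    (hM : 1 ≤ M) (hK₁ : 1 ≤ K₁) (hlam : 0 ≤ lam) (hδ0 : 0 ≤ δ) (hδ1 : δ ≤ 1)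
    (hx0 : 0 ≤ x) (hxδ : x ≤ δ)
    (hlamδ : lam*δ ≤ 1/2) (hMδ : M*K₁*δ + M*δ ≤ 1/20)
    (hc4 : lam + 5*M + ((k:ℝ)+201)*M*δ ≤ K₁/2)
    (htC : |tC| ≤ M) (hdC : |dC| ≤ M) (htD : |tD| ≤ M) (hdD : |dD| ≤ M)
    (htE : |tE| ≤ M) (hdE : |dE| ≤ M)
    (hfx : |fx| ≤ x^(k+100)) (hf'x : |f'x| ≤ K₁ * x^(k+99)) :
    |(-f'x)*(1 - lam*x + fx*tC + x^2*tD)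
      + (-fx)*(-lam + (f'x*tC + fx*dC) + (2*x*tD + x^2*dD))
      + (((k:ℝ)+200)*x^(k+199)*tE + x^(k+200)*dE)|
      ≤ K₁*x^(k+99)*(1+x) := by
  have hx1 : x ≤ 1 := hxδ.trans hδ1
  have hMK : M*K₁*δ ≤ 1/20 := by nlinarith [mul_nonneg (by linarith : (0:ℝ) ≤ M) hδ0]
  have hK₁δ : K₁*δ ≤ 1/20 := by nlinarith [mul_nonneg (sub_nonneg.2 hM) (mul_nonneg (by linarith : (0:ℝ) ≤ K₁) hδ0)]
  have hfx1 : |fx| ≤ 1 := hfx.trans (pow_le_one₀ hx0 hx1)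
  have hf'1 : |f'x| ≤ 1 := by
    refine hf'x.trans ?_
    have : x^(k+99) ≤ δ := (pow_le_of_le_one hx0 hx1 (by omega)).trans hxδ
    calc K₁ * x^(k+99) ≤ K₁*δ := mul_le_mul_of_nonneg_left this (by linarith)
      _ ≤ 1 := by linarith
  have hQ := estQ hM hlam hδ1 hx0 hxδ hlamδ htC htD hfx
  have t1 : |(-f'x)*(1 - lam*x + fx*tC + x^2*tD)|
      ≤ (K₁*x^(k+99))*(1 - lam*x + 2*M*x^2) := by
    rw [abs_mul, abs_neg]
    exact mul_le_mul hf'x hQ (abs_nonneg _)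
      (mul_nonneg (by linarith) (pow_nonneg hx0 _))
  have q1 : |f'x*tC| ≤ M := by
    rw [abs_mul]
    calc |f'x| * |tC| ≤ 1*M := mul_le_mul hf'1 htC (abs_nonneg _) zero_le_one
      _ = M := one_mul _
  have q2 : |fx*dC| ≤ M := by
    rw [abs_mul]
    calc |fx| * |dC| ≤ 1*M := mul_le_mul hfx1 hdC (abs_nonneg _) zero_le_one
      _ = M := one_mul _
  have q3 : |2*x*tD| ≤ 2*M := by
    rw [abs_mul, abs_of_nonneg (by linarith : (0:ℝ) ≤ 2*x)]
    calc 2*x*|tD| ≤ 2*x*M := mul_le_mul_of_nonneg_left htD (by linarith)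
      _ ≤ 2*1*M := by nlinarith
      _ = 2*M := by ring
  have q4 : |x^2*dD| ≤ M := by
    rw [abs_mul, abs_of_nonneg (by positivity : (0:ℝ) ≤ x^2)]
    have : x^2 ≤ 1 := pow_le_one₀ hx0 hx1
    calc x^2*|dD| ≤ 1*M := mul_le_mul this hdD (abs_nonneg _) zero_le_one
      _ = M := one_mul _
  have hQd : |-lam + (f'x*tC + fx*dC) + (2*x*tD + x^2*dD)| ≤ lam + 5*M := by
    calc |-lam + (f'x*tC + fx*dC) + (2*x*tD + x^2*dD)|
        ≤ |-lam + (f'x*tC + fx*dC)| + |2*x*tD + x^2*dD| := abs_add_le _ _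
      _ ≤ (|-lam| + |f'x*tC + fx*dC|) + (|2*x*tD| + |x^2*dD|) :=
          add_le_add (abs_add_le _ _) (abs_add_le _ _)
      _ ≤ (lam + (|f'x*tC| + |fx*dC|)) + (2*M + M) := by
          rw [abs_neg, abs_of_nonneg hlam]
          exact add_le_add (add_le_add le_rfl (abs_add_le _ _)) (add_le_add q3 q4)
      _ ≤ lam + 5*M := by linarith
  have t2 : |(-fx)*(-lam + (f'x*tC + fx*dC) + (2*x*tD + x^2*dD))|
      ≤ x^(k+100)*(lam + 5*M) := by
    rw [abs_mul, abs_neg]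
    exact mul_le_mul hfx hQd (abs_nonneg _) (pow_nonneg hx0 _)
  have t3 : |((k:ℝ)+200)*x^(k+199)*tE + x^(k+200)*dE|
      ≤ ((k:ℝ)+201)*M*(δ*(x^(k+99)*x)) := by
    have p1 : x^(k+199) ≤ δ*(x^(k+99)*x) := pow_le_del_x hx0 hxδ hδ1 (by omega)
    have p2 : x^(k+200) ≤ δ*(x^(k+99)*x) := pow_le_del_x hx0 hxδ hδ1 (by omega)
    have hkn : (0:ℝ) ≤ (k:ℝ)+200 := by positivity
    have u1 : |((k:ℝ)+200)*x^(k+199)*tE| ≤ ((k:ℝ)+200)*(δ*(x^(k+99)*x))*M := by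
      rw [abs_mul, abs_mul, abs_of_nonneg hkn, abs_of_nonneg (pow_nonneg hx0 _)]
      calc ((k:ℝ)+200)*x^(k+199)*|tE| ≤ ((k:ℝ)+200)*x^(k+199)*M :=
            mul_le_mul_of_nonneg_left htE (mul_nonneg hkn (pow_nonneg hx0 _))
        _ ≤ ((k:ℝ)+200)*(δ*(x^(k+99)*x))*M := by
            apply mul_le_mul_of_nonneg_right _ (by linarith)
            exact mul_le_mul_of_nonneg_left p1 hkn
    have u2 : |x^(k+200)*dE| ≤ (δ*(x^(k+99)*x))*M := by
      rw [abs_mul, abs_of_nonneg (pow_nonneg hx0 _)]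
      exact mul_le_mul p2 hdE (abs_nonneg _) (mul_nonneg hδ0 (mul_nonneg (pow_nonneg hx0 _) hx0))
    calc |((k:ℝ)+200)*x^(k+199)*tE + x^(k+200)*dE|
        ≤ |((k:ℝ)+200)*x^(k+199)*tE| + |x^(k+200)*dE| := abs_add_le _ _
      _ ≤ ((k:ℝ)+200)*(δ*(x^(k+99)*x))*M + (δ*(x^(k+99)*x))*M := add_le_add u1 u2
      _ = ((k:ℝ)+201)*M*(δ*(x^(k+99)*x)) := by ring
  have hxx : x^2 ≤ δ*x := by rw [pow_two]; exact mul_le_mul_of_nonneg_right hxδ hx0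
  have key : K₁*(1-lam*x+2*M*x^2) + (lam+5*M)*x + ((k:ℝ)+201)*M*δ*x ≤ K₁*(1+x) := by
    have e1 : 2*K₁*M*x^2 ≤ 2*K₁*M*(δ*x) := by
      have h0 : (0:ℝ) ≤ K₁*M := mul_nonneg (by linarith) (by linarith)
      exact mul_le_mul_of_nonneg_left hxx (by linarith)
    have e2 : (M*K₁*δ)*x ≤ (1/20)*x := mul_le_mul_of_nonneg_right hMK hx0
    have e1' : 2*K₁*M*x^2 ≤ (1/10)*x := by linarith
    have e3 : (lam+5*M+((k:ℝ)+201)*M*δ)*x ≤ (K₁/2)*x :=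
      mul_le_mul_of_nonneg_right hc4 hx0
    have e4 : (0:ℝ) ≤ K₁*(lam*x) := mul_nonneg (by linarith) (mul_nonneg hlam hx0)
    have e5 : x ≤ K₁*x := by linarith [mul_le_mul_of_nonneg_right hK₁ hx0]
    linarith [e1', e3, e4, e5]
  calc |(-f'x)*(1 - lam*x + fx*tC + x^2*tD)
      + (-fx)*(-lam + (f'x*tC + fx*dC) + (2*x*tD + x^2*dD))
      + (((k:ℝ)+200)*x^(k+199)*tE + x^(k+200)*dE)|
      ≤ |(-f'x)*(1 - lam*x + fx*tC + x^2*tD)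
          + (-fx)*(-lam + (f'x*tC + fx*dC) + (2*x*tD + x^2*dD))|
        + |((k:ℝ)+200)*x^(k+199)*tE + x^(k+200)*dE| := abs_add_le _ _
    _ ≤ (|(-f'x)*(1 - lam*x + fx*tC + x^2*tD)|
          + |(-fx)*(-lam + (f'x*tC + fx*dC) + (2*x*tD + x^2*dD))|)
        + |((k:ℝ)+200)*x^(k+199)*tE + x^(k+200)*dE| := by
          exact add_le_add (abs_add_le _ _) le_rfl
    _ ≤ (K₁*x^(k+99))*(1 - lam*x + 2*M*x^2) + x^(k+100)*(lam + 5*M)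
        + ((k:ℝ)+201)*M*(δ*(x^(k+99)*x)) := by linarith [t1, t2, t3]
    _ = x^(k+99) * (K₁*(1-lam*x+2*M*x^2) + (lam+5*M)*x + ((k:ℝ)+201)*M*δ*x) := by
        rw [pow_succ]; ring
    _ ≤ x^(k+99) * (K₁*(1+x)) := mul_le_mul_of_nonneg_left key (pow_nonneg hx0 _)
    _ = K₁*x^(k+99)*(1+x) := by ring

set_option maxHeartbeats 1000000 in
/-- **Assertion 3.** For `Φ` of the form (IA) there exist `K₁ > 0` and
`δ > 0` such that: if `f` is `C^∞` on `[0, x_MAX]`, `0 < x_MAX ≤ δ`, `|f(x)| ≤ xᴺ`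
and `|f'(x)| ≤ K₁ x^(N-1)` there, then the image of the graph of `f` under `Φ` is the
graph `{(X, F(X)) : X ∈ [0, X_MAX]}` of a `C^∞` function `F` with `|F(X)| ≤ Xᴺ` and
`|F'(X)| ≤ K₁ X^(N-1)` on `[0, X_MAX]`. -/
theorem assertion3
    (θA θB θC θD θE : ℝ × ℝ → ℝ) (V : Set (ℝ × ℝ)) (hV : V ∈ 𝓝 (0 : ℝ × ℝ))
    (hθA : ContDiffOn ℝ (⊤ : ℕ∞) θA V) (hθB : ContDiffOn ℝ (⊤ : ℕ∞) θB V)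
    (hθC : ContDiffOn ℝ (⊤ : ℕ∞) θC V) (hθD : ContDiffOn ℝ (⊤ : ℕ∞) θD V)
    (hθE : ContDiffOn ℝ (⊤ : ℕ∞) θE V)
    (lam : ℝ) (hlam : 0 < lam) (N : ℕ) (hN : 100 ≤ N)
    :
    ∃ K₁ > (0 : ℝ), ∃ δ > (0 : ℝ), ∀ (xMAX : ℝ) (f : ℝ → ℝ),
      0 < xMAX → xMAX ≤ δ →
      ContDiffOn ℝ (⊤ : ℕ∞) f (Icc 0 xMAX) →
      (∀ x ∈ Icc (0 : ℝ) xMAX, |f x| ≤ x ^ N) →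
      (∀ x ∈ Icc (0 : ℝ) xMAX, |derivWithin f (Icc 0 xMAX) x| ≤ K₁ * x ^ (N - 1)) →
      ∃ XMAX > (0 : ℝ), ∃ F : ℝ → ℝ,
        ContDiffOn ℝ (⊤ : ℕ∞) F (Icc 0 XMAX) ∧
        (fun x => (XIA θA θB x (f x), YIA θC θD θE lam N x (f x))) '' Icc 0 xMAX
          = (fun X => (X, F X)) '' Icc 0 XMAX ∧
        (∀ X ∈ Icc (0 : ℝ) XMAX, |F X| ≤ X ^ N) ∧
        (∀ X ∈ Icc (0 : ℝ) XMAX, |derivWithin F (Icc 0 XMAX) X| ≤ K₁ * X ^ (N - 1)) := by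
  have h1top : (1 : WithTop ℕ∞) ≤ ((⊤ : ℕ∞) : WithTop ℕ∞) := by exact_mod_cast le_top
  obtain ⟨k, rfl⟩ : ∃ k, N = k + 100 := ⟨N - 100, by omega⟩
  -- a closed ball inside `interior V`
  obtain ⟨r0, hr0pos, hball⟩ := Metric.isOpen_iff.1 isOpen_interior (0 : ℝ × ℝ)
      (by rw [mem_interior_iff_mem_nhds]; exact hV)
  set r := r0 / 2 with hr_def
  have hrpos : 0 < r := by positivity
  have hrV : Metric.closedBall (0 : ℝ × ℝ) r ⊆ interior V := fun p hp =>
    hball (Metric.mem_ball.2 (lt_of_le_of_lt (Metric.mem_closedBall.1 hp) (by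
      rw [hr_def]; linarith)))
  -- a uniform bound `M` for all `θ`'s and their derivatives on the ball
  have key : ∀ θ : ℝ × ℝ → ℝ, ContDiffOn ℝ (⊤ : ℕ∞) θ V →
      ∃ Mθ : ℝ, ∀ p ∈ Metric.closedBall (0 : ℝ × ℝ) r, |θ p| ≤ Mθ ∧ ‖fderiv ℝ θ p‖ ≤ Mθ := by
    intro θ hθ
    have hθi : ContDiffOn ℝ (⊤ : ℕ∞) θ (interior V) := hθ.mono interior_subset
    have hc1 : ContinuousOn (fun p => |θ p|) (Metric.closedBall (0 : ℝ × ℝ) r) :=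
      ((hθi.continuousOn).mono hrV).abs
    have hc2 : ContinuousOn (fun p => ‖fderiv ℝ θ p‖) (Metric.closedBall (0 : ℝ × ℝ) r) :=
      ((hθi.continuousOn_fderiv_of_isOpen isOpen_interior h1top).mono hrV).norm
    obtain ⟨M1, hM1⟩ := (isCompact_closedBall _ _).exists_bound_of_continuousOn hc1
    obtain ⟨M2, hM2⟩ := (isCompact_closedBall _ _).exists_bound_of_continuousOn hc2
    refine ⟨max M1 M2, fun p hp => ⟨?_, ?_⟩⟩
    · exact le_trans (le_trans (le_abs_self _) (hM1 p hp)) (le_max_left _ _)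
    · exact le_trans (le_trans (le_abs_self _) (hM2 p hp)) (le_max_right _ _)
  obtain ⟨MA, hMA⟩ := key θA hθA
  obtain ⟨MB, hMB⟩ := key θB hθB
  obtain ⟨MC, hMC⟩ := key θC hθC
  obtain ⟨MD, hMD⟩ := key θD hθD
  obtain ⟨ME, hME⟩ := key θE hθE
  set M : ℝ := max 1 (max (max MA MB) (max (max MC MD) ME)) with hM_def
  have hM1 : 1 ≤ M := le_max_left _ _
  have HB : ∀ (θ : ℝ × ℝ → ℝ) (Mθ : ℝ),
      (∀ p ∈ Metric.closedBall (0 : ℝ × ℝ) r, |θ p| ≤ Mθ ∧ ‖fderiv ℝ θ p‖ ≤ Mθ) → Mθ ≤ M →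
      ∀ p ∈ Metric.closedBall (0 : ℝ × ℝ) r, |θ p| ≤ M ∧ ‖fderiv ℝ θ p‖ ≤ M :=
    fun θ Mθ hb hle p hp => ⟨(hb p hp).1.trans hle, (hb p hp).2.trans hle⟩
  have hA := HB θA MA hMA (le_max_of_le_right (le_max_of_le_left (le_max_left _ _)))
  have hBb := HB θB MB hMB (le_max_of_le_right (le_max_of_le_left (le_max_right _ _)))
  have hC := HB θC MC hMC
    (le_max_of_le_right (le_max_of_le_right (le_max_of_le_left (le_max_left _ _))))
  have hD := HB θD MD hMD
    (le_max_of_le_right (le_max_of_le_right (le_max_of_le_left (le_max_right _ _))))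
  have hE := HB θE ME hME (le_max_of_le_right (le_max_of_le_right (le_max_right _ _)))
  clear hMA hMB hMC hMD hME key
  -- the constants
  set K₁ : ℝ := 2*(lam + ((k:ℝ)+210)*M) + 1 with hK₁_def
  have hkM : (0:ℝ) ≤ (k:ℝ)*M := mul_nonneg (Nat.cast_nonneg k) (by linarith)
  have hK₁1 : 1 ≤ K₁ := by rw [hK₁_def]; nlinarith
  have hK₁pos : 0 < K₁ := by linarith
  set δ : ℝ := min r (min (1/(40*M*(K₁+1))) (min (1/(2*(lam+1))) (lam/(3*M)))) with hδ_def
  have h40pos : (0:ℝ) < 40*M*(K₁+1) := by nlinarith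
  have h3Mpos : (0:ℝ) < 3*M := by linarith
  have hδpos : 0 < δ := by
    refine lt_min hrpos (lt_min (by positivity) (lt_min (by positivity) ?_))
    exact div_pos hlam h3Mpos
  have hδr : δ ≤ r := min_le_left _ _
  have hδa : 40*M*(K₁+1)*δ ≤ 1 := by
    have h : δ ≤ 1/(40*M*(K₁+1)) := (min_le_right r _).trans (min_le_left _ _)
    calc 40*M*(K₁+1)*δ ≤ 40*M*(K₁+1)*(1/(40*M*(K₁+1))) :=
          mul_le_mul_of_nonneg_left h h40pos.le
      _ = 1 := by field_simp
  have hδb : 2*(lam+1)*δ ≤ 1 := by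
    have h : δ ≤ 1/(2*(lam+1)) :=
      (min_le_right r _).trans ((min_le_right _ _).trans (min_le_left _ _))
    calc 2*(lam+1)*δ ≤ 2*(lam+1)*(1/(2*(lam+1))) :=
          mul_le_mul_of_nonneg_left h (by linarith)
      _ = 1 := by field_simp
  have hMδ3 : 3*M*δ ≤ lam := by
    have h : δ ≤ lam/(3*M) :=
      (min_le_right r _).trans ((min_le_right _ _).trans (min_le_right _ _))
    calc 3*M*δ ≤ 3*M*(lam/(3*M)) := mul_le_mul_of_nonneg_left h h3Mpos.le
      _ = lam := by field_simp
  have hMδ : M*K₁*δ + M*δ ≤ 1/20 := by nlinarith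
  have hδ40 : 40*δ ≤ 1 := by
    have h2 : (1:ℝ)*1 ≤ M*(K₁+1) := mul_le_mul hM1 (by linarith) zero_le_one (by linarith)
    nlinarith [mul_nonneg hδpos.le (by linarith [h2] : (0:ℝ) ≤ M*(K₁+1) - 1)]
  have hδ1 : δ ≤ 1 := by linarith
  have hlamδ : lam*δ ≤ 1/2 := by nlinarith [hδpos.le]
  have hc4 : lam + 5*M + ((k:ℝ)+201)*M*δ ≤ K₁/2 := by
    have h := mul_le_mul_of_nonneg_left hδ1
      (by positivity : (0:ℝ) ≤ ((k:ℝ)+201)*M)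
    rw [hK₁_def]; nlinarith
  have hMδ' : M*δ ≤ 1/20 := by
    nlinarith [mul_nonneg (mul_nonneg (by linarith : (0:ℝ) ≤ M) (by linarith : (0:ℝ) ≤ K₁)) hδpos.le]
  have hK₁δ : K₁*δ ≤ 1 := by
    nlinarith [mul_nonneg (mul_nonneg (sub_nonneg.2 hM1) (by linarith : (0:ℝ) ≤ K₁)) hδpos.le]
  refine ⟨K₁, hK₁pos, δ, hδpos, ?_⟩
  intro xMAX f hxM hxMδ hf hfb hf'b
  rw [show k + 100 - 1 = k + 99 from by omega] at hf'b
  set s := Icc (0:ℝ) xMAX with hs_def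
  have hsUD : UniqueDiffOn ℝ s := uniqueDiffOn_Icc hxM
  -- the graph stays in the closed ball
  have hgraph : ∀ x ∈ s, (x, f x) ∈ Metric.closedBall (0 : ℝ × ℝ) r := by
    intro x hx
    have hx0 : 0 ≤ x := hx.1
    have hxδ' : x ≤ δ := hx.2.trans hxMδ
    have hx1 : x ≤ 1 := hxδ'.trans hδ1
    rw [mem_closedBall_zero_iff, Prod.norm_def]
    apply max_le
    · rw [Real.norm_eq_abs, abs_of_nonneg hx0]; exact hxδ'.trans hδr
    · rw [Real.norm_eq_abs]
      calc |f x| ≤ x^(k+100) := hfb x hx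
        _ ≤ x := pow_le_of_le_one hx0 hx1 (by omega)
        _ ≤ r := hxδ'.trans hδr
  have hgraphV : MapsTo (fun x => (x, f x)) s V := fun x hx =>
    interior_subset (hrV (hgraph x hx))
  -- derivative facts
  have hfd : ∀ x ∈ s, HasDerivWithinAt f (derivWithin f s x) s x := fun x hx =>
    ((hf.differentiableOn (by simp)) x hx).hasDerivWithinAt
  have hf'1 : ∀ x ∈ s, |derivWithin f s x| ≤ 1 := by
    intro x hx
    have hx0 : 0 ≤ x := hx.1
    have hxδ' : x ≤ δ := hx.2.trans hxMδ
    have hx1 : x ≤ 1 := hxδ'.trans hδ1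
    refine (hf'b x hx).trans ?_
    have hxp : x^(k+99) ≤ δ := (pow_le_of_le_one hx0 hx1 (by omega)).trans hxδ'
    calc K₁ * x^(k+99) ≤ K₁*δ := mul_le_mul_of_nonneg_left hxp (by linarith)
      _ ≤ 1 := hK₁δ
  have hcompd : ∀ (θ : ℝ × ℝ → ℝ), ContDiffOn ℝ (⊤:ℕ∞) θ V → ∀ x ∈ s,
      HasDerivWithinAt (fun y => θ (y, f y))
        ((fderiv ℝ θ (x, f x)) (1, derivWithin f s x)) s x := by
    intro θ hθ x hx
    have hp : (x, f x) ∈ interior V := hrV (hgraph x hx)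
    have hθat : ContDiffAt ℝ (⊤:ℕ∞) θ (x, f x) :=
      (hθ.mono interior_subset).contDiffAt (isOpen_interior.mem_nhds hp)
    have hfdat : HasFDerivAt θ (fderiv ℝ θ (x, f x)) (x, f x) :=
      (hθat.differentiableAt (by simp)).hasFDerivAt
    have hxf : HasDerivWithinAt (fun y => (y, f y)) ((1:ℝ), derivWithin f s x) s x :=
      (hasDerivWithinAt_id x s).prodMk (hfd x hx)
    exact hfdat.comp_hasDerivWithinAt x hxf
  have happ : ∀ (θ : ℝ × ℝ → ℝ),
      (∀ p ∈ Metric.closedBall (0:ℝ×ℝ) r, |θ p| ≤ M ∧ ‖fderiv ℝ θ p‖ ≤ M) →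
      ∀ x ∈ s, |(fderiv ℝ θ (x, f x)) (1, derivWithin f s x)| ≤ M := by
    intro θ hθb x hx
    have h1 : ‖((1:ℝ), derivWithin f s x)‖ ≤ 1 := by
      rw [Prod.norm_def]
      apply max_le
      · simp
      · rw [Real.norm_eq_abs]; exact hf'1 x hx
    calc |(fderiv ℝ θ (x, f x)) (1, derivWithin f s x)|
        = ‖(fderiv ℝ θ (x, f x)) (1, derivWithin f s x)‖ := (Real.norm_eq_abs _).symm
      _ ≤ ‖fderiv ℝ θ (x, f x)‖ * ‖((1:ℝ), derivWithin f s x)‖ :=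
          (fderiv ℝ θ (x, f x)).le_opNorm _
      _ ≤ M * 1 := mul_le_mul (hθb _ (hgraph x hx)).2 h1 (norm_nonneg _) (by linarith)
      _ = M := mul_one _
  -- names for the map components and their derivatives
  set g := fun y : ℝ => XIA θA θB y (f y) with hg_def
  set Yf := fun y : ℝ => YIA θC θD θE lam (k+100) y (f y) with hYf_def
  set gd := fun y : ℝ => 1 + 2*y
      + (3*y^2*θA (y, f y) + y^3*((fderiv ℝ θA (y, f y)) (1, derivWithin f s y)))
      + ((derivWithin f s y)*θB (y, f y)
          + f y*((fderiv ℝ θB (y, f y)) (1, derivWithin f s y))) with hgd_def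
  set Yd := fun y : ℝ =>
      (-(derivWithin f s y))*(1 - lam*y + f y*θC (y, f y) + y^2*θD (y, f y))
      + (-f y)*(-lam + ((derivWithin f s y)*θC (y, f y)
            + f y*((fderiv ℝ θC (y, f y)) (1, derivWithin f s y)))
          + (2*y*θD (y, f y) + y^2*((fderiv ℝ θD (y, f y)) (1, derivWithin f s y))))
      + (((k:ℝ)+200)*y^(k+199)*θE (y, f y)
          + y^(k+200)*((fderiv ℝ θE (y, f y)) (1, derivWithin f s y))) with hYd_def
  have hgeq : g = fun y : ℝ => y + y^2 + y^3*θA (y, f y) + f y*θB (y, f y) := by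
    funext y; simp [hg_def, XIA]
  have hYfeq : Yf = fun y : ℝ =>
      (-f y)*(1 - lam*y + f y*θC (y, f y) + y^2*θD (y, f y)) + y^(k+200)*θE (y, f y) := by
    funext y
    simp only [hYf_def, YIA, show k+100+100 = k+200 from by omega]
    try ring
  -- derivative of g
  have hgder : ∀ x ∈ s, HasDerivWithinAt g (gd x) s x := by
    intro x hx
    have HA := hcompd θA hθA x hx
    have HBc := hcompd θB hθB x hx
    have Hf := hfd x hx
    have keyd := (((hasDerivWithinAt_id x s).add (hasDerivWithinAt_pow (s := s) 2 x)).add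
      ((hasDerivWithinAt_pow (s := s) 3 x).mul HA)).add (Hf.mul HBc)
    rw [hgeq]
    refine keyd.congr_deriv ?_
    simp only [hgd_def, id_eq, show (2:ℕ)-1 = 1 from rfl, show (3:ℕ)-1 = 2 from rfl]
    push_cast
    ring
  -- derivative of Yf
  have hYfder : ∀ x ∈ s, HasDerivWithinAt Yf (Yd x) s x := by
    intro x hx
    have HC := hcompd θC hθC x hx
    have HD := hcompd θD hθD x hx
    have HE := hcompd θE hθE x hx
    have Hf := hfd x hx
    have HQ := (((hasDerivWithinAt_const x s (1:ℝ)).sub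
      ((hasDerivWithinAt_id x s).const_mul lam)).add (Hf.mul HC)).add
      ((hasDerivWithinAt_pow (s := s) 2 x).mul HD)
    have keyd := (Hf.neg.mul HQ).add ((hasDerivWithinAt_pow (s := s) (k+200) x).mul HE)
    rw [hYfeq]
    refine keyd.congr_deriv ?_
    simp only [hYd_def, id_eq, Pi.add_apply, Pi.sub_apply, Pi.mul_apply, Pi.neg_apply,
      show (2:ℕ)-1 = 1 from rfl,
      show k+200-1 = k+199 from by omega]
    push_cast
    ring
  -- smoothness of the composites
  have hθa : ContDiffOn ℝ (⊤:ℕ∞) (fun y : ℝ => θA (y, f y)) s :=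
    hθA.comp (contDiffOn_id.prodMk hf) hgraphV
  have hθb : ContDiffOn ℝ (⊤:ℕ∞) (fun y : ℝ => θB (y, f y)) s :=
    hθB.comp (contDiffOn_id.prodMk hf) hgraphV
  have hθc : ContDiffOn ℝ (⊤:ℕ∞) (fun y : ℝ => θC (y, f y)) s :=
    hθC.comp (contDiffOn_id.prodMk hf) hgraphV
  have hθd : ContDiffOn ℝ (⊤:ℕ∞) (fun y : ℝ => θD (y, f y)) s :=
    hθD.comp (contDiffOn_id.prodMk hf) hgraphV
  have hθe : ContDiffOn ℝ (⊤:ℕ∞) (fun y : ℝ => θE (y, f y)) s :=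
    hθE.comp (contDiffOn_id.prodMk hf) hgraphV
  have hgsm : ContDiffOn ℝ (⊤:ℕ∞) g s := by
    rw [hgeq]
    exact ((contDiffOn_id.add (contDiffOn_id.pow 2)).add
      ((contDiffOn_id.pow 3).mul hθa)).add (hf.mul hθb)
  have hYfsm : ContDiffOn ℝ (⊤:ℕ∞) Yf s := by
    rw [hYfeq]
    exact ((hf.neg).mul ((((contDiffOn_const.sub
      (contDiffOn_const.mul contDiffOn_id)).add (hf.mul hθc)).add
      ((contDiffOn_id.pow 2).mul hθd)))).add ((contDiffOn_id.pow (k+200)).mul hθe)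
  -- pointwise estimates
  have hgdb : ∀ x ∈ s, 1 + x ≤ gd x ∧ gd x ≤ 2 := by
    intro x hx
    have hxδ' : x ≤ δ := hx.2.trans hxMδ
    have := est_gd (k := k) hM1 hK₁1 hδpos.le hδ1 hx.1 hxδ' hMδ hδ40
      (hA _ (hgraph x hx)).1 (happ θA hA x hx) (hBb _ (hgraph x hx)).1 (happ θB hBb x hx)
      (hfb x hx) (hf'b x hx)
    rw [hgd_def]
    exact this
  have hgx : ∀ x ∈ s, x ≤ g x := by
    intro x hx
    have hxδ' : x ≤ δ := hx.2.trans hxMδ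
    have := est_g_ge (k := k) hM1 hδpos.le hδ1 hx.1 hxδ' hMδ'
      (hA _ (hgraph x hx)).1 (hBb _ (hgraph x hx)).1 (hfb x hx)
    rw [hgeq]
    exact this
  have hYfb : ∀ x ∈ s, |Yf x| ≤ x^(k+100) := by
    intro x hx
    have hxδ' : x ≤ δ := hx.2.trans hxMδ
    have := est_Yf (k := k) hM1 hlam.le hδpos.le hδ1 hx.1 hxδ' hlamδ hMδ3
      (hC _ (hgraph x hx)).1 (hD _ (hgraph x hx)).1 (hE _ (hgraph x hx)).1 (hfb x hx)
    rw [hYfeq]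
    exact this
  have hYdb : ∀ x ∈ s, |Yd x| ≤ K₁*x^(k+99)*(1+x) := by
    intro x hx
    have hxδ' : x ≤ δ := hx.2.trans hxMδ
    have := est_Yd (k := k) hM1 hK₁1 hlam.le hδpos.le hδ1 hx.1 hxδ' hlamδ hMδ hc4
      (hC _ (hgraph x hx)).1 (happ θC hC x hx) (hD _ (hgraph x hx)).1 (happ θD hD x hx)
      (hE _ (hgraph x hx)).1 (happ θE hE x hx) (hfb x hx) (hf'b x hx)
    rw [hYd_def]
    exact this
  -- endpoints
  have hxMs : xMAX ∈ s := ⟨hxM.le, le_rfl⟩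
  have h0s : (0:ℝ) ∈ s := ⟨le_rfl, hxM.le⟩
  have hf0 : f 0 = 0 := by
    have := hfb 0 h0s
    rw [zero_pow (by omega : k + 100 ≠ 0)] at this
    exact abs_nonpos_iff.1 this
  have hg0 : g 0 = 0 := by rw [hgeq]; simp [hf0]
  -- monotonicity and the image interval
  have hgcont : ContinuousOn g s := hgsm.continuousOn
  have hmono : StrictMonoOn g s := by
    apply strictMonoOn_of_deriv_pos (convex_Icc _ _) hgcont
    intro x hx
    rw [interior_Icc] at hx
    have hxs : x ∈ s := Ioo_subset_Icc_self hx
    have H : HasDerivAt g (gd x) x := (hgder x hxs).hasDerivAt (Icc_mem_nhds hx.1 hx.2)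
    rw [H.deriv]
    have := (hgdb x hxs).1
    linarith [hx.1]
  have hinj : InjOn g s := hmono.injOn
  set XMAX := g xMAX with hXMAX_def
  have hXMpos : 0 < XMAX := lt_of_lt_of_le hxM (hgx xMAX hxMs)
  set t := Icc (0:ℝ) XMAX with ht_def
  have htUD : UniqueDiffOn ℝ t := uniqueDiffOn_Icc hXMpos
  have himg : g '' s = t := by
    apply Subset.antisymm
    · rintro _ ⟨x, hx, rfl⟩
      exact ⟨hg0 ▸ hmono.monotoneOn h0s hx hx.1, hmono.monotoneOn hx hxMs hx.2⟩
    · have h := intermediate_value_Icc hxM.le hgcont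
      rw [hg0] at h
      exact h
  -- the inverse function of `g`
  haveI : CompactSpace ↥s := isCompact_iff_compactSpace.1 isCompact_Icc
  set σ : ↥s → ↥t := fun x => ⟨g x, himg ▸ mem_image_of_mem g x.2⟩ with hσ_def
  have hσc : Continuous σ := Continuous.subtype_mk hgcont.restrict _
  have hσbij : Function.Bijective σ := by
    constructor
    · intro a b hab
      exact Subtype.ext (hinj a.2 b.2 (Subtype.ext_iff.1 hab))
    · intro X
      have hXt : (X : ℝ) ∈ g '' s := himg.symm ▸ X.2
      obtain ⟨x, hx, hgx'⟩ := hXt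
      exact ⟨⟨x, hx⟩, Subtype.ext hgx'⟩
  set E : ↥s ≃ ↥t := Equiv.ofBijective σ hσbij with hE_def
  have hEc : Continuous E := hσc
  set e : ↥s ≃ₜ ↥t := Continuous.homeoOfEquivCompactToT2 (f := E) hEc with he_def
  have heval : ∀ y : ↥s, (e y : ℝ) = g y := fun y => rfl
  set h := fun X : ℝ => if hX : X ∈ t then ((e.symm ⟨X, hX⟩ : ↥s) : ℝ) else 0 with hh_def
  have hmapsh : MapsTo h t s := by
    intro X hX
    simp only [hh_def]
    rw [dif_pos hX]
    exact (e.symm ⟨X, hX⟩).2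
  have hgh : ∀ X ∈ t, g (h X) = X := by
    intro X hX
    simp only [hh_def]
    rw [dif_pos hX]
    have := heval (e.symm ⟨X, hX⟩)
    rw [e.apply_symm_apply] at this
    exact this.symm
  have hhg : ∀ x ∈ s, h (g x) = x := by
    intro x hx
    have hgxt : g x ∈ t := himg ▸ mem_image_of_mem g hx
    simp only [hh_def]
    rw [dif_pos hgxt]
    have h1 : (⟨g x, hgxt⟩ : ↥t) = e ⟨x, hx⟩ := Subtype.ext (heval ⟨x, hx⟩).symm
    rw [h1, e.symm_apply_apply]
  have hconth : ContinuousOn h t := by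
    rw [continuousOn_iff_continuous_restrict]
    have hres : t.domRestrict h = fun X : ↥t => ((e.symm X : ↥s) : ℝ) := by
      funext X
      simp only [domRestrict, hh_def]
      rw [dif_pos X.2]
    rw [hres]
    exact continuous_subtype_val.comp e.symm.continuous
  -- derivWithin of g is gd, and is nonvanishing
  have hdW : ∀ x ∈ s, derivWithin g s x = gd x := fun x hx =>
    (hgder x hx).derivWithin (hsUD x hx)
  have hdne : ∀ x ∈ s, derivWithin g s x ≠ 0 := by
    intro x hx
    rw [hdW x hx]
    have := (hgdb x hx).1
    have : 0 < gd x := by linarith [hx.1]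
    exact this.ne'
  -- the function F
  set F := fun X : ℝ => Yf (h X) with hF_def
  have hFsm : ContDiffOn ℝ (⊤:ℕ∞) F t := by
    refine contDiffOn_infty.2 fun n => ?_
    exact_mod_cast comp_inv_contDiffOn hsUD htUD hgsm hdne hmapsh hconth hgh hhg n Yf hYfsm
  have Hh : ∀ X ∈ t, HasDerivWithinAt h (gd (h X))⁻¹ t X := by
    intro X hX
    have hx : h X ∈ s := hmapsh hX
    have hne : gd (h X) ≠ 0 := by
      have := (hgdb _ hx).1
      have : 0 < gd (h X) := by linarith [hx.1]
      exact this.ne'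
    have := inv_hasDerivWithinAt (hgder _ hx) hne hmapsh
      (by rw [hgh X hX]; exact hconth X hX) hgh (hhg _ hx)
    rwa [hgh X hX] at this
  have HF : ∀ X ∈ t, HasDerivWithinAt F (Yd (h X) * (gd (h X))⁻¹) t X := fun X hX =>
    ((hYfder _ (hmapsh hX)).comp X (Hh X hX) hmapsh)
  have hFdW : ∀ X ∈ t, derivWithin F t X = Yd (h X) * (gd (h X))⁻¹ := fun X hX =>
    (HF X hX).derivWithin (htUD X hX)
  have hhle : ∀ X ∈ t, h X ≤ X := by
    intro X hX
    calc h X ≤ g (h X) := hgx _ (hmapsh hX)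
      _ = X := hgh X hX
  refine ⟨XMAX, hXMpos, F, hFsm, ?_, ?_, ?_⟩
  · -- the image identity
    calc (fun x => (XIA θA θB x (f x), YIA θC θD θE lam (k+100) x (f x))) '' s
        = (fun x => (g x, Yf x)) '' s := rfl
      _ = (fun x => ((fun X => (X, F X)) (g x))) '' s := by
          apply image_congr
          intro x hx
          simp only [hF_def]
          rw [hhg x hx]
      _ = (fun X => (X, F X)) '' (g '' s) := by rw [Set.image_image]
      _ = (fun X => (X, F X)) '' t := by rw [himg]
  · -- |F X| ≤ X^N
    intro X hX
    have hx : h X ∈ s := hmapsh hX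
    calc |F X| = |Yf (h X)| := rfl
      _ ≤ (h X)^(k+100) := hYfb _ hx
      _ ≤ X^(k+100) := pow_le_pow_left₀ hx.1 (hhle X hX) _
  · -- |F' X| ≤ K₁ X^(N-1)
    intro X hX
    rw [hFdW X hX, show k+100-1 = k+99 from by omega]
    have hx : h X ∈ s := hmapsh hX
    have h1x := (hgdb _ hx).1
    have hgd0 : 0 < gd (h X) := by linarith [hx.1]
    have hAnn : 0 ≤ K₁*(h X)^(k+99) := mul_nonneg (by linarith) (pow_nonneg hx.1 _)
    calc |Yd (h X) * (gd (h X))⁻¹| = |Yd (h X)| * (gd (h X))⁻¹ := by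
          rw [abs_mul, abs_of_pos (inv_pos.2 hgd0)]
      _ ≤ (K₁*(h X)^(k+99)*(1 + h X)) * (gd (h X))⁻¹ :=
          mul_le_mul_of_nonneg_right (hYdb _ hx) (inv_pos.2 hgd0).le
      _ ≤ K₁*(h X)^(k+99) := by
          rw [← div_eq_mul_inv, div_le_iff₀ hgd0]
          exact mul_le_mul_of_nonneg_left h1x hAnn
      _ ≤ K₁*X^(k+99) :=
          mul_le_mul_of_nonneg_left (pow_le_pow_left₀ hx.1 (hhle X hX) _) (by linarith)
end

section
/- (Shadowing Lemma) Let Φ be of the form (IA). There exists δ > 0 (depending on Φ) such that the following holds. Let (x,y), (x̂,ŷ) ∈ ℝ² with 0 < x ≤ δ, |y| ≤ x^N, and (|x − x̂| + x^(−3)|y − ŷ|)/x⁸ ≤ 1. Set (X,Y) = Φ(x,y) and (X̂,Ŷ) = Φ(x̂,ŷ). Then (|X − X̂| + X^(−3)|Y − Ŷ|)/X⁸ ≤ (|x − x̂| + x^(−3)|y − ŷ|)/x⁸ ≤ 1. -/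
open Set Filter Asymptotics Topology

theorem powdiff (c : ℝ) (hc : 0 ≤ c) : ∀ (n : ℕ) (a b : ℝ), |a| ≤ c → |b| ≤ c →
    |a^(n+1) - b^(n+1)| ≤ (n+1) * c^n * |a-b| := by
  intro n
  induction n with
  | zero => intro a b _ _; simp
  | succ n ih =>
    intro a b ha hb
    have key : a^(n+2) - b^(n+2) = a*(a^(n+1) - b^(n+1)) + (a-b)*b^(n+1) := by ring
    have h1 : |a*(a^(n+1) - b^(n+1))| ≤ c * ((n+1) * c^n * |a-b|) := by
      rw [abs_mul]
      exact mul_le_mul ha (ih a b ha hb) (abs_nonneg _) hc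
    have h2 : |(a-b)*b^(n+1)| ≤ |a-b| * c^(n+1) := by
      rw [abs_mul]
      refine mul_le_mul_of_nonneg_left ?_ (abs_nonneg _)
      calc |b^(n+1)| = |b|^(n+1) := abs_pow b (n+1)
        _ ≤ c^(n+1) := pow_le_pow_left₀ (abs_nonneg b) hb (n+1)
    calc |a^(n+2) - b^(n+2)| ≤ |a*(a^(n+1) - b^(n+1))| + |(a-b)*b^(n+1)| := by
          rw [key]; exact abs_add_le _ _
      _ ≤ c * ((n+1) * c^n * |a-b|) + |a-b| * c^(n+1) := add_le_add h1 h2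
      _ ≤ (↑(n+1)+1) * c^(n+1) * |a-b| := by push_cast; ring_nf; rfl

set_option maxHeartbeats 1000000 in
/-- **Shadowing Lemma.** For `Φ` of the form (IA) there is `δ > 0` such
that if `0 < x ≤ δ`, `|y| ≤ xᴺ` and `(|x - x̂| + x⁻³|y - ŷ|)/x⁸ ≤ 1`, then, writing
`(X,Y) = Φ(x,y)` and `(X̂,Ŷ) = Φ(x̂,ŷ)`,
`(|X - X̂| + X⁻³|Y - Ŷ|)/X⁸ ≤ (|x - x̂| + x⁻³|y - ŷ|)/x⁸ ≤ 1`. -/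
theorem shadowing_lemma
    (θA θB θC θD θE : ℝ × ℝ → ℝ) (V : Set (ℝ × ℝ)) (hV : V ∈ 𝓝 (0 : ℝ × ℝ))
    (hθA : ContDiffOn ℝ (⊤ : ℕ∞) θA V) (hθB : ContDiffOn ℝ (⊤ : ℕ∞) θB V)
    (hθC : ContDiffOn ℝ (⊤ : ℕ∞) θC V) (hθD : ContDiffOn ℝ (⊤ : ℕ∞) θD V)
    (hθE : ContDiffOn ℝ (⊤ : ℕ∞) θE V)
    (lam : ℝ) (hlam : 0 < lam) (N : ℕ) (hN : 100 ≤ N)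
    :
    ∃ δ > (0 : ℝ), ∀ x y xh yh : ℝ,
      0 < x → x ≤ δ → |y| ≤ x ^ N →
      (|x - xh| + |y - yh| / x ^ 3) / x ^ 8 ≤ 1 →
      (|XIA θA θB x y - XIA θA θB xh yh|
          + |YIA θC θD θE lam N x y - YIA θC θD θE lam N xh yh| / (XIA θA θB x y) ^ 3)
          / (XIA θA θB x y) ^ 8
        ≤ (|x - xh| + |y - yh| / x ^ 3) / x ^ 8 ∧
      (|x - xh| + |y - yh| / x ^ 3) / x ^ 8 ≤ 1 := by
  -- Lipschitz neighborhoods for each θ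
  have ex : ∀ f : ℝ × ℝ → ℝ, ContDiffOn ℝ (⊤ : ℕ∞) f V →
      ∃ K : NNReal, ∃ t ∈ 𝓝 (0 : ℝ × ℝ), LipschitzOnWith K f t := fun f hf =>
    ((hf.contDiffAt hV).of_le (by exact_mod_cast (le_top : (1:ℕ∞) ≤ ⊤))).exists_lipschitzOnWith
  obtain ⟨KA, tA, htA, lipA⟩ := ex θA hθA
  obtain ⟨KB, tB, htB, lipB⟩ := ex θB hθB
  obtain ⟨KC, tC, htC, lipC⟩ := ex θC hθC
  obtain ⟨KD, tD, htD, lipD⟩ := ex θD hθD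
  obtain ⟨KE, tE, htE, lipE⟩ := ex θE hθE
  have hT : tA ∩ tB ∩ tC ∩ tD ∩ tE ∈ 𝓝 (0 : ℝ × ℝ) :=
    Filter.inter_mem (Filter.inter_mem (Filter.inter_mem (Filter.inter_mem htA htB) htC) htD) htE
  obtain ⟨ε, hε, hball⟩ := Metric.mem_nhds_iff.mp hT
  obtain ⟨r, hrdef⟩ : ∃ r : ℝ, r = ε / 2 := ⟨_, rfl⟩
  have hrpos : 0 < r := by rw [hrdef]; positivity
  obtain ⟨S, hSdef⟩ : ∃ S : Set (ℝ × ℝ), S = Metric.closedBall 0 r := ⟨_, rfl⟩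
  have hSsub : S ⊆ tA ∩ tB ∩ tC ∩ tD ∩ tE := by
    rw [hSdef, hrdef]
    exact (Metric.closedBall_subset_ball (by linarith)).trans hball
  obtain ⟨L, hLdef⟩ : ∃ L : ℝ, L = ((KA ⊔ KB ⊔ KC ⊔ KD ⊔ KE : NNReal) : ℝ) := ⟨_, rfl⟩
  have hL0 : 0 ≤ L := hLdef ▸ NNReal.coe_nonneg _
  -- generic Lipschitz-type bound on S
  have gen : ∀ (f : ℝ × ℝ → ℝ) (K : NNReal), (K : ℝ) ≤ L → LipschitzOnWith K f S →
      ∀ p ∈ S, ∀ q ∈ S, |f p - f q| ≤ L * (|p.1 - q.1| + |p.2 - q.2|) := by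
    intro f K hK lip p hp q hq
    have h1 : dist (f p) (f q) ≤ (K : ℝ) * dist p q := lip.dist_le_mul p hp q hq
    have h2 : dist p q ≤ |p.1 - q.1| + |p.2 - q.2| := by
      rw [Prod.dist_eq]
      refine max_le ?_ ?_ <;> rw [Real.dist_eq] <;>
        [exact le_add_of_nonneg_right (abs_nonneg _); exact le_add_of_nonneg_left (abs_nonneg _)]
    rw [Real.dist_eq] at h1
    calc |f p - f q| ≤ (K:ℝ) * dist p q := h1
      _ ≤ L * (|p.1 - q.1| + |p.2 - q.2|) :=
        mul_le_mul hK h2 dist_nonneg hL0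
  have bndA := gen θA KA (by rw [hLdef]; exact_mod_cast le_sup_of_le_left (le_sup_of_le_left (le_sup_of_le_left (le_sup_left)))) (lipA.mono (hSsub.trans (by intro p hp; exact hp.1.1.1.1)))
  have bndB := gen θB KB (by rw [hLdef]; exact_mod_cast le_sup_of_le_left (le_sup_of_le_left (le_sup_of_le_left (le_sup_right)))) (lipB.mono (hSsub.trans (by intro p hp; exact hp.1.1.1.2)))
  have bndC := gen θC KC (by rw [hLdef]; exact_mod_cast le_sup_of_le_left (le_sup_of_le_left (le_sup_right))) (lipC.mono (hSsub.trans (by intro p hp; exact hp.1.1.2)))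
  have bndD := gen θD KD (by rw [hLdef]; exact_mod_cast le_sup_of_le_left (le_sup_right)) (lipD.mono (hSsub.trans (by intro p hp; exact hp.1.2)))
  have bndE := gen θE KE (by rw [hLdef]; exact_mod_cast le_sup_right) (lipE.mono (hSsub.trans (by intro p hp; exact hp.2)))
  have h0S : (0 : ℝ × ℝ) ∈ S := by rw [hSdef]; exact Metric.mem_closedBall_self hrpos.le
  obtain ⟨M, hMdef⟩ : ∃ M : ℝ, M = 1 + 2 * L * r + (|θA 0| + |θB 0| + |θC 0| + |θD 0| + |θE 0|) := ⟨_, rfl⟩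
  have hM1 : 1 ≤ M := by
    rw [hMdef]
    have := abs_nonneg (θA 0); have := abs_nonneg (θB 0); have := abs_nonneg (θC 0)
    have := abs_nonneg (θD 0); have := abs_nonneg (θE 0)
    nlinarith [mul_nonneg hL0 hrpos.le]
  have hM0 : 0 < M := by linarith
  -- sup bounds on S
  have genM : ∀ f : ℝ × ℝ → ℝ,
      (∀ p ∈ S, ∀ q ∈ S, |f p - f q| ≤ L * (|p.1 - q.1| + |p.2 - q.2|)) →
      ∀ p ∈ S, |f p| ≤ 2 * L * r + |f 0| := by
    intro f hf p hp
    have h1 : |f p - f 0| ≤ L * (|p.1 - 0| + |p.2 - 0|) := by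
      simpa using hf p hp 0 h0S
    have hp1 : |p.1| ≤ r ∧ |p.2| ≤ r := by
      have hd : dist p 0 ≤ r := by rw [hSdef] at hp; exact Metric.mem_closedBall.mp hp
      rw [Prod.dist_eq] at hd
      constructor
      · simpa [Real.dist_eq] using (le_max_left _ _).trans hd
      · simpa [Real.dist_eq] using (le_max_right _ _).trans hd
    have h2 : |f p| ≤ |f p - f 0| + |f 0| := by
      have := abs_add_le (f p - f 0) (f 0); simpa using this
    have h3 : L * (|p.1 - 0| + |p.2 - 0|) ≤ L * (r + r) := by
      apply mul_le_mul_of_nonneg_left _ hL0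
      simp only [sub_zero]
      exact add_le_add hp1.1 hp1.2
    nlinarith
  have aA := abs_nonneg (θA 0); have aB := abs_nonneg (θB 0); have aC := abs_nonneg (θC 0)
  have aD := abs_nonneg (θD 0); have aE := abs_nonneg (θE 0)
  have mA : ∀ p ∈ S, |θA p| ≤ M := fun p hp => (genM θA bndA p hp).trans (by rw [hMdef]; nlinarith)
  have mB : ∀ p ∈ S, |θB p| ≤ M := fun p hp => (genM θB bndB p hp).trans (by rw [hMdef]; nlinarith)
  have mC : ∀ p ∈ S, |θC p| ≤ M := fun p hp => (genM θC bndC p hp).trans (by rw [hMdef]; nlinarith)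
  have mD : ∀ p ∈ S, |θD p| ≤ M := fun p hp => (genM θD bndD p hp).trans (by rw [hMdef]; nlinarith)
  have mE : ∀ p ∈ S, |θE p| ≤ M := fun p hp => (genM θE bndE p hp).trans (by rw [hMdef]; nlinarith)
  -- constants
  obtain ⟨Kc, hKcdef⟩ : ∃ Kc : ℝ, Kc = lam + 4*M + 6*L := ⟨_, rfl⟩
  obtain ⟨c₁, hc₁def⟩ : ∃ c₁ : ℝ, c₁ = 8*M + 6*L := ⟨_, rfl⟩
  obtain ⟨c₂, hc₂def⟩ : ∃ c₂ : ℝ, c₂ = 2*Kc + 2*L + ((N:ℝ)+100) * 2^(N+99) * M := ⟨_, rfl⟩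
  obtain ⟨c₃, hc₃def⟩ : ∃ c₃ : ℝ, c₃ = c₁ + c₂ := ⟨_, rfl⟩
  have hKc0 : 0 < Kc := by rw [hKcdef]; nlinarith
  have hc₂0 : 0 < c₂ := by
    rw [hc₂def, hKcdef]
    have h1 : (0:ℝ) < 2^(N+99) := by positivity
    have hNc : (0:ℝ) < (N:ℝ) + 100 := by positivity
    nlinarith [mul_pos (mul_pos hNc h1) (lt_of_lt_of_le one_pos hM1)]
  have hc₃0 : 0 < c₃ := by rw [hc₃def, hc₁def]; nlinarith
  obtain ⟨δ, hδdef⟩ : ∃ d : ℝ,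
      d = min (r/2) (min (1/2) (min (1/(4*M)) (min (lam/(2*M)) (min (1/(2*lam)) (1/c₃))))) := ⟨_, rfl⟩
  have hδpos : 0 < δ := by
    rw [hδdef]
    refine lt_min (by positivity) (lt_min (by norm_num) (lt_min (by positivity)
      (lt_min (by positivity) (lt_min (by positivity) (one_div_pos.mpr hc₃0)))))
  refine ⟨δ, hδpos, ?_⟩
  intro x y xh yh hx hxδ hyN hDle
  refine ⟨?_, hDle⟩
  rw [hδdef] at hxδ
  -- unpack the smallness conditions on x
  have hxr : x ≤ r/2 := hxδ.trans (min_le_left _ _)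
  have hx12 : x ≤ 1/2 := hxδ.trans ((min_le_right _ _).trans (min_le_left _ _))
  have hx4M : x ≤ 1/(4*M) := hxδ.trans ((min_le_right _ _).trans ((min_le_right _ _).trans (min_le_left _ _)))
  have hxlM : x ≤ lam/(2*M) := hxδ.trans ((min_le_right _ _).trans ((min_le_right _ _).trans
    ((min_le_right _ _).trans (min_le_left _ _))))
  have hx2l : x ≤ 1/(2*lam) := hxδ.trans ((min_le_right _ _).trans ((min_le_right _ _).trans
    ((min_le_right _ _).trans ((min_le_right _ _).trans (min_le_left _ _)))))
  have hxc₃ : x ≤ 1/c₃ := hxδ.trans ((min_le_right _ _).trans ((min_le_right _ _).trans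
    ((min_le_right _ _).trans ((min_le_right _ _).trans (min_le_right _ _)))))
  have h4Mx : 4*M*x ≤ 1 := by
    rw [le_div_iff₀ (by positivity)] at hx4M; linarith
  have h2Mx : 2*M*x ≤ lam := by
    rw [le_div_iff₀ (by positivity)] at hxlM; linarith
  have h2lx : 2*lam*x ≤ 1 := by
    rw [le_div_iff₀ (by positivity)] at hx2l; linarith
  have hc₃x : c₃*x ≤ 1 := by
    rw [le_div_iff₀ hc₃0] at hxc₃; linarith
  have hx1 : x ≤ 1 := by linarith
  have hpow : ∀ m n : ℕ, m ≤ n → x^n ≤ x^m := fun m n h => pow_le_pow_of_le_one hx.le hx1 h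
  have hx8x : x^8 ≤ x := by simpa using hpow 1 8 (by norm_num)
  have hx32 : x^3 ≤ x^2 := hpow 2 3 (by norm_num)
  have hx112 : x^11 ≤ x^2 := hpow 2 11 (by norm_num)
  have hx113 : x^11 ≤ x^3 := hpow 3 11 (by norm_num)
  have hxN11 : x^N ≤ x^11 := hpow 11 N (by omega)
  have hx111 : x^11 ≤ x := by simpa using hpow 1 11 (by norm_num)
  
  -- basic distance facts
  have hx8pos : (0:ℝ) < x^8 := pow_pos hx 8
  have hx3pos : (0:ℝ) < x^3 := pow_pos hx 3
  have hq0 : (0:ℝ) ≤ |y - yh| / x^3 := by positivity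
  have hDel : |x - xh| + |y - yh| / x^3 ≤ x^8 := by
    rwa [div_le_one hx8pos] at hDle
  have hDel0 : (0:ℝ) ≤ |x - xh| + |y - yh| / x^3 := by positivity
  have hd1x8 : |x - xh| ≤ x^8 := by linarith
  have hd1D : |x - xh| ≤ |x - xh| + |y - yh| / x^3 := by linarith
  have hd2D : |y - yh| ≤ x^3 * (|x - xh| + |y - yh| / x^3) :=
    calc |y - yh| = x^3 * (|y - yh| / x^3) := by field_simp
      _ ≤ x^3 * (|x - xh| + |y - yh| / x^3) :=
        mul_le_mul_of_nonneg_left (le_add_of_nonneg_left (abs_nonneg _)) hx3pos.le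
  have hd2x11 : |y - yh| ≤ x^11 := by
    calc |y - yh| ≤ x^3 * (|x - xh| + |y - yh| / x^3) := hd2D
      _ ≤ x^3 * x^8 := mul_le_mul_of_nonneg_left hDel hx3pos.le
      _ = x^11 := by ring
  have hyx11 : |y| ≤ x^11 := hyN.trans hxN11
  have hxh2x : |xh| ≤ 2*x := by
    have h := abs_sub_abs_le_abs_sub xh x
    rw [abs_sub_comm, abs_of_pos hx] at h
    linarith
  have hyh2 : |yh| ≤ 2*x^11 := by
    have h := abs_sub_abs_le_abs_sub yh y
    rw [abs_sub_comm] at h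
    linarith
  -- membership of the two points in S
  have hxr' : x ≤ r := by linarith
  have hdist : ∀ a b : ℝ, dist ((a,b)) (0:ℝ×ℝ) = max |a| |b| := by
    intro a b
    rw [Prod.dist_eq]
    simp [Real.dist_eq]
  have hpS : (x, y) ∈ S := by
    rw [hSdef, Metric.mem_closedBall, hdist]
    refine max_le ?_ ?_
    · rw [abs_of_pos hx]; exact hxr'
    · calc |y| ≤ x^11 := hyx11
        _ ≤ x := hx111
        _ ≤ r := hxr'
  have hqS : (xh, yh) ∈ S := by
    rw [hSdef, Metric.mem_closedBall, hdist]
    refine max_le ?_ ?_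
    · calc |xh| ≤ 2*x := hxh2x
        _ ≤ r := by linarith
    · calc |yh| ≤ 2*x^11 := hyh2
        _ ≤ 2*x := by linarith [hx111]
        _ ≤ r := by linarith
  -- bounds on the θ values
  have hA1 : |θA (x, y)| ≤ M := mA _ hpS
  have hA2 : |θA (xh, yh)| ≤ M := mA _ hqS
  have hB1 : |θB (x, y)| ≤ M := mB _ hpS
  have hB2 : |θB (xh, yh)| ≤ M := mB _ hqS
  have hC1 : |θC (x, y)| ≤ M := mC _ hpS
  have hC2 : |θC (xh, yh)| ≤ M := mC _ hqS
  have hD1 : |θD (x, y)| ≤ M := mD _ hpS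
  have hD2 : |θD (xh, yh)| ≤ M := mD _ hqS
  have hE1 : |θE (x, y)| ≤ M := mE _ hpS
  have hE2 : |θE (xh, yh)| ≤ M := mE _ hqS
  have hAd : |θA (x,y) - θA (xh,yh)| ≤ L * (|x - xh| + |y - yh|) := bndA (x,y) hpS (xh,yh) hqS
  have hBd : |θB (x,y) - θB (xh,yh)| ≤ L * (|x - xh| + |y - yh|) := bndB (x,y) hpS (xh,yh) hqS
  have hCd : |θC (x,y) - θC (xh,yh)| ≤ L * (|x - xh| + |y - yh|) := bndC (x,y) hpS (xh,yh) hqS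
  have hDd : |θD (x,y) - θD (xh,yh)| ≤ L * (|x - xh| + |y - yh|) := bndD (x,y) hpS (xh,yh) hqS
  have hEd : |θE (x,y) - θE (xh,yh)| ≤ L * (|x - xh| + |y - yh|) := bndE (x,y) hpS (xh,yh) hqS
  -- bounds on X = XIA θA θB x y
  have hXsmall : |x^3 * θA (x,y) + y * θB (x,y)| ≤ 2*M*x^3 := by
    have h1 : |x^3 * θA (x,y)| ≤ x^3 * M := by
      rw [abs_mul, abs_of_pos hx3pos]
      exact mul_le_mul_of_nonneg_left hA1 hx3pos.le
    have h2 : |y * θB (x,y)| ≤ x^3 * M := by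
      rw [abs_mul]
      exact mul_le_mul (hyx11.trans hx113) hB1 (abs_nonneg _) hx3pos.le
    calc |x^3 * θA (x,y) + y * θB (x,y)| ≤ |x^3 * θA (x,y)| + |y * θB (x,y)| := abs_add_le _ _
      _ ≤ 2*M*x^3 := by linarith
  have h2M3 : 2*M*x^3 ≤ x^2/2 := by nlinarith only [mul_le_mul_of_nonneg_right h4Mx (sq_nonneg x)]
  have hXlow : x + x^2/2 ≤ XIA θA θB x y := by
    have h := (abs_le.mp hXsmall).1
    simp only [XIA]
    linarith only [h, h2M3]
  have hXup : XIA θA θB x y ≤ x + 2*x^2 := by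
    have h := (abs_le.mp hXsmall).2
    simp only [XIA]
    linarith only [h, h2M3, sq_nonneg x]
  have hXpos : 0 < XIA θA θB x y := by linarith only [hXlow, hx, sq_nonneg x]
  have hXx : x ≤ XIA θA θB x y := by linarith only [hXlow, sq_nonneg x]
  have hX3 : x^3 ≤ (XIA θA θB x y)^3 := pow_le_pow_left₀ hx.le hXx 3
  have hX3pos : 0 < (XIA θA θB x y)^3 := pow_pos hXpos 3
  have hX8low : x^8 * (1 + 4*x) ≤ (XIA θA θB x y)^8 := by
    have h1 : x * (1 + x/2) ≤ XIA θA θB x y := by linarith only [hXlow]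
    have h2 : (x * (1 + x/2))^8 ≤ (XIA θA θB x y)^8 := pow_le_pow_left₀ (by positivity) h1 8
    have h3 : (1:ℝ) + 4*x ≤ (1 + x/2)^8 := by
      have h := one_add_mul_le_pow (a := x/2) (by linarith : (-2:ℝ) ≤ x/2) 8
      push_cast at h
      linarith
    calc x^8 * (1 + 4*x) ≤ x^8 * (1 + x/2)^8 := mul_le_mul_of_nonneg_left h3 hx8pos.le
      _ = (x * (1 + x/2))^8 := by ring
      _ ≤ _ := h2
  
  -- elementary |·| gymnastics
  have habs4 : ∀ a b c d : ℝ, |a + b + c + d| ≤ |a| + |b| + |c| + |d| := by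
    intro a b c d
    calc |a + b + c + d| ≤ |a + b + c| + |d| := abs_add_le _ _
      _ ≤ |a + b| + |c| + |d| := add_le_add_left (abs_add_le _ _) _
      _ ≤ |a| + |b| + |c| + |d| := add_le_add_left (add_le_add_left (abs_add_le _ _) _) _
  have hxh2sq : |x^2 - xh^2| ≤ 3*x*|x - xh| := by
    have e : x^2 - xh^2 = (x - xh) * (x + xh) := by ring
    rw [e, abs_mul]
    have hb : |x + xh| ≤ 3*x := by
      have h := abs_le.mp hxh2x
      rw [abs_le]
      constructor <;> linarith only [h.1, h.2, hx]
    calc |x - xh| * |x + xh| ≤ |x - xh| * (3*x) := mul_le_mul_of_nonneg_left hb (abs_nonneg _)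
      _ = 3*x*|x - xh| := by ring
  have hxh3 : |x^3 - xh^3| ≤ 7*x^2*|x - xh| := by
    have e : x^3 - xh^3 = (x - xh) * (x^2 + x*xh + xh^2) := by ring
    rw [e, abs_mul]
    have hb : |x^2 + x*xh + xh^2| ≤ 7*x^2 := by
      have h := abs_le.mp hxh2x
      rw [abs_le]
      constructor <;> nlinarith only [h.1, h.2, hx, sq_nonneg (x + xh), sq_nonneg (x - xh), sq_nonneg xh]
    calc |x - xh| * |x^2 + x*xh + xh^2| ≤ |x - xh| * (7*x^2) := mul_le_mul_of_nonneg_left hb (abs_nonneg _)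
      _ = 7*x^2*|x - xh| := by ring
  have hx21 : x^2 ≤ x := by nlinarith only [hx, hx1]
  have hx31 : x^3 ≤ 1 := by linarith only [hx32, hx21, hx1]
  have hx111' : x^11 ≤ 1 := by linarith only [hx112, hx21, hx1]
  have hsum2 : |x - xh| + |y - yh| ≤ 2*(|x - xh| + |y - yh|/x^3) := by
    have h2 : |y - yh| ≤ |x - xh| + |y - yh|/x^3 :=
      calc |y - yh| ≤ x^3 * (|x - xh| + |y - yh| / x^3) := hd2D
        _ ≤ 1 * (|x - xh| + |y - yh| / x^3) := mul_le_mul_of_nonneg_right hx31 hDel0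
        _ = _ := one_mul _
    linarith only [hd1D, h2]
  -- the X difference bound
  have hXdiff : |XIA θA θB x y - XIA θA θB xh yh|
      ≤ (1 + 3*x)*|x - xh| + c₁*(x^2*(|x - xh| + |y - yh|/x^3)) := by
    have e : XIA θA θB x y - XIA θA θB xh yh
        = (x - xh) + (x^2 - xh^2)
          + (x^3*(θA (x,y) - θA (xh,yh)) + (x^3 - xh^3)*θA (xh,yh))
          + ((y - yh)*θB (x,y) + yh*(θB (x,y) - θB (xh,yh))) := by
      simp only [XIA]; ring
    have t1 : |x^3*(θA (x,y) - θA (xh,yh))| ≤ x^3 * (L*(|x - xh| + |y - yh|)) := by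
      rw [abs_mul, abs_of_pos hx3pos]
      exact mul_le_mul_of_nonneg_left hAd hx3pos.le
    have t2 : |(x^3 - xh^3)*θA (xh,yh)| ≤ (7*x^2*|x - xh|) * M := by
      rw [abs_mul]
      exact mul_le_mul hxh3 hA2 (abs_nonneg _) (by positivity)
    have t3 : |(y - yh)*θB (x,y)| ≤ |y - yh| * M := by
      rw [abs_mul]
      exact mul_le_mul_of_nonneg_left hB1 (abs_nonneg _)
    have t4 : |yh*(θB (x,y) - θB (xh,yh))| ≤ (2*x^11) * (L*(|x - xh| + |y - yh|)) := by
      rw [abs_mul]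
      exact mul_le_mul hyh2 hBd (abs_nonneg _) (by positivity)
    have u1 : x^3 * (L*(|x - xh| + |y - yh|)) ≤ x^2 * (L*(2*(|x - xh| + |y - yh|/x^3))) :=
      mul_le_mul hx32 (mul_le_mul_of_nonneg_left hsum2 hL0) (by positivity) (by positivity)
    have u2 : (7*x^2*|x - xh|) * M ≤ (7*(x^2*(|x - xh| + |y - yh|/x^3))) * M := by
      refine mul_le_mul_of_nonneg_right ?_ (by linarith only [hM1])
      have := mul_le_mul_of_nonneg_left hd1D (by positivity : (0:ℝ) ≤ 7*x^2)
      linarith only [this]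
    have u3 : |y - yh| * M ≤ (x^2*(|x - xh| + |y - yh|/x^3)) * M := by
      refine mul_le_mul_of_nonneg_right ?_ (by linarith only [hM1])
      calc |y - yh| ≤ x^3 * (|x - xh| + |y - yh| / x^3) := hd2D
        _ ≤ x^2 * (|x - xh| + |y - yh| / x^3) := mul_le_mul_of_nonneg_right hx32 hDel0
    have u4 : (2*x^11) * (L*(|x - xh| + |y - yh|)) ≤ (2*x^2) * (L*(2*(|x - xh| + |y - yh|/x^3))) := by
      refine mul_le_mul (by linarith only [hx112]) (mul_le_mul_of_nonneg_left hsum2 hL0) (by positivity) (by positivity)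
    rw [e, hc₁def]
    calc |(x - xh) + (x^2 - xh^2)
          + (x^3*(θA (x,y) - θA (xh,yh)) + (x^3 - xh^3)*θA (xh,yh))
          + ((y - yh)*θB (x,y) + yh*(θB (x,y) - θB (xh,yh)))|
        ≤ |x - xh| + |x^2 - xh^2|
          + |x^3*(θA (x,y) - θA (xh,yh)) + (x^3 - xh^3)*θA (xh,yh)|
          + |(y - yh)*θB (x,y) + yh*(θB (x,y) - θB (xh,yh))| := habs4 _ _ _ _
      _ ≤ |x - xh| + 3*x*|x - xh|
          + (x^3 * (L*(|x - xh| + |y - yh|)) + (7*x^2*|x - xh|) * M)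
          + (|y - yh| * M + (2*x^11) * (L*(|x - xh| + |y - yh|))) :=
        add_le_add (add_le_add (add_le_add le_rfl hxh2sq)
          ((abs_add_le _ _).trans (add_le_add t1 t2))) ((abs_add_le _ _).trans (add_le_add t3 t4))
      _ ≤ (1 + 3*x)*|x - xh| + (8*M + 6*L)*(x^2*(|x - xh| + |y - yh|/x^3)) := by
        linarith only [u1, u2, u3, u4]
  
  -- the bracket B and its bounds
  obtain ⟨Bv1, hBv1def⟩ : ∃ b : ℝ, b = 1 - lam*x + y*θC (x,y) + x^2*θD (x,y) := ⟨_, rfl⟩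
  obtain ⟨Bv2, hBv2def⟩ : ∃ b : ℝ, b = 1 - lam*xh + yh*θC (xh,yh) + xh^2*θD (xh,yh) := ⟨_, rfl⟩
  have hx2pos : (0:ℝ) < x^2 := pow_pos hx 2
  have hBv1abs : |Bv1| ≤ 1 := by
    have h1 : |y*θC (x,y)| ≤ x^2*M := by
      rw [abs_mul]
      exact mul_le_mul (hyx11.trans hx112) hC1 (abs_nonneg _) hx2pos.le
    have h2 : |x^2*θD (x,y)| ≤ x^2*M := by
      rw [abs_mul, abs_of_pos hx2pos]
      exact mul_le_mul_of_nonneg_left hD1 hx2pos.le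
    have h1' := abs_le.mp h1
    have h2' := abs_le.mp h2
    have hMx2 : 2*(x^2*M) ≤ lam*x := by
      nlinarith only [mul_le_mul_of_nonneg_right h2Mx hx.le]
    rw [hBv1def, abs_le]
    constructor
    · nlinarith only [h1'.1, h2'.1, hMx2, h2lx, hx, hlam]
    · nlinarith only [h1'.2, h2'.2, hMx2]
  have hBvd : |Bv1 - Bv2| ≤ Kc*(|x - xh| + |y - yh|/x^3) := by
    have e : Bv1 - Bv2
        = -(lam*(x - xh)) + ((y - yh)*θC (x,y) + yh*(θC (x,y) - θC (xh,yh)))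
          + (x^2*(θD (x,y) - θD (xh,yh)) + (x^2 - xh^2)*θD (xh,yh)) := by
      rw [hBv1def, hBv2def]; ring
    have t0 : |(-(lam*(x - xh)))| ≤ lam * |x - xh| := by
      rw [abs_neg, abs_mul, abs_of_pos hlam]
    have t1 : |(y - yh)*θC (x,y)| ≤ |y - yh| * M := by
      rw [abs_mul]; exact mul_le_mul_of_nonneg_left hC1 (abs_nonneg _)
    have t2 : |yh*(θC (x,y) - θC (xh,yh))| ≤ (2*x^11) * (L*(|x - xh| + |y - yh|)) := by
      rw [abs_mul]; exact mul_le_mul hyh2 hCd (abs_nonneg _) (by positivity)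
    have t3 : |x^2*(θD (x,y) - θD (xh,yh))| ≤ x^2 * (L*(|x - xh| + |y - yh|)) := by
      rw [abs_mul, abs_of_pos hx2pos]
      exact mul_le_mul_of_nonneg_left hDd hx2pos.le
    have t4 : |(x^2 - xh^2)*θD (xh,yh)| ≤ (3*x*|x - xh|) * M := by
      rw [abs_mul]; exact mul_le_mul hxh2sq hD2 (abs_nonneg _) (by positivity)
    -- reductions to the weighted distance
    have hq' : |y - yh| ≤ |x - xh| + |y - yh|/x^3 :=
      calc |y - yh| ≤ x^3 * (|x - xh| + |y - yh| / x^3) := hd2D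
        _ ≤ 1 * (|x - xh| + |y - yh| / x^3) := mul_le_mul_of_nonneg_right hx31 hDel0
        _ = _ := one_mul _
    have u0 : lam * |x - xh| ≤ lam * (|x - xh| + |y - yh|/x^3) :=
      mul_le_mul_of_nonneg_left hd1D hlam.le
    have u1 : |y - yh| * M ≤ (|x - xh| + |y - yh|/x^3) * M :=
      mul_le_mul_of_nonneg_right hq' (by linarith only [hM1])
    have u2 : (2*x^11) * (L*(|x - xh| + |y - yh|)) ≤ 2 * (L*(2*(|x - xh| + |y - yh|/x^3))) :=
      mul_le_mul (by linarith only [hx111']) (mul_le_mul_of_nonneg_left hsum2 hL0)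
        (by positivity) (by norm_num)
    have u3 : x^2 * (L*(|x - xh| + |y - yh|)) ≤ 1 * (L*(2*(|x - xh| + |y - yh|/x^3))) :=
      mul_le_mul (by linarith only [hx21, hx1]) (mul_le_mul_of_nonneg_left hsum2 hL0)
        (by positivity) (by norm_num)
    have u4 : (3*x*|x - xh|) * M ≤ (3*(|x - xh| + |y - yh|/x^3)) * M := by
      refine mul_le_mul_of_nonneg_right ?_ (by linarith only [hM1])
      have h := mul_le_mul hx1 hd1D (abs_nonneg _) (by norm_num : (0:ℝ) ≤ 1)
      nlinarith only [h]
    rw [e, hKcdef]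
    calc |(-(lam*(x - xh))) + ((y - yh)*θC (x,y) + yh*(θC (x,y) - θC (xh,yh)))
          + (x^2*(θD (x,y) - θD (xh,yh)) + (x^2 - xh^2)*θD (xh,yh))|
        ≤ |(-(lam*(x - xh)))| + |(y - yh)*θC (x,y) + yh*(θC (x,y) - θC (xh,yh))|
          + |x^2*(θD (x,y) - θD (xh,yh)) + (x^2 - xh^2)*θD (xh,yh)| := by
          calc _ ≤ |(-(lam*(x - xh))) + ((y - yh)*θC (x,y) + yh*(θC (x,y) - θC (xh,yh)))|
              + |x^2*(θD (x,y) - θD (xh,yh)) + (x^2 - xh^2)*θD (xh,yh)| := abs_add_le _ _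
            _ ≤ _ := add_le_add_left (abs_add_le _ _) _
      _ ≤ lam * |x - xh| + (|y - yh| * M + (2*x^11) * (L*(|x - xh| + |y - yh|)))
          + (x^2 * (L*(|x - xh| + |y - yh|)) + (3*x*|x - xh|) * M) :=
        add_le_add (add_le_add t0 ((abs_add_le _ _).trans (add_le_add t1 t2)))
          ((abs_add_le _ _).trans (add_le_add t3 t4))
      _ ≤ (lam + 4*M + 6*L)*(|x - xh| + |y - yh|/x^3) := by
        linarith only [u0, u1, u2, u3, u4]
  -- the E-term
  have hpowN : |x^(N+100) - xh^(N+100)| ≤ ((N:ℝ)+100) * 2^(N+99) * x^11 * |x - xh| := by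
    have hxx : |x| ≤ 2*x := by rw [abs_of_pos hx]; linarith only [hx]
    have h := powdiff (2*x) (by linarith only [hx]) (N+99) x xh hxx hxh2x
    have hee : N+99+1 = N+100 := by omega
    rw [hee] at h
    have hxN99 : x^(N+99) ≤ x^11 := hpow 11 (N+99) (by omega)
    calc |x^(N+100) - xh^(N+100)| ≤ (↑(N+99)+1) * (2*x)^(N+99) * |x - xh| := h
      _ = ((N:ℝ)+100) * ((2:ℝ)^(N+99) * x^(N+99)) * |x - xh| := by
          rw [mul_pow]; push_cast; ring
      _ ≤ ((N:ℝ)+100) * ((2:ℝ)^(N+99) * x^11) * |x - xh| := by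
          refine mul_le_mul_of_nonneg_right (mul_le_mul_of_nonneg_left ?_ (by positivity)) (abs_nonneg _)
          exact mul_le_mul_of_nonneg_left hxN99 (by positivity)
      _ = ((N:ℝ)+100) * 2^(N+99) * x^11 * |x - xh| := by ring
  have hEterm : |x^(N+100)*θE (x,y) - xh^(N+100)*θE (xh,yh)|
      ≤ (2*L + ((N:ℝ)+100) * 2^(N+99) * M) * (x^11*(|x - xh| + |y - yh|/x^3)) := by
    have e : x^(N+100)*θE (x,y) - xh^(N+100)*θE (xh,yh)
        = x^(N+100)*(θE (x,y) - θE (xh,yh)) + (x^(N+100) - xh^(N+100))*θE (xh,yh) := by ring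
    have hxN100 : x^(N+100) ≤ x^11 := hpow 11 (N+100) (by omega)
    have t1 : |x^(N+100)*(θE (x,y) - θE (xh,yh))| ≤ x^11 * (L*(|x - xh| + |y - yh|)) := by
      rw [abs_mul, abs_of_pos (pow_pos hx (N+100))]
      exact mul_le_mul hxN100 hEd (abs_nonneg _) (by positivity)
    have t2 : |(x^(N+100) - xh^(N+100))*θE (xh,yh)|
        ≤ (((N:ℝ)+100) * 2^(N+99) * x^11 * |x - xh|) * M := by
      rw [abs_mul]
      exact mul_le_mul hpowN hE2 (abs_nonneg _) (by positivity)
    have u1 : x^11 * (L*(|x - xh| + |y - yh|)) ≤ x^11 * (L*(2*(|x - xh| + |y - yh|/x^3))) :=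
      mul_le_mul_of_nonneg_left (mul_le_mul_of_nonneg_left hsum2 hL0) (by positivity)
    have u2 : (((N:ℝ)+100) * 2^(N+99) * x^11 * |x - xh|) * M
        ≤ (((N:ℝ)+100) * 2^(N+99) * x^11 * (|x - xh| + |y - yh|/x^3)) * M := by
      refine mul_le_mul_of_nonneg_right ?_ (by linarith only [hM1])
      exact mul_le_mul_of_nonneg_left hd1D (by positivity)
    calc |x^(N+100)*θE (x,y) - xh^(N+100)*θE (xh,yh)|
        ≤ |x^(N+100)*(θE (x,y) - θE (xh,yh))| + |(x^(N+100) - xh^(N+100))*θE (xh,yh)| := by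
          rw [e]; exact abs_add_le _ _
      _ ≤ x^11 * (L*(|x - xh| + |y - yh|)) + (((N:ℝ)+100) * 2^(N+99) * x^11 * |x - xh|) * M :=
          add_le_add t1 t2
      _ ≤ (2*L + ((N:ℝ)+100) * 2^(N+99) * M) * (x^11*(|x - xh| + |y - yh|/x^3)) := by
          nlinarith only [u1, u2]
  -- the Y difference bound
  have hYdiff : |YIA θC θD θE lam N x y - YIA θC θD θE lam N xh yh|
      ≤ |y - yh| + c₂*(x^11*(|x - xh| + |y - yh|/x^3)) := by
    have e : YIA θC θD θE lam N x y - YIA θC θD θE lam N xh yh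
        = -((y - yh)*Bv1) - yh*(Bv1 - Bv2)
          + (x^(N+100)*θE (x,y) - xh^(N+100)*θE (xh,yh)) := by
      simp only [YIA, hBv1def, hBv2def]; ring
    have t1 : |(-((y - yh)*Bv1))| ≤ |y - yh| := by
      rw [abs_neg, abs_mul]
      calc |y - yh| * |Bv1| ≤ |y - yh| * 1 := mul_le_mul_of_nonneg_left hBv1abs (abs_nonneg _)
        _ = |y - yh| := mul_one _
    have t2 : |yh*(Bv1 - Bv2)| ≤ (2*x^11) * (Kc*(|x - xh| + |y - yh|/x^3)) := by
      rw [abs_mul]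
      exact mul_le_mul hyh2 hBvd (abs_nonneg _) (by positivity)
    calc |YIA θC θD θE lam N x y - YIA θC θD θE lam N xh yh|
        ≤ |(-((y - yh)*Bv1))| + |(-(yh*(Bv1 - Bv2)))|
          + |x^(N+100)*θE (x,y) - xh^(N+100)*θE (xh,yh)| := by
          rw [e]
          calc _ ≤ |(-((y - yh)*Bv1)) - yh*(Bv1 - Bv2)|
              + |x^(N+100)*θE (x,y) - xh^(N+100)*θE (xh,yh)| := abs_add_le _ _
            _ ≤ _ := by
              refine add_le_add_left ?_ _
              calc |(-((y - yh)*Bv1)) - yh*(Bv1 - Bv2)|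
                  = |(-((y - yh)*Bv1)) + (-(yh*(Bv1 - Bv2)))| := by ring_nf
                _ ≤ _ := abs_add_le _ _
      _ ≤ |y - yh| + (2*x^11) * (Kc*(|x - xh| + |y - yh|/x^3))
          + (2*L + ((N:ℝ)+100) * 2^(N+99) * M) * (x^11*(|x - xh| + |y - yh|/x^3)) := by
          have t2' : |(-(yh*(Bv1 - Bv2)))| ≤ (2*x^11) * (Kc*(|x - xh| + |y - yh|/x^3)) := by
            rw [abs_neg]; exact t2
          exact add_le_add (add_le_add t1 t2') hEterm
      _ ≤ |y - yh| + c₂*(x^11*(|x - xh| + |y - yh|/x^3)) := by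
          rw [hc₂def]
          linarith only []
  
  -- divide the Y bound by X³
  have hYX3 : |YIA θC θD θE lam N x y - YIA θC θD θE lam N xh yh| / (XIA θA θB x y)^3
      ≤ |y - yh|/x^3 + c₂*(x^2*(|x - xh| + |y - yh|/x^3)) := by
    have h1 : |YIA θC θD θE lam N x y - YIA θC θD θE lam N xh yh| / (XIA θA θB x y)^3
        ≤ |YIA θC θD θE lam N x y - YIA θC θD θE lam N xh yh| / x^3 := by
      rw [div_le_div_iff₀ hX3pos hx3pos]
      exact mul_le_mul_of_nonneg_left hX3 (abs_nonneg _)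
    have h2 : |YIA θC θD θE lam N x y - YIA θC θD θE lam N xh yh| / x^3
        ≤ (|y - yh| + c₂*(x^11*(|x - xh| + |y - yh|/x^3))) / x^3 := by
      rw [div_le_div_iff₀ hx3pos hx3pos]
      exact mul_le_mul_of_nonneg_right hYdiff hx3pos.le
    have h3 : (|y - yh| + c₂*(x^11*(|x - xh| + |y - yh|/x^3))) / x^3
        = |y - yh|/x^3 + c₂*(x^8*(|x - xh| + |y - yh|/x^3)) := by
      field_simp
    have h4 : c₂*(x^8*(|x - xh| + |y - yh|/x^3)) ≤ c₂*(x^2*(|x - xh| + |y - yh|/x^3)) :=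
      mul_le_mul_of_nonneg_left
        (mul_le_mul_of_nonneg_right (hpow 2 8 (by norm_num)) hDel0) hc₂0.le
    calc |YIA θC θD θE lam N x y - YIA θC θD θE lam N xh yh| / (XIA θA θB x y)^3
        ≤ (|y - yh| + c₂*(x^11*(|x - xh| + |y - yh|/x^3))) / x^3 := h1.trans h2
      _ = |y - yh|/x^3 + c₂*(x^8*(|x - xh| + |y - yh|/x^3)) := h3
      _ ≤ |y - yh|/x^3 + c₂*(x^2*(|x - xh| + |y - yh|/x^3)) := add_le_add_right h4 _
  -- final assembly
  rw [div_le_div_iff₀ (pow_pos hXpos 8) hx8pos]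
  have hcc : c₁*(x^2*(|x - xh| + |y - yh|/x^3)) + c₂*(x^2*(|x - xh| + |y - yh|/x^3))
      ≤ x*(|x - xh| + |y - yh|/x^3) := by
    have h := mul_le_mul_of_nonneg_right hc₃x (mul_nonneg hx.le hDel0)
    rw [hc₃def] at h
    nlinarith only [h]
  have hsumle : |XIA θA θB x y - XIA θA θB xh yh|
      + |YIA θC θD θE lam N x y - YIA θC θD θE lam N xh yh| / (XIA θA θB x y)^3
      ≤ (|x - xh| + |y - yh|/x^3)*(1 + 4*x) := by
    nlinarith only [hXdiff, hYX3, hcc, mul_nonneg hx.le hq0,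
      mul_nonneg hx.le (abs_nonneg (x - xh))]
  calc (|XIA θA θB x y - XIA θA θB xh yh|
        + |YIA θC θD θE lam N x y - YIA θC θD θE lam N xh yh| / (XIA θA θB x y)^3) * x^8
      ≤ ((|x - xh| + |y - yh|/x^3)*(1 + 4*x)) * x^8 :=
        mul_le_mul_of_nonneg_right hsumle hx8pos.le
    _ = (|x - xh| + |y - yh|/x^3) * (x^8*(1 + 4*x)) := by ring
    _ ≤ (|x - xh| + |y - yh|/x^3) * (XIA θA θB x y)^8 :=
        mul_le_mul_of_nonneg_left hX8low hDel0
end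

section
/- Let Φ be of the form (IA). There exists δ > 0 and constants C > 0 such that for all sufficiently small x > 0 and all x̂, ŷ with 0 < x ≤ δ, |y| ≤ x^N, |x − x̂| ≤ x⁸ and x^(−3)|y − ŷ| ≤ x⁸, writing (X,Y) = Φ(x,y) and (X̂,Ŷ) = Φ(x̂,ŷ), one has |X − X̂| + X^(−3)|Y − Ŷ| ≤ (1 + 2x + Cx²)·(|x − x̂| + x^(−3)|y − ŷ|) and X^(−8) ≤ x^(−8)(1 − 8x + Cx²). -/
open Set Filter Asymptotics Topology

private lemma abs_add5 (a b c d e : ℝ) :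
    |a + b + c + d + e| ≤ |a| + |b| + |c| + |d| + |e| := by
  have h1 := abs_add_three (a + b + c) d e
  have h2 := abs_add_three a b c
  linarith

private lemma abs_add4 (a b c d : ℝ) : |a + b + c + d| ≤ |a| + |b| + |c| + |d| := by
  have h1 := abs_add_le (a + b + c) d
  have h2 := abs_add_three a b c
  linarith

private lemma pow_succ_sub_le (m : ℕ) {c u v : ℝ} (hv : 0 ≤ v) (hvu : v ≤ u) (huc : u ≤ c) :
    u ^ (m + 1) - v ^ (m + 1) ≤ ((m : ℝ) + 1) * c ^ m * (u - v) := by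
  induction m with
  | zero => simp
  | succ k ih =>
    have hu : 0 ≤ u := hv.trans hvu
    have hc : 0 ≤ c := hu.trans huc
    have h2 : v ^ (k + 1) ≤ c ^ (k + 1) := pow_le_pow_left₀ hv (hvu.trans huc) _
    have h4 : 0 ≤ u - v := by linarith
    have h7 : 0 ≤ u ^ (k + 1) - v ^ (k + 1) := sub_nonneg.2 (pow_le_pow_left₀ hv hvu _)
    have h6 : u * (u ^ (k + 1) - v ^ (k + 1)) ≤ c * (((k : ℝ) + 1) * c ^ k * (u - v)) :=
      mul_le_mul huc ih h7 hc
    have h8 : (u - v) * v ^ (k + 1) ≤ (u - v) * c ^ (k + 1) :=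
      mul_le_mul_of_nonneg_left h2 h4
    push_cast
    calc u ^ (k + 1 + 1) - v ^ (k + 1 + 1)
        = u * (u ^ (k + 1) - v ^ (k + 1)) + (u - v) * v ^ (k + 1) := by ring
      _ ≤ c * (((k:ℝ) + 1) * c ^ k * (u - v)) + (u - v) * c ^ (k + 1) := add_le_add h6 h8
      _ = ((k:ℝ) + 1 + 1) * c ^ (k + 1) * (u - v) := by ring

private lemma abs_pow_sub_pow_le' {x xh : ℝ} (n : ℕ) (hx : 0 ≤ x) (hxh : 0 ≤ xh)
    (h2 : xh ≤ 2 * x) :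
    |x ^ (n + 1) - xh ^ (n + 1)| ≤ ((n : ℝ) + 1) * (2 * x) ^ n * |x - xh| := by
  have hco : (0:ℝ) ≤ ((n : ℝ) + 1) * (2 * x) ^ n :=
    mul_nonneg (by positivity) (pow_nonneg (by linarith) n)
  rcases le_total xh x with hc | hc
  · rw [abs_of_nonneg (sub_nonneg.2 (pow_le_pow_left₀ hxh hc _))]
    exact (pow_succ_sub_le n hxh hc (by linarith)).trans
      (mul_le_mul_of_nonneg_left (le_abs_self _) hco)
  · rw [abs_sub_comm, abs_of_nonneg (sub_nonneg.2 (pow_le_pow_left₀ hx hc _))]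
    refine (pow_succ_sub_le n hx hc h2).trans ?_
    have hle : xh - x ≤ |x - xh| := by rw [abs_sub_comm]; exact le_abs_self _
    exact mul_le_mul_of_nonneg_left hle hco

private lemma theta_props (θ : ℝ × ℝ → ℝ) (V : Set (ℝ × ℝ)) (hV : V ∈ nhds (0:ℝ×ℝ))
    (hθ : ContDiffOn ℝ (⊤ : ℕ∞) θ V) :
    ∃ r > (0:ℝ), ∃ M : ℝ, 1 ≤ M ∧ (∀ p ∈ Metric.closedBall (0:ℝ×ℝ) r, |θ p| ≤ M) ∧
      ∀ a b a' b' : ℝ, (a, b) ∈ Metric.closedBall (0:ℝ×ℝ) r →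
        (a', b') ∈ Metric.closedBall (0:ℝ×ℝ) r →
        |θ (a, b) - θ (a', b')| ≤ M * (|a - a'| + |b - b'|) := by
  have h1 : ContDiffAt ℝ 1 θ 0 := (hθ.contDiffAt hV).of_le (by exact_mod_cast le_top)
  obtain ⟨K, t, ht, hK⟩ := h1.exists_lipschitzOnWith
  obtain ⟨r, hr, hsub⟩ := Metric.nhds_basis_closedBall.mem_iff.mp ht
  have hK0 : (0:ℝ) ≤ (K:ℝ) := K.2
  refine ⟨r, hr, (K:ℝ) + |θ 0| + (K:ℝ) * r + 1,
    by nlinarith [abs_nonneg (θ 0), mul_nonneg hK0 hr.le], ?_, ?_⟩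
  · intro p hp
    have h0 : (0:ℝ×ℝ) ∈ Metric.closedBall (0:ℝ×ℝ) r := Metric.mem_closedBall_self hr.le
    have hd := hK.dist_le_mul p (hsub hp) 0 (hsub h0)
    have hpr : dist p 0 ≤ r := Metric.mem_closedBall.mp hp
    have hd2 : |θ p - θ 0| ≤ (K:ℝ) * r := by
      rw [← Real.dist_eq]
      exact hd.trans (mul_le_mul_of_nonneg_left hpr hK0)
    have := abs_sub_abs_le_abs_sub (θ p) (θ 0)
    linarith [abs_nonneg (θ 0)]
  · intro a b a' b' hp hq
    have hd := hK.dist_le_mul (a, b) (hsub hp) (a', b') (hsub hq)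
    have hdd : dist ((a,b) : ℝ × ℝ) (a', b') ≤ |a - a'| + |b - b'| := by
      rw [Prod.dist_eq]
      simp only [Real.dist_eq]
      exact max_le (le_add_of_nonneg_right (abs_nonneg _))
        (le_add_of_nonneg_left (abs_nonneg _))
    calc |θ (a, b) - θ (a', b')| = dist (θ (a, b)) (θ (a', b')) := (Real.dist_eq _ _).symm
      _ ≤ (K:ℝ) * dist ((a,b) : ℝ×ℝ) (a',b') := hd
      _ ≤ (K:ℝ) * (|a - a'| + |b - b'|) := mul_le_mul_of_nonneg_left hdd hK0
      _ ≤ ((K:ℝ) + |θ 0| + (K:ℝ) * r + 1) * (|a - a'| + |b - b'|) := by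
          apply mul_le_mul_of_nonneg_right _ (by positivity)
          have : (0:ℝ) ≤ (K:ℝ) * r := mul_nonneg hK0 hr.le
          linarith [abs_nonneg (θ 0)]

set_option maxHeartbeats 2000000

/-- For `Φ` of the form (IA) there exist `δ > 0` and `C > 0` such
that for `0 < x ≤ δ`, `|y| ≤ xᴺ`, `|x - x̂| ≤ x⁸` and `x⁻³|y - ŷ| ≤ x⁸`, writing
`(X,Y) = Φ(x,y)` and `(X̂,Ŷ) = Φ(x̂,ŷ)`, one has
`|X - X̂| + X⁻³|Y - Ŷ| ≤ (1 + 2x + Cx²)(|x - x̂| + x⁻³|y - ŷ|)` and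
`X⁻⁸ ≤ x⁻⁸(1 - 8x + Cx²)`. -/
theorem shadowing_estimates
    (θA θB θC θD θE : ℝ × ℝ → ℝ) (V : Set (ℝ × ℝ)) (hV : V ∈ 𝓝 (0 : ℝ × ℝ))
    (hθA : ContDiffOn ℝ (⊤ : ℕ∞) θA V) (hθB : ContDiffOn ℝ (⊤ : ℕ∞) θB V)
    (hθC : ContDiffOn ℝ (⊤ : ℕ∞) θC V) (hθD : ContDiffOn ℝ (⊤ : ℕ∞) θD V)
    (hθE : ContDiffOn ℝ (⊤ : ℕ∞) θE V)
    (lam : ℝ) (hlam : 0 < lam) (N : ℕ) (hN : 100 ≤ N)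
    :
    ∃ δ > (0 : ℝ), ∃ C > (0 : ℝ), ∀ x y xh yh : ℝ,
      0 < x → x ≤ δ → |y| ≤ x ^ N →
      |x - xh| ≤ x ^ 8 → |y - yh| / x ^ 3 ≤ x ^ 8 →
      |XIA θA θB x y - XIA θA θB xh yh|
          + |YIA θC θD θE lam N x y - YIA θC θD θE lam N xh yh| / (XIA θA θB x y) ^ 3
        ≤ (1 + 2 * x + C * x ^ 2) * (|x - xh| + |y - yh| / x ^ 3) ∧
      ((XIA θA θB x y) ^ 8)⁻¹ ≤ (x ^ 8)⁻¹ * (1 - 8 * x + C * x ^ 2) := by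
  obtain ⟨rA, hrA, MA, hMA1, hbA, hlA⟩ := theta_props θA V hV hθA
  obtain ⟨rB, hrB, MB, hMB1, hbB, hlB⟩ := theta_props θB V hV hθB
  obtain ⟨rC, hrC, MC, hMC1, hbC, hlC⟩ := theta_props θC V hV hθC
  obtain ⟨rD, hrD, MD, hMD1, hbD, hlD⟩ := theta_props θD V hV hθD
  obtain ⟨rE, hrE, ME, hME1, hbE, hlE⟩ := theta_props θE V hV hθE
  obtain ⟨M, hMdef⟩ : ∃ M : ℝ, M = MA + MB + MC + MD + ME := ⟨_, rfl⟩
  obtain ⟨r, hrdef⟩ : ∃ r : ℝ, r = min rA (min rB (min rC (min rD rE))) := ⟨_, rfl⟩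
  obtain ⟨cN, hcNdef⟩ : ∃ cN : ℝ, cN = ((N:ℝ) + 100) * 2 ^ (N + 99) := ⟨_, rfl⟩
  obtain ⟨C2, hC2def⟩ : ∃ C2 : ℝ, C2 = lam + 9 * M + cN * M + 2 ^ (N + 100) * M := ⟨_, rfl⟩
  obtain ⟨C, hCdef⟩ : ∃ C : ℝ, C = 1 + 17 * M + C2 + (16 * M + 65) := ⟨_, rfl⟩
  have hM1 : (1:ℝ) ≤ M := by rw [hMdef]; linarith
  have hM0 : (0:ℝ) ≤ M := by linarith
  have hMA' : MA ≤ M := by rw [hMdef]; linarith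
  have hMB' : MB ≤ M := by rw [hMdef]; linarith
  have hMC' : MC ≤ M := by rw [hMdef]; linarith
  have hMD' : MD ≤ M := by rw [hMdef]; linarith
  have hME' : ME ≤ M := by rw [hMdef]; linarith
  have hr0 : 0 < r := by
    rw [hrdef]; exact lt_min hrA (lt_min hrB (lt_min hrC (lt_min hrD hrE)))
  have hrA' : r ≤ rA := by rw [hrdef]; exact min_le_left _ _
  have hrB' : r ≤ rB := by
    rw [hrdef]; exact (min_le_right _ _).trans (min_le_left _ _)
  have hrC' : r ≤ rC := by
    rw [hrdef]; exact (min_le_right _ _).trans ((min_le_right _ _).trans (min_le_left _ _))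
  have hrD' : r ≤ rD := by
    rw [hrdef]
    exact (min_le_right _ _).trans ((min_le_right _ _).trans
      ((min_le_right _ _).trans (min_le_left _ _)))
  have hrE' : r ≤ rE := by
    rw [hrdef]
    exact (min_le_right _ _).trans ((min_le_right _ _).trans
      ((min_le_right _ _).trans (min_le_right _ _)))
  have h2N : (0:ℝ) < 2 ^ (N + 100) := by positivity
  have h2N9 : (0:ℝ) < 2 ^ (N + 99) := by positivity
  have hcN0 : (0:ℝ) ≤ cN := by rw [hcNdef]; positivity
  have hC20 : 0 < C2 := by
    rw [hC2def]
    nlinarith [mul_nonneg hcN0 hM0, mul_nonneg h2N.le hM0]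
  have hC0 : 0 < C := by rw [hCdef]; linarith
  refine ⟨min (min (1/2) (r/2))
      (min (min (lam/(2*M)) (1/lam)) (min (1/(4*M)) (1/(16*C*M)))), ?_, C, hC0, ?_⟩
  · refine lt_min (lt_min one_half_pos (half_pos hr0)) (lt_min (lt_min ?_ ?_) (lt_min ?_ ?_))
    · exact div_pos hlam (by linarith)
    · positivity
    · exact div_pos one_pos (by linarith)
    · exact div_pos one_pos (by nlinarith [hC0, hM1])
  intro x y xh yh hx hxd hy ha hb
  -- smallness conditions
  have hd1 : x ≤ 1/2 := hxd.trans ((min_le_left _ _).trans (min_le_left _ _))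
  have hx1 : x ≤ 1 := by linarith
  have hdr : 2*x ≤ r := by
    have := hxd.trans ((min_le_left _ _).trans (min_le_right _ _)); linarith
  have hd3 : 2*M*x ≤ lam := by
    have h := hxd.trans ((min_le_right _ _).trans ((min_le_left _ _).trans (min_le_left _ _)))
    rw [le_div_iff₀ (by linarith : (0:ℝ) < 2*M)] at h
    calc 2*M*x = x*(2*M) := by ring
      _ ≤ lam := h
  have hd4 : lam*x ≤ 1 := by
    have h := hxd.trans ((min_le_right _ _).trans ((min_le_left _ _).trans (min_le_right _ _)))
    rw [le_div_iff₀ hlam] at h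
    calc lam*x = x*lam := by ring
      _ ≤ 1 := h
  have hd5 : 4*M*x ≤ 1 := by
    have h := hxd.trans ((min_le_right _ _).trans ((min_le_right _ _).trans (min_le_left _ _)))
    rw [le_div_iff₀ (by linarith : (0:ℝ) < 4*M)] at h
    calc 4*M*x = x*(4*M) := by ring
      _ ≤ 1 := h
  have hd7 : 16*C*M*x ≤ 1 := by
    have h := hxd.trans ((min_le_right _ _).trans ((min_le_right _ _).trans (min_le_right _ _)))
    rw [le_div_iff₀ (by nlinarith [hC0, hM1] : (0:ℝ) < 16*C*M)] at h
    calc 16*C*M*x = x*(16*C*M) := by ring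
      _ ≤ 1 := h
  -- basic facts about x, xh, y, yh
  have hA0 : (0:ℝ) ≤ |x - xh| := abs_nonneg _
  have hB0 : (0:ℝ) ≤ |y - yh| := abs_nonneg _
  have hE0 : (0:ℝ) ≤ |y - yh| / x^3 := by positivity
  have hbe : |y - yh| = x^3 * (|y - yh| / x^3) := by field_simp
  have hx3le : x^3 ≤ x := by
    calc x^3 ≤ x^1 := pow_le_pow_of_le_one hx.le hx1 (by norm_num)
      _ = x := pow_one x
  have hx5le : x^5 ≤ x := by
    calc x^5 ≤ x^1 := pow_le_pow_of_le_one hx.le hx1 (by norm_num)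
      _ = x := pow_one x
  have hx8le : x^8 ≤ x := by
    calc x^8 ≤ x^1 := pow_le_pow_of_le_one hx.le hx1 (by norm_num)
      _ = x := pow_one x
  have hx82 : x^8 ≤ x^2 := pow_le_pow_of_le_one hx.le hx1 (by norm_num)
  have hxh0 : 0 ≤ xh := by have h := (abs_le.mp ha).2; linarith
  have hxh2 : xh ≤ 2*x := by have h := (abs_le.mp ha).1; linarith
  have hyN3 : |y| ≤ x^3 := hy.trans (pow_le_pow_of_le_one hx.le hx1 (by omega))
  have hyN2 : |y| ≤ x^2 := hy.trans (pow_le_pow_of_le_one hx.le hx1 (by omega))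
  have hyN11 : |y| ≤ x^11 := hy.trans (pow_le_pow_of_le_one hx.le hx1 (by omega))
  have hbx : |y - yh| ≤ x^11 := by
    calc |y - yh| = x^3 * (|y - yh| / x^3) := hbe
      _ ≤ x^3 * x^8 := mul_le_mul_of_nonneg_left hb (by positivity)
      _ = x^11 := by ring
  have hx6 : 2*x^6 ≤ 1 := by
    have h6 := pow_le_pow_left₀ hx.le hd1 6
    norm_num at h6
    linarith
  have hyh5 : |yh| ≤ x^5 := by
    have h := abs_sub_abs_le_abs_sub yh y
    rw [abs_sub_comm] at h
    have h2 : x^5 * (2*x^6) ≤ x^5 * 1 := mul_le_mul_of_nonneg_left hx6 (pow_nonneg hx.le 5)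
    have h3 : x^5 * (2*x^6) = 2*x^11 := by ring
    linarith
  -- membership in the balls
  have hxr : x ≤ r := by linarith
  have hp : ((x,y) : ℝ×ℝ) ∈ Metric.closedBall (0:ℝ×ℝ) r := by
    rw [Metric.mem_closedBall, Prod.dist_eq]
    simp only [Real.dist_eq, Prod.fst_zero, Prod.snd_zero, sub_zero]
    exact max_le (by rw [abs_of_pos hx]; exact hxr) (by linarith)
  have hq : ((xh,yh) : ℝ×ℝ) ∈ Metric.closedBall (0:ℝ×ℝ) r := by
    rw [Metric.mem_closedBall, Prod.dist_eq]
    simp only [Real.dist_eq, Prod.fst_zero, Prod.snd_zero, sub_zero]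
    refine max_le (by rw [abs_of_nonneg hxh0]; linarith) (by linarith)
  -- bounds on the θ's at the two points
  have hbA' : |θA (x,y)| ≤ M :=
    le_trans (hbA _ (Metric.closedBall_subset_closedBall hrA' hp)) hMA'
  have hbB' : |θB (x,y)| ≤ M :=
    le_trans (hbB _ (Metric.closedBall_subset_closedBall hrB' hp)) hMB'
  have hbC' : |θC (x,y)| ≤ M :=
    le_trans (hbC _ (Metric.closedBall_subset_closedBall hrC' hp)) hMC'
  have hbD' : |θD (x,y)| ≤ M :=
    le_trans (hbD _ (Metric.closedBall_subset_closedBall hrD' hp)) hMD'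
  have hbE' : |θE (x,y)| ≤ M :=
    le_trans (hbE _ (Metric.closedBall_subset_closedBall hrE' hp)) hME'
  have hAB0 : (0:ℝ) ≤ |x - xh| + |y - yh| := by linarith
  have hlA' : |θA (x,y) - θA (xh,yh)| ≤ M * (|x - xh| + |y - yh|) :=
    le_trans (hlA x y xh yh (Metric.closedBall_subset_closedBall hrA' hp)
      (Metric.closedBall_subset_closedBall hrA' hq))
      (mul_le_mul_of_nonneg_right hMA' hAB0)
  have hlB' : |θB (x,y) - θB (xh,yh)| ≤ M * (|x - xh| + |y - yh|) :=
    le_trans (hlB x y xh yh (Metric.closedBall_subset_closedBall hrB' hp)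
      (Metric.closedBall_subset_closedBall hrB' hq))
      (mul_le_mul_of_nonneg_right hMB' hAB0)
  have hlC' : |θC (x,y) - θC (xh,yh)| ≤ M * (|x - xh| + |y - yh|) :=
    le_trans (hlC x y xh yh (Metric.closedBall_subset_closedBall hrC' hp)
      (Metric.closedBall_subset_closedBall hrC' hq))
      (mul_le_mul_of_nonneg_right hMC' hAB0)
  have hlD' : |θD (x,y) - θD (xh,yh)| ≤ M * (|x - xh| + |y - yh|) :=
    le_trans (hlD x y xh yh (Metric.closedBall_subset_closedBall hrD' hp)
      (Metric.closedBall_subset_closedBall hrD' hq))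
      (mul_le_mul_of_nonneg_right hMD' hAB0)
  have hlE' : |θE (x,y) - θE (xh,yh)| ≤ M * (|x - xh| + |y - yh|) :=
    le_trans (hlE x y xh yh (Metric.closedBall_subset_closedBall hrE' hp)
      (Metric.closedBall_subset_closedBall hrE' hq))
      (mul_le_mul_of_nonneg_right hME' hAB0)
  have hx3le2 : x^3 ≤ x^2 := pow_le_pow_of_le_one hx.le hx1 (by norm_num)
  have hx5le2 : x^5 ≤ x^2 := pow_le_pow_of_le_one hx.le hx1 (by norm_num)
  have hx51 : x^5 ≤ 1 := hx5le.trans hx1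
  have hx21 : x^2 ≤ 1 := by calc x^2 ≤ x^1 := pow_le_pow_of_le_one hx.le hx1 (by norm_num)
                              _ = x := pow_one x
                              _ ≤ 1 := hx1
  have hE0' : (0:ℝ) ≤ x^2*(|y - yh|/x^3) := by positivity
  have hDle : |x - xh| + |y - yh| ≤ |x - xh| + |y - yh|/x^3 := by
    have h1 : x^3*(|y - yh|/x^3) ≤ 1*(|y - yh|/x^3) :=
      mul_le_mul_of_nonneg_right (hx3le.trans hx1) hE0
    linarith [hbe]
  have hBle : |y - yh| ≤ x^2*(|y - yh|/x^3) := by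
    have h1 : x^3*(|y - yh|/x^3) ≤ x^2*(|y - yh|/x^3) :=
      mul_le_mul_of_nonneg_right hx3le2 hE0
    linarith [hbe]
  -- X difference
  have hXd : XIA θA θB x y - XIA θA θB xh yh
      = (x - xh) * (1 + (x + xh)) + (x^3 - xh^3) * θA (x,y)
        + xh^3 * (θA (x,y) - θA (xh,yh)) + (y - yh) * θB (x,y)
        + yh * (θB (x,y) - θB (xh,yh)) := by
    simp only [XIA]; ring
  have t1 : |(x - xh) * (1 + (x + xh))| ≤ (1 + 2*x + x^2) * |x - xh| := by
    rw [abs_mul, abs_of_nonneg (by linarith : (0:ℝ) ≤ 1 + (x + xh))]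
    have hs : 1 + (x + xh) ≤ 1 + 2*x + x^2 := by
      have h := (abs_le.mp ha).1
      linarith
    calc |x - xh| * (1 + (x + xh)) ≤ |x - xh| * (1 + 2*x + x^2) :=
          mul_le_mul_of_nonneg_left hs hA0
      _ = (1 + 2*x + x^2) * |x - xh| := by ring
  have t2 : |(x^3 - xh^3) * θA (x,y)| ≤ 7*x^2*|x - xh| *M := by
    rw [abs_mul]
    have e0 : x^3 - xh^3 = (x - xh) * (x^2 + x*xh + xh^2) := by ring
    have epos : (0:ℝ) ≤ x^2 + x*xh + xh^2 := by positivity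
    have ebd : x^2 + x*xh + xh^2 ≤ 7*x^2 := by
      have e1 : x*xh ≤ x*(2*x) := mul_le_mul_of_nonneg_left hxh2 hx.le
      have e2 : xh^2 ≤ (2*x)^2 := pow_le_pow_left₀ hxh0 hxh2 2
      have e3 : (2*x)^2 = 4*x^2 := by ring
      linarith
    have e4 : |x^3 - xh^3| ≤ |x - xh| * (7*x^2) := by
      rw [e0, abs_mul, abs_of_nonneg epos]
      exact mul_le_mul_of_nonneg_left ebd hA0
    calc |x^3 - xh^3| * |θA (x,y)| ≤ (|x - xh| * (7*x^2)) * M :=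
        mul_le_mul e4 hbA' (abs_nonneg _) (by positivity)
      _ = 7*x^2*|x - xh| *M := by ring
  have t3 : |xh^3 * (θA (x,y) - θA (xh,yh))| ≤ 8*x^3 * (M * (|x - xh| + |y - yh|)) := by
    rw [abs_mul, abs_of_nonneg (pow_nonneg hxh0 3)]
    have e1 : xh^3 ≤ 8*x^3 := by
      have e2 := pow_le_pow_left₀ hxh0 hxh2 3
      have e3 : (2*x)^3 = 8*x^3 := by ring
      linarith
    exact mul_le_mul e1 hlA' (abs_nonneg _) (by positivity)
  have t4 : |(y - yh) * θB (x,y)| ≤ |y - yh| * M := by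
    rw [abs_mul]; exact mul_le_mul_of_nonneg_left hbB' hB0
  have t5 : |yh * (θB (x,y) - θB (xh,yh))| ≤ x^5 * (M * (|x - xh| + |y - yh|)) := by
    rw [abs_mul]; exact mul_le_mul hyh5 hlB' (abs_nonneg _) (by positivity)
  have hMAB : M*(|x - xh| + |y - yh|) ≤ M*(|x - xh| + |y - yh|/x^3) :=
    mul_le_mul_of_nonneg_left hDle hM0
  have hMS0 : (0:ℝ) ≤ M*(|x - xh| + |y - yh|/x^3) := mul_nonneg hM0 (by linarith)
  have hX : |XIA θA θB x y - XIA θA θB xh yh|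
      ≤ (1 + 2*x)*|x - xh| + (1 + 17*M)*(x^2*(|x - xh| + |y - yh|/x^3)) := by
    rw [hXd]
    refine (abs_add5 _ _ _ _ _).trans ?_
    have m1 : 8*(x^3 * (M * (|x - xh| + |y - yh|))) ≤ 8*(x^2*(M*(|x - xh| + |y - yh|/x^3))) := by
      have a1 : x^3 * (M * (|x - xh| + |y - yh|)) ≤ x^3*(M*(|x - xh| + |y - yh|/x^3)) :=
        mul_le_mul_of_nonneg_left hMAB (pow_nonneg hx.le 3)
      have a2 : x^3*(M*(|x - xh| + |y - yh|/x^3)) ≤ x^2*(M*(|x - xh| + |y - yh|/x^3)) :=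
        mul_le_mul_of_nonneg_right hx3le2 hMS0
      linarith
    have m2 : x^5 * (M * (|x - xh| + |y - yh|)) ≤ x^2*(M*(|x - xh| + |y - yh|/x^3)) := by
      have a1 : x^5 * (M * (|x - xh| + |y - yh|)) ≤ x^5*(M*(|x - xh| + |y - yh|/x^3)) :=
        mul_le_mul_of_nonneg_left hMAB (pow_nonneg hx.le 5)
      have a2 : x^5*(M*(|x - xh| + |y - yh|/x^3)) ≤ x^2*(M*(|x - xh| + |y - yh|/x^3)) :=
        mul_le_mul_of_nonneg_right hx5le2 hMS0
      linarith
    have m3 : |y - yh| * M ≤ x^2*(M*(|x - xh| + |y - yh|/x^3)) := by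
      have a1 : |y - yh| *M ≤ (x^2*(|y - yh|/x^3))*M := mul_le_mul_of_nonneg_right hBle hM0
      have a2 : (0:ℝ) ≤ M*(x^2*|x - xh|) := mul_nonneg hM0 (mul_nonneg (pow_nonneg hx.le 2) hA0)
      linarith
    have m4 : 7*x^2*|x - xh| *M ≤ 7*(x^2*(M*(|x - xh| + |y - yh|/x^3))) := by
      have a2 : (0:ℝ) ≤ M*(x^2*(|y - yh|/x^3)) := mul_nonneg hM0 hE0'
      linarith
    have m5 : (0:ℝ) ≤ x^2*(|y - yh|/x^3) := hE0'
    linarith [t1, t2, t3, t4, t5]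
  -- the factor F
  obtain ⟨F, hFdef⟩ : ∃ F : ℝ, F = 1 - lam*x + y*θC (x,y) + x^2*θD (x,y) := ⟨_, rfl⟩
  obtain ⟨F2, hF2def⟩ : ∃ F2 : ℝ, F2 = 1 - lam*xh + yh*θC (xh,yh) + xh^2*θD (xh,yh) := ⟨_, rfl⟩
  have hFd : F - F2 = -(lam*(x - xh)) + (y - yh)*θC (x,y) + yh*(θC (x,y) - θC (xh,yh))
      + (x^2 - xh^2)*θD (x,y) + xh^2*(θD (x,y) - θD (xh,yh)) := by
    rw [hFdef, hF2def]; ring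
  have s1 : |(-(lam*(x - xh)))| ≤ lam* |x - xh| := by
    rw [abs_neg, abs_mul, abs_of_pos hlam]
  have s2 : |(y - yh)*θC (x,y)| ≤ |y - yh| * M := by
    rw [abs_mul]; exact mul_le_mul_of_nonneg_left hbC' hB0
  have s3 : |yh*(θC (x,y) - θC (xh,yh))| ≤ x^5 * (M*(|x - xh| + |y - yh|)) := by
    rw [abs_mul]; exact mul_le_mul hyh5 hlC' (abs_nonneg _) (by positivity)
  have s4 : |(x^2 - xh^2)*θD (x,y)| ≤ 3*x* |x - xh| * M := by
    rw [abs_mul]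
    have e0 : x^2 - xh^2 = (x - xh)*(x + xh) := by ring
    have e4 : |x^2 - xh^2| ≤ |x - xh| * (3*x) := by
      rw [e0, abs_mul, abs_of_nonneg (by linarith : (0:ℝ) ≤ x + xh)]
      exact mul_le_mul_of_nonneg_left (by linarith) hA0
    calc |x^2 - xh^2| * |θD (x,y)| ≤ (|x - xh| * (3*x)) * M :=
        mul_le_mul e4 hbD' (abs_nonneg _) (by positivity)
      _ = 3*x* |x - xh| * M := by ring
  have s5 : |xh^2*(θD (x,y) - θD (xh,yh))| ≤ 4*x^2 * (M*(|x - xh| + |y - yh|)) := by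
    rw [abs_mul, abs_of_nonneg (pow_nonneg hxh0 2)]
    have e1 : xh^2 ≤ 4*x^2 := by
      have e2 := pow_le_pow_left₀ hxh0 hxh2 2
      have e3 : (2*x)^2 = 4*x^2 := by ring
      linarith
    exact mul_le_mul e1 hlD' (abs_nonneg _) (by positivity)
  have hMAB0 : (0:ℝ) ≤ M*(|x - xh| + |y - yh|) := mul_nonneg hM0 hAB0
  have hFlip : |F - F2| ≤ (lam + 9*M)*(|x - xh| + |y - yh|) := by
    rw [hFd]
    refine (abs_add5 _ _ _ _ _).trans ?_
    have v1 : (0:ℝ) ≤ lam* |y - yh| := mul_nonneg hlam.le hB0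
    have v2 : (0:ℝ) ≤ M* |x - xh| := mul_nonneg hM0 hA0
    have v6 : (0:ℝ) ≤ M* |y - yh| := mul_nonneg hM0 hB0
    have v3 : x^5*(M*(|x - xh| + |y - yh|)) ≤ 1*(M*(|x - xh| + |y - yh|)) :=
      mul_le_mul_of_nonneg_right hx51 hMAB0
    have v4 : x* |x - xh| ≤ 1* |x - xh| := mul_le_mul_of_nonneg_right hx1 hA0
    have v4' := mul_le_mul_of_nonneg_right v4 hM0
    have v5 : x^2*(M*(|x - xh| + |y - yh|)) ≤ 1*(M*(|x - xh| + |y - yh|)) :=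
      mul_le_mul_of_nonneg_right hx21 hMAB0
    linarith [s1, s2, s3, s4, s5]
  have hyhF : |yh*(F - F2)| ≤ x^5*((lam + 9*M)*(|x - xh| + |y - yh|)) := by
    rw [abs_mul]
    exact mul_le_mul hyh5 hFlip (abs_nonneg _) (by positivity)
  have hFle1 : |F| ≤ 1 := by
    rw [hFdef]
    have w1 : |y*θC (x,y)| ≤ x^2*M := by
      rw [abs_mul]; exact mul_le_mul hyN2 hbC' (abs_nonneg _) (pow_nonneg hx.le 2)
    have w2 : |x^2*θD (x,y)| ≤ x^2*M := by
      rw [abs_mul, abs_of_nonneg (pow_nonneg hx.le 2)]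
      exact mul_le_mul_of_nonneg_left hbD' (pow_nonneg hx.le 2)
    have w3 : 2*M*x*x ≤ lam*x := mul_le_mul_of_nonneg_right hd3 hx.le
    have n1 := neg_abs_le (y*θC (x,y))
    have n2 := neg_abs_le (x^2*θD (x,y))
    have n3 := le_abs_self (y*θC (x,y))
    have n4 := le_abs_self (x^2*θD (x,y))
    rw [abs_le]
    constructor
    · linarith
    · linarith
  have hpowdiff : |x^(N+100) - xh^(N+100)| ≤ cN * x^5 * |x - xh| := by
    have key := abs_pow_sub_pow_le' (N+99) hx.le hxh0 hxh2
    rw [show N + 99 + 1 = N + 100 by omega] at key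
    have hc1 : ((N + 99 : ℕ) : ℝ) + 1 = (N:ℝ) + 100 := by push_cast; ring
    rw [hc1] at key
    have hmp : (2*x)^(N+99) = 2^(N+99)*x^(N+99) := mul_pow 2 x (N+99)
    rw [hmp] at key
    have hg1 : 2^(N+99)*x^(N+99) ≤ 2^(N+99)*x^5 :=
      mul_le_mul_of_nonneg_left (pow_le_pow_of_le_one hx.le hx1 (by omega)) (by positivity)
    have hg2 : ((N:ℝ)+100)*(2^(N+99)*x^(N+99)) ≤ ((N:ℝ)+100)*(2^(N+99)*x^5) :=
      mul_le_mul_of_nonneg_left hg1 (by positivity)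
    have hg3 : ((N:ℝ)+100)*(2^(N+99)*x^(N+99)) * |x - xh|
        ≤ (((N:ℝ)+100)*(2^(N+99)*x^5)) * |x - xh| :=
      mul_le_mul_of_nonneg_right hg2 hA0
    refine key.trans (hg3.trans ?_)
    rw [hcNdef]
    apply le_of_eq
    ring
  have hxhpow : xh^(N+100) ≤ 2^(N+100)*x^5 := by
    calc xh^(N+100) ≤ (2*x)^(N+100) := pow_le_pow_left₀ hxh0 hxh2 _
      _ = 2^(N+100)*x^(N+100) := mul_pow 2 x _
      _ ≤ 2^(N+100)*x^5 :=
        mul_le_mul_of_nonneg_left (pow_le_pow_of_le_one hx.le hx1 (by omega)) (by positivity)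
  have hYd : YIA θC θD θE lam N x y - YIA θC θD θE lam N xh yh
      = -((y - yh)*F) + -(yh*(F - F2)) + (x^(N+100) - xh^(N+100))*θE (x,y)
        + xh^(N+100)*(θE (x,y) - θE (xh,yh)) := by
    rw [hFdef, hF2def]; simp only [YIA]; ring
  have z1 : |(-((y - yh)*F))| ≤ |y - yh| * 1 := by
    rw [abs_neg, abs_mul]
    exact mul_le_mul_of_nonneg_left hFle1 hB0
  have z2 : |(-(yh*(F - F2)))| ≤ x^5*((lam + 9*M)*(|x - xh| + |y - yh|)) := by
    rw [abs_neg]; exact hyhF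
  have z3 : |(x^(N+100) - xh^(N+100))*θE (x,y)| ≤ cN*x^5* |x - xh| * M := by
    rw [abs_mul]
    refine mul_le_mul hpowdiff hbE' (abs_nonneg _) ?_
    exact mul_nonneg (mul_nonneg hcN0 (pow_nonneg hx.le 5)) hA0
  have z4 : |xh^(N+100)*(θE (x,y) - θE (xh,yh))|
      ≤ (2^(N+100)*x^5)*(M*(|x - xh| + |y - yh|)) := by
    rw [abs_mul, abs_of_nonneg (pow_nonneg hxh0 _)]
    exact mul_le_mul hxhpow hlE' (abs_nonneg _) (by positivity)
  have hY : |YIA θC θD θE lam N x y - YIA θC θD θE lam N xh yh|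
      ≤ x^3*(|y - yh|/x^3) + C2*(x^5*(|x - xh| + |y - yh|/x^3)) := by
    rw [hYd]
    refine (abs_add4 _ _ _ _).trans ?_
    have hLAM0 : (0:ℝ) ≤ lam + 9*M := by linarith
    have g1 : x^5*((lam + 9*M)*(|x - xh| + |y - yh|))
        ≤ (lam + 9*M)*(x^5*(|x - xh| + |y - yh|/x^3)) := by
      have a1 : (lam+9*M)*(|x - xh| + |y - yh|) ≤ (lam+9*M)*(|x - xh| + |y - yh|/x^3) :=
        mul_le_mul_of_nonneg_left hDle hLAM0
      have a2 : x^5*((lam+9*M)*(|x - xh| + |y - yh|))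
          ≤ x^5*((lam+9*M)*(|x - xh| + |y - yh|/x^3)) :=
        mul_le_mul_of_nonneg_left a1 (pow_nonneg hx.le 5)
      linarith
    have g2 : cN*x^5* |x - xh| * M ≤ cN*M*(x^5*(|x - xh| + |y - yh|/x^3)) := by
      have a2 : (0:ℝ) ≤ cN*M*(x^5*(|y - yh|/x^3)) :=
        mul_nonneg (mul_nonneg hcN0 hM0) (by positivity)
      linarith
    have g3 : (2^(N+100)*x^5)*(M*(|x - xh| + |y - yh|))
        ≤ 2^(N+100)*M*(x^5*(|x - xh| + |y - yh|/x^3)) := by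
      have a2 : (2^(N+100)*x^5)*(M*(|x - xh| + |y - yh|))
          ≤ (2^(N+100)*x^5)*(M*(|x - xh| + |y - yh|/x^3)) :=
        mul_le_mul_of_nonneg_left hMAB (by positivity)
      linarith
    have hC2x : C2*(x^5*(|x - xh| + |y - yh|/x^3))
        = (lam + 9*M + cN*M + 2^(N+100)*M)*(x^5*(|x - xh| + |y - yh|/x^3)) := by rw [hC2def]
    linarith [z1, z2, z3, z4, hbe]
  have hYdiv : |YIA θC θD θE lam N x y - YIA θC θD θE lam N xh yh|/x^3
      ≤ |y - yh|/x^3 + C2*(x^2*(|x - xh| + |y - yh|/x^3)) := by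
    rw [div_le_iff₀ (pow_pos hx 3)]
    refine hY.trans ?_
    have e : (|y - yh|/x^3 + C2*(x^2*(|x - xh| + |y - yh|/x^3)))*x^3
        = x^3*(|y - yh|/x^3) + C2*(x^5*(|x - xh| + |y - yh|/x^3)) := by ring
    linarith
  have hXge : x + x^2 - 2*M*x^3 ≤ XIA θA θB x y := by
    have g1 : |x^3*θA (x,y)| ≤ x^3*M := by
      rw [abs_mul, abs_of_nonneg (pow_nonneg hx.le 3)]
      exact mul_le_mul_of_nonneg_left hbA' (pow_nonneg hx.le 3)
    have g2 : |y*θB (x,y)| ≤ x^3*M := by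
      rw [abs_mul]
      exact mul_le_mul hyN3 hbB' (abs_nonneg _) (pow_nonneg hx.le 3)
    have n1 := neg_abs_le (x^3*θA (x,y))
    have n2 := neg_abs_le (y*θB (x,y))
    simp only [XIA]
    linarith
  have hXx : x ≤ XIA θA θB x y := by
    have k := mul_le_mul_of_nonneg_right hd5 (mul_nonneg hx.le hx.le)
    linarith [hXge, mul_nonneg hM0 (pow_nonneg hx.le 3),
      mul_nonneg hM0 (mul_nonneg hx.le (mul_nonneg hx.le hx.le))]
  have hXpos : 0 < XIA θA θB x y := lt_of_lt_of_le hx hXx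
  have hYdivX : |YIA θC θD θE lam N x y - YIA θC θD θE lam N xh yh| / (XIA θA θB x y)^3
      ≤ |YIA θC θD θE lam N x y - YIA θC θD θE lam N xh yh| / x^3 := by
    rw [div_le_div_iff₀ (pow_pos hXpos 3) (pow_pos hx 3)]
    exact mul_le_mul_of_nonneg_left (pow_le_pow_left₀ hx.le hXx 3) (abs_nonneg _)
  constructor
  · have hsum := add_le_add hX (hYdivX.trans hYdiv)
    have hCx : C*(x^2*(|x - xh| + |y - yh|/x^3))
        = (1 + 17*M + C2 + (16*M + 65))*(x^2*(|x - xh| + |y - yh|/x^3)) := by rw [hCdef]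
    have w1 : (0:ℝ) ≤ x*(|y - yh|/x^3) := mul_nonneg hx.le hE0
    have w2 : (0:ℝ) ≤ M*(x^2*(|x - xh| + |y - yh|/x^3)) := mul_nonneg hM0 (by positivity)
    have w3 : (0:ℝ) ≤ x^2*(|x - xh| + |y - yh|/x^3) := by positivity
    have w4 : (0:ℝ) ≤ C2*(x^2*(|x - xh| + |y - yh|/x^3)) := mul_nonneg hC20.le w3
    linarith
  · have ha0 : 0 ≤ x - 2*M*x^2 := by
      have k := mul_le_mul_of_nonneg_right hd5 hx.le
      linarith [mul_nonneg hM0 (mul_nonneg hx.le hx.le)]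
    have hmono : 1 + 8*(x - 2*M*x^2) ≤ (1 + (x - 2*M*x^2))^8 := by
      have h := one_add_mul_le_pow (show (-2:ℝ) ≤ x - 2*M*x^2 by linarith) 8
      push_cast at h
      linarith
    have hbase : x*(1 + (x - 2*M*x^2)) ≤ XIA θA θB x y := by
      have e : x*(1 + (x - 2*M*x^2)) = x + x^2 - 2*M*x^3 := by ring
      rw [e]; exact hXge
    have hX8 : x^8*(1 + 8*(x - 2*M*x^2)) ≤ (XIA θA θB x y)^8 := by
      calc x^8*(1 + 8*(x - 2*M*x^2)) ≤ x^8*(1 + (x - 2*M*x^2))^8 :=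
          mul_le_mul_of_nonneg_left hmono (pow_nonneg hx.le 8)
        _ = (x*(1 + (x - 2*M*x^2)))^8 := by rw [mul_pow]
        _ ≤ (XIA θA θB x y)^8 :=
          pow_le_pow_left₀ (mul_nonneg hx.le (by linarith)) hbase 8
    have hCge : 16*M + 65 ≤ C := by linarith
    have hkey : 1 ≤ (1 - 8*x + C*x^2)*(1 + 8*(x - 2*M*x^2)) := by
      have k1 : 16*C*M*x*x^3 ≤ 1*x^3 := mul_le_mul_of_nonneg_right hd7 (pow_nonneg hx.le 3)
      have k3 : (16*M + 65)*x^2 ≤ C*x^2 := mul_le_mul_of_nonneg_right hCge (pow_nonneg hx.le 2)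
      have k4 : (0:ℝ) ≤ M*x^3 := mul_nonneg hM0 (pow_nonneg hx.le 3)
      have k5 : (0:ℝ) ≤ C*x^3 := mul_nonneg hC0.le (pow_nonneg hx.le 3)
      have k6 : (0:ℝ) ≤ x^2 := pow_nonneg hx.le 2
      linarith [hx3le2]
    have h8pos : 0 < 1 + 8*(x - 2*M*x^2) := by linarith
    have hinv : (1 + 8*(x - 2*M*x^2))⁻¹ ≤ 1 - 8*x + C*x^2 := by
      rw [inv_eq_one_div, div_le_iff₀ h8pos]
      linarith
    calc ((XIA θA θB x y)^8)⁻¹ ≤ (x^8*(1 + 8*(x - 2*M*x^2)))⁻¹ :=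
          inv_anti₀ (mul_pos (pow_pos hx 8) h8pos) hX8
      _ = (x^8)⁻¹ * (1 + 8*(x - 2*M*x^2))⁻¹ := by rw [mul_inv]
      _ ≤ (x^8)⁻¹ * (1 - 8*x + C*x^2) :=
          mul_le_mul_of_nonneg_left hinv (inv_nonneg.2 (pow_nonneg hx.le 8))
end

section
/- Let Φ be a C¹ (indeed C^N, N large) local diffeomorphism near the origin in ℝ² of the form Φ(x,y) = (X,Y) with X = x + x² + μxy + O(|(x,y)|³) and Y = −y(1 − λx + O(|(x,y)|²)), where μ ∈ ℝ and λ > 0. Then the second iterate of the inverse map Φ^(−2) has the form (x,y) ↦ (X,Y) with X = x − 2x² + O(|(x,y)|³) and Y = y(1 + 2λx + O(|(x,y)|²)) as (x,y) → 0; in particular the term μxy contributes only O(|(x,y)|³) to Φ^(−2). -/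
open Set Filter Asymptotics Topology

private lemma omul {α : Type*} [NormedAddCommGroup α] {l : Filter α} {f g : α → ℝ} {m n : ℕ}
    (hf : f =O[l] fun q => ‖q‖ ^ m) (hg : g =O[l] fun q => ‖q‖ ^ n) :
    (fun q => f q * g q) =O[l] fun q => ‖q‖ ^ (m + n) := by
  simpa [pow_add] using hf.mul hg

private lemma ofst : (fun q : ℝ × ℝ => q.1) =O[𝓝 (0 : ℝ × ℝ)] fun q => ‖q‖ ^ 1 := by
  rw [isBigO_iff]
  refine ⟨1, Eventually.of_forall fun q => ?_⟩
  simpa using norm_fst_le q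

private lemma osnd : (fun q : ℝ × ℝ => q.2) =O[𝓝 (0 : ℝ × ℝ)] fun q => ‖q‖ ^ 1 := by
  rw [isBigO_iff]
  refine ⟨1, Eventually.of_forall fun q => ?_⟩
  simpa using norm_snd_le q

private lemma hball : ∀ᶠ q : ℝ × ℝ in 𝓝 0, ‖q‖ ≤ 1 := by
  filter_upwards [Metric.ball_mem_nhds (0 : ℝ × ℝ) one_pos] with q hq
  have := Metric.mem_ball.1 hq
  rw [dist_zero_right] at this
  exact this.le

private lemma opowle {m n : ℕ} (h : n ≤ m) :
    (fun q : ℝ × ℝ => ‖q‖ ^ m) =O[𝓝 (0 : ℝ × ℝ)] fun q => ‖q‖ ^ n := by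
  rw [isBigO_iff]
  refine ⟨1, ?_⟩
  filter_upwards [hball] with q hq
  have h0 : (0 : ℝ) ≤ ‖q‖ := norm_nonneg q
  have hle := pow_le_pow_of_le_one h0 hq h
  simp only [norm_pow, norm_norm, one_mul]
  exact hle

private lemma htn {k : ℕ} (hk : 0 < k) :
    Tendsto (fun q : ℝ × ℝ => ‖q‖ ^ k) (𝓝 0) (𝓝 0) := by
  have hc : Continuous fun q : ℝ × ℝ => ‖q‖ ^ k := continuous_norm.pow k
  have := hc.tendsto (0 : ℝ × ℝ)
  simpa [zero_pow hk.ne'] using this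

/-- Let `Φ` be a `C¹` local diffeomorphism near the origin of the
form `X = x + x² + μxy + O(|(x,y)|³)`, `Y = -y(1 - λx + O(|(x,y)|²))`, `λ > 0`, and
let `Ψ` be a local inverse of `Φ` near the origin (so `Φ∘Ψ = Ψ∘Φ = id` near `0`).
Then `Φ⁻² = Ψ∘Ψ` has the form `X = x - 2x² + O(|(x,y)|³)`,
`Y = y(1 + 2λx + O(|(x,y)|²))`; in particular the term `μxy` contributes only
`O(|(x,y)|³)` (the quadratic part of the first component is independent of `μ`). -/
theorem inverse_square_form
    (Φ : ℝ × ℝ → ℝ × ℝ) (U : Set (ℝ × ℝ)) (hU : U ∈ 𝓝 (0 : ℝ × ℝ))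
    (hΦ : ContDiffOn ℝ 1 Φ U)
    (μ lam : ℝ) (hlam : 0 < lam)
    (hX : (fun p : ℝ × ℝ => (Φ p).1 - (p.1 + p.1 ^ 2 + μ * p.1 * p.2))
      =O[𝓝 (0 : ℝ × ℝ)] fun p => ‖p‖ ^ 3)
    (E : ℝ × ℝ → ℝ) (hE : E =O[𝓝 (0 : ℝ × ℝ)] fun p => ‖p‖ ^ 2)
    (hY : ∀ p ∈ U, (Φ p).2 = -p.2 * (1 - lam * p.1 + E p))
    (Ψ : ℝ × ℝ → ℝ × ℝ) (W : Set (ℝ × ℝ)) (hW : W ∈ 𝓝 (0 : ℝ × ℝ)) (hWU : W ⊆ U)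
    (hΨ0 : Ψ 0 = 0) (hΨc : ContinuousOn Ψ W)
    (hinv : ∀ p ∈ W, Φ (Ψ p) = p ∧ Ψ (Φ p) = p) :
    ((fun p : ℝ × ℝ => (Ψ (Ψ p)).1 - (p.1 - 2 * p.1 ^ 2))
        =O[𝓝 (0 : ℝ × ℝ)] fun p => ‖p‖ ^ 3) ∧
    ∃ E₂ : ℝ × ℝ → ℝ, (E₂ =O[𝓝 (0 : ℝ × ℝ)] fun p => ‖p‖ ^ 2) ∧
      ∀ᶠ p : ℝ × ℝ in 𝓝 0, (Ψ (Ψ p)).2 = p.2 * (1 + 2 * lam * p.1 + E₂ p) := by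
  -- basic continuity facts
  have htΨ : Tendsto Ψ (𝓝 0) (𝓝 0) := by
    have h := hΨc.continuousAt hW
    rwa [ContinuousAt, hΨ0] at h
  have htΨΨ : Tendsto (fun p => Ψ (Ψ p)) (𝓝 0) (𝓝 0) := htΨ.comp htΨ
  have hWev : ∀ᶠ p : ℝ × ℝ in 𝓝 0, p ∈ W := hW
  -- `A q = (Φ q).1 - q.1` is `O(‖q‖²)`
  have hA : (fun q : ℝ × ℝ => (Φ q).1 - q.1) =O[𝓝 (0 : ℝ × ℝ)] fun q => ‖q‖ ^ 2 := by
    have heq : (fun q : ℝ × ℝ => (Φ q).1 - q.1)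
        = fun q => ((Φ q).1 - (q.1 + q.1 ^ 2 + μ * q.1 * q.2))
          + (q.1 * q.1 + μ * (q.1 * q.2)) := by
      funext q; ring
    rw [heq]
    exact (hX.trans (opowle (by norm_num))).add
      ((omul ofst ofst).add ((omul ofst osnd).const_mul_left μ))
  -- `B q = (Φ q).2 + q.2` is `O(‖q‖²)`
  have hB : (fun q : ℝ × ℝ => (Φ q).2 + q.2) =O[𝓝 (0 : ℝ × ℝ)] fun q => ‖q‖ ^ 2 := by
    have heq : (fun q : ℝ × ℝ => (Φ q).2 + q.2)
        =ᶠ[𝓝 (0 : ℝ × ℝ)] fun q => lam * (q.1 * q.2) - q.2 * E q := by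
      filter_upwards [hU] with q hq
      rw [hY q hq]; ring
    exact heq.trans_isBigO
      (((omul ofst osnd).const_mul_left lam).sub
        ((omul osnd hE).trans (opowle (by norm_num))))
  -- the fundamental bound `‖Ψ p‖ ≤ 2‖p‖` eventually
  obtain ⟨C₁, hC₁⟩ := isBigO_iff.1 hA
  obtain ⟨C₂, hC₂⟩ := isBigO_iff.1 hB
  set K : ℝ := |C₁| + |C₂| + 1 with hKdef
  have hK : 0 < K := by positivity
  have hqbound : ∀ᶠ q : ℝ × ℝ in 𝓝 0,
      |(Φ q).1 - q.1| ≤ K * ‖q‖ ^ 2 ∧ |(Φ q).2 + q.2| ≤ K * ‖q‖ ^ 2 := by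
    filter_upwards [hC₁, hC₂] with q h1 h2
    have hn : ‖‖q‖ ^ 2‖ = ‖q‖ ^ 2 := by
      simp [abs_of_nonneg (pow_nonneg (norm_nonneg q) 2)]
    rw [hn] at h1 h2
    have hq2 : (0 : ℝ) ≤ ‖q‖ ^ 2 := pow_nonneg (norm_nonneg q) 2
    constructor
    · calc |(Φ q).1 - q.1| = ‖(Φ q).1 - q.1‖ := rfl
        _ ≤ C₁ * ‖q‖ ^ 2 := h1
        _ ≤ K * ‖q‖ ^ 2 := by
            apply mul_le_mul_of_nonneg_right _ hq2
            have := le_abs_self C₁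
            have := abs_nonneg C₂
            simp only [hKdef]; linarith
    · calc |(Φ q).2 + q.2| = ‖(Φ q).2 + q.2‖ := rfl
        _ ≤ C₂ * ‖q‖ ^ 2 := h2
        _ ≤ K * ‖q‖ ^ 2 := by
            apply mul_le_mul_of_nonneg_right _ hq2
            have := le_abs_self C₂
            have := abs_nonneg C₁
            simp only [hKdef]; linarith
  have hsmall : ∀ᶠ q : ℝ × ℝ in 𝓝 0, ‖q‖ ≤ 1 / (2 * K) := by
    filter_upwards [Metric.ball_mem_nhds (0 : ℝ × ℝ) (by positivity : (0:ℝ) < 1 / (2 * K))]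
      with q hq
    have := Metric.mem_ball.1 hq
    rw [dist_zero_right] at this
    exact this.le
  have hΨle : ∀ᶠ p : ℝ × ℝ in 𝓝 0, ‖Ψ p‖ ≤ 2 * ‖p‖ := by
    filter_upwards [hWev, htΨ.eventually hqbound, htΨ.eventually hsmall] with p hpW hq hs
    have hfeq := (hinv p hpW).1
    have h1 : |(Ψ p).1| ≤ ‖p‖ + K * ‖Ψ p‖ ^ 2 := by
      have := hq.1
      have hA1 : (Ψ p).1 = p.1 - ((Φ (Ψ p)).1 - (Ψ p).1) := by rw [hfeq]; ring
      rw [hA1]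
      have hp1 : |p.1| ≤ ‖p‖ := by simpa using norm_fst_le p
      calc |p.1 - ((Φ (Ψ p)).1 - (Ψ p).1)| ≤ |p.1| + |(Φ (Ψ p)).1 - (Ψ p).1| := abs_sub _ _
        _ ≤ ‖p‖ + K * ‖Ψ p‖ ^ 2 := add_le_add hp1 hq.1
    have h2 : |(Ψ p).2| ≤ ‖p‖ + K * ‖Ψ p‖ ^ 2 := by
      have hA2 : (Ψ p).2 = -p.2 + ((Φ (Ψ p)).2 + (Ψ p).2) := by rw [hfeq]; ring
      rw [hA2]
      have hp2 : |p.2| ≤ ‖p‖ := by simpa using norm_snd_le p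
      calc |(-p.2) + ((Φ (Ψ p)).2 + (Ψ p).2)| ≤ |(-p.2)| + |(Φ (Ψ p)).2 + (Ψ p).2| :=
            abs_add_le _ _
        _ ≤ ‖p‖ + K * ‖Ψ p‖ ^ 2 := add_le_add (by simpa using hp2) hq.2
    have hsq : K * ‖Ψ p‖ ^ 2 ≤ ‖Ψ p‖ / 2 := by
      have h0 : (0 : ℝ) ≤ ‖Ψ p‖ := norm_nonneg _
      have hKn : K * ‖Ψ p‖ ≤ 1 / 2 := by
        have hm := mul_le_mul_of_nonneg_left hs hK.le
        rwa [show K * (1 / (2 * K)) = 1 / 2 by field_simp] at hm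
      have hnn : (0 : ℝ) ≤ (1 / 2 - K * ‖Ψ p‖) * ‖Ψ p‖ := mul_nonneg (by linarith) h0
      nlinarith [hnn]
    have hmax : ‖Ψ p‖ ≤ ‖p‖ + K * ‖Ψ p‖ ^ 2 := by
      rw [Prod.norm_def]
      exact max_le h1 h2
    nlinarith [hmax, hsq]
  have hΨΨle : ∀ᶠ p : ℝ × ℝ in 𝓝 0, ‖Ψ (Ψ p)‖ ≤ 4 * ‖p‖ := by
    filter_upwards [hΨle, htΨ.eventually hΨle] with p h1 h2
    calc ‖Ψ (Ψ p)‖ ≤ 2 * ‖Ψ p‖ := h2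
      _ ≤ 4 * ‖p‖ := by linarith
  -- composition lemmas
  have hpowΨ : ∀ k : ℕ, (fun p => ‖Ψ p‖ ^ k) =O[𝓝 (0 : ℝ × ℝ)] fun p => ‖p‖ ^ k := by
    intro k
    rw [isBigO_iff]
    refine ⟨2 ^ k, ?_⟩
    filter_upwards [hΨle] with p hp
    have h0 : (0 : ℝ) ≤ ‖Ψ p‖ := norm_nonneg _
    have hle : ‖Ψ p‖ ^ k ≤ (2 * ‖p‖) ^ k := pow_le_pow_left₀ h0 hp k
    have h1 : ‖‖Ψ p‖ ^ k‖ = ‖Ψ p‖ ^ k := by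
      simp [abs_of_nonneg (pow_nonneg h0 k)]
    have h2 : ‖‖p‖ ^ k‖ = ‖p‖ ^ k := by
      simp [abs_of_nonneg (pow_nonneg (norm_nonneg p) k)]
    rw [h1, h2]
    calc ‖Ψ p‖ ^ k ≤ (2 * ‖p‖) ^ k := hle
      _ = 2 ^ k * ‖p‖ ^ k := mul_pow 2 ‖p‖ k
  have hpowΨΨ : ∀ k : ℕ, (fun p => ‖Ψ (Ψ p)‖ ^ k) =O[𝓝 (0 : ℝ × ℝ)] fun p => ‖p‖ ^ k := by
    intro k
    rw [isBigO_iff]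
    refine ⟨4 ^ k, ?_⟩
    filter_upwards [hΨΨle] with p hp
    have h0 : (0 : ℝ) ≤ ‖Ψ (Ψ p)‖ := norm_nonneg _
    have hle : ‖Ψ (Ψ p)‖ ^ k ≤ (4 * ‖p‖) ^ k := pow_le_pow_left₀ h0 hp k
    have h1 : ‖‖Ψ (Ψ p)‖ ^ k‖ = ‖Ψ (Ψ p)‖ ^ k := by
      simp [abs_of_nonneg (pow_nonneg h0 k)]
    have h2 : ‖‖p‖ ^ k‖ = ‖p‖ ^ k := by
      simp [abs_of_nonneg (pow_nonneg (norm_nonneg p) k)]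
    rw [h1, h2]
    calc ‖Ψ (Ψ p)‖ ^ k ≤ (4 * ‖p‖) ^ k := hle
      _ = 4 ^ k * ‖p‖ ^ k := mul_pow 4 ‖p‖ k
  have hcompΨ : ∀ {F : ℝ × ℝ → ℝ} {k : ℕ},
      F =O[𝓝 (0 : ℝ × ℝ)] (fun q => ‖q‖ ^ k) →
      (fun p => F (Ψ p)) =O[𝓝 (0 : ℝ × ℝ)] fun p => ‖p‖ ^ k := by
    intro F k h
    exact (h.comp_tendsto htΨ).trans (hpowΨ k)
  have hcompΨΨ : ∀ {F : ℝ × ℝ → ℝ} {k : ℕ},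
      F =O[𝓝 (0 : ℝ × ℝ)] (fun q => ‖q‖ ^ k) →
      (fun p => F (Ψ (Ψ p))) =O[𝓝 (0 : ℝ × ℝ)] fun p => ‖p‖ ^ k := by
    intro F k h
    exact (h.comp_tendsto htΨΨ).trans (hpowΨΨ k)
  -- first-order: `(Ψ p).1 - p.1 = O(‖p‖²)`, `(Ψ p).2 + p.2 = O(‖p‖²)`
  have h1 : (fun p : ℝ × ℝ => (Ψ p).1 - p.1) =O[𝓝 (0 : ℝ × ℝ)] fun p => ‖p‖ ^ 2 := by
    have heq : (fun p : ℝ × ℝ => (Ψ p).1 - p.1)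
        =ᶠ[𝓝 (0 : ℝ × ℝ)] fun p => -((Φ (Ψ p)).1 - (Ψ p).1) := by
      filter_upwards [hWev] with p hp
      rw [(hinv p hp).1]; ring
    exact heq.trans_isBigO (hcompΨ hA).neg_left
  have h2 : (fun p : ℝ × ℝ => (Ψ p).2 + p.2) =O[𝓝 (0 : ℝ × ℝ)] fun p => ‖p‖ ^ 2 := by
    have heq : (fun p : ℝ × ℝ => (Ψ p).2 + p.2)
        =ᶠ[𝓝 (0 : ℝ × ℝ)] fun p => (Φ (Ψ p)).2 + (Ψ p).2 := by
      filter_upwards [hWev] with p hp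
      rw [(hinv p hp).1]; ring
    exact heq.trans_isBigO (hcompΨ hB)
  have h1ΨΨ : (fun p : ℝ × ℝ => (Ψ (Ψ p)).1 - p.1) =O[𝓝 (0 : ℝ × ℝ)] fun p => ‖p‖ ^ 2 := by
    have heq : (fun p : ℝ × ℝ => (Ψ (Ψ p)).1 - p.1)
        = fun p => ((Ψ (Ψ p)).1 - (Ψ p).1) + ((Ψ p).1 - p.1) := by
      funext p; ring
    rw [heq]
    exact (hcompΨ h1).add h1
  -- component big-O's for Ψ
  have hΨ1O : (fun p : ℝ × ℝ => (Ψ p).1) =O[𝓝 (0 : ℝ × ℝ)] fun p => ‖p‖ ^ 1 := by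
    rw [isBigO_iff]
    refine ⟨2, ?_⟩
    filter_upwards [hΨle] with p hp
    have : |(Ψ p).1| ≤ ‖Ψ p‖ := by simpa using norm_fst_le (Ψ p)
    have h2 : ‖‖p‖ ^ 1‖ = ‖p‖ := by simp
    rw [h2]
    calc ‖(Ψ p).1‖ ≤ ‖Ψ p‖ := this
      _ ≤ 2 * ‖p‖ := hp
  -- the cubic quantities
  have hT1 : (fun p : ℝ × ℝ => ((Ψ p).1 - p.1) * ((Ψ p).1 + p.1))
      =O[𝓝 (0 : ℝ × ℝ)] fun p => ‖p‖ ^ 3 := omul h1 (hΨ1O.add ofst)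
  have hT2 : (fun p : ℝ × ℝ => (Ψ p).1 * ((Ψ p).2 + p.2) - p.2 * ((Ψ p).1 - p.1))
      =O[𝓝 (0 : ℝ × ℝ)] fun p => ‖p‖ ^ 3 := (omul hΨ1O h2).sub (omul osnd h1)
  -- second-order expansion of first component of Ψ
  have hF : (fun p : ℝ × ℝ => (Ψ p).1 - (p.1 - p.1 ^ 2 + μ * (p.1 * p.2)))
      =O[𝓝 (0 : ℝ × ℝ)] fun p => ‖p‖ ^ 3 := by
    have heq : (fun p : ℝ × ℝ => (Ψ p).1 - (p.1 - p.1 ^ 2 + μ * (p.1 * p.2)))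
        =ᶠ[𝓝 (0 : ℝ × ℝ)] fun p =>
          -(((Ψ p).1 - p.1) * ((Ψ p).1 + p.1))
          - μ * ((Ψ p).1 * ((Ψ p).2 + p.2) - p.2 * ((Ψ p).1 - p.1))
          - ((Φ (Ψ p)).1 - ((Ψ p).1 + (Ψ p).1 ^ 2 + μ * (Ψ p).1 * (Ψ p).2)) := by
      filter_upwards [hWev] with p hp
      rw [(hinv p hp).1]; ring
    exact heq.trans_isBigO ((hT1.neg_left.sub (hT2.const_mul_left μ)).sub (hcompΨ hX))
  -- FIRST RESULT: first component of Ψ∘Ψ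
  have hmain1 : (fun p : ℝ × ℝ => (Ψ (Ψ p)).1 - (p.1 - 2 * p.1 ^ 2))
      =O[𝓝 (0 : ℝ × ℝ)] fun p => ‖p‖ ^ 3 := by
    have heq : (fun p : ℝ × ℝ => (Ψ (Ψ p)).1 - (p.1 - 2 * p.1 ^ 2))
        = fun p =>
          ((Ψ (Ψ p)).1 - ((Ψ p).1 - (Ψ p).1 ^ 2 + μ * ((Ψ p).1 * (Ψ p).2)))
          + ((Ψ p).1 - (p.1 - p.1 ^ 2 + μ * (p.1 * p.2)))
          + (-(((Ψ p).1 - p.1) * ((Ψ p).1 + p.1)))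
          + μ * ((Ψ p).1 * ((Ψ p).2 + p.2) - p.2 * ((Ψ p).1 - p.1)) := by
      funext p; ring
    rw [heq]
    exact (((hcompΨ hF).add hF).add hT1.neg_left).add (hT2.const_mul_left μ)
  refine ⟨hmain1, ?_⟩
  -- SECOND RESULT
  -- `a` and `b` : the deviations of the two denominators from `1 - lam * p.1`
  have ha : (fun p : ℝ × ℝ => -lam * ((Ψ p).1 - p.1) + E (Ψ p))
      =O[𝓝 (0 : ℝ × ℝ)] fun p => ‖p‖ ^ 2 :=
    (h1.const_mul_left (-lam)).add (hcompΨ hE)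
  have hb : (fun p : ℝ × ℝ => -lam * ((Ψ (Ψ p)).1 - p.1) + E (Ψ (Ψ p)))
      =O[𝓝 (0 : ℝ × ℝ)] fun p => ‖p‖ ^ 2 :=
    (h1ΨΨ.const_mul_left (-lam)).add (hcompΨΨ hE)
  -- tendsto facts for the denominators
  have htab : Tendsto (fun p : ℝ × ℝ => ‖p‖ ^ 2) (𝓝 0) (𝓝 0) := htn two_pos
  have hta : Tendsto (fun p : ℝ × ℝ => -lam * ((Ψ p).1 - p.1) + E (Ψ p)) (𝓝 0) (𝓝 0) :=
    ha.trans_tendsto htab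
  have htb : Tendsto (fun p : ℝ × ℝ => -lam * ((Ψ (Ψ p)).1 - p.1) + E (Ψ (Ψ p)))
      (𝓝 0) (𝓝 0) := hb.trans_tendsto htab
  have htp1 : Tendsto (fun p : ℝ × ℝ => p.1) (𝓝 0) (𝓝 0) := by
    have := (continuous_fst : Continuous fun p : ℝ × ℝ => p.1).tendsto (0 : ℝ × ℝ)
    simpa using this
  -- D tends to 1
  have htD : Tendsto (fun p : ℝ × ℝ =>
      (1 - lam * (Ψ p).1 + E (Ψ p)) * (1 - lam * (Ψ (Ψ p)).1 + E (Ψ (Ψ p)))) (𝓝 0) (𝓝 1) := by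
    have hd1 : Tendsto (fun p : ℝ × ℝ => 1 - lam * (Ψ p).1 + E (Ψ p)) (𝓝 0) (𝓝 1) := by
      have heq : (fun p : ℝ × ℝ => 1 - lam * (Ψ p).1 + E (Ψ p))
          = fun p => (1 - lam * p.1) + (-lam * ((Ψ p).1 - p.1) + E (Ψ p)) := by
        funext p; ring
      rw [heq]
      have hc : Tendsto (fun p : ℝ × ℝ => 1 - lam * p.1) (𝓝 0) (𝓝 1) := by
        have h := (tendsto_const_nhds : Tendsto (fun _ : ℝ × ℝ => (1 : ℝ)) (𝓝 0) (𝓝 1)).sub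
          (htp1.const_mul lam)
        simpa using h
      simpa using hc.add hta
    have hd2 : Tendsto (fun p : ℝ × ℝ => 1 - lam * (Ψ (Ψ p)).1 + E (Ψ (Ψ p))) (𝓝 0) (𝓝 1) := by
      have heq : (fun p : ℝ × ℝ => 1 - lam * (Ψ (Ψ p)).1 + E (Ψ (Ψ p)))
          = fun p => (1 - lam * p.1) + (-lam * ((Ψ (Ψ p)).1 - p.1) + E (Ψ (Ψ p))) := by
        funext p; ring
      rw [heq]
      have hc : Tendsto (fun p : ℝ × ℝ => 1 - lam * p.1) (𝓝 0) (𝓝 1) := by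
        have h := (tendsto_const_nhds : Tendsto (fun _ : ℝ × ℝ => (1 : ℝ)) (𝓝 0) (𝓝 1)).sub
          (htp1.const_mul lam)
        simpa using h
      simpa using hc.add htb
    simpa using hd1.mul hd2
  have hDhalf : ∀ᶠ p : ℝ × ℝ in 𝓝 0,
      1 / 2 < (1 - lam * (Ψ p).1 + E (Ψ p)) * (1 - lam * (Ψ (Ψ p)).1 + E (Ψ (Ψ p))) :=
    htD.eventually (eventually_gt_nhds (by norm_num))
  -- the numerator `N = 1 - D * (1 + 2 lam p.1)` is O(‖p‖²)
  have hg1 : (fun p : ℝ × ℝ => 3 * lam ^ 2 - 2 * lam ^ 3 * p.1)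
      =O[𝓝 (0 : ℝ × ℝ)] (fun _ => (1 : ℝ)) := by
    have hc : Continuous fun p : ℝ × ℝ => 3 * lam ^ 2 - 2 * lam ^ 3 * p.1 := by fun_prop
    exact (hc.tendsto 0).isBigO_one ℝ
  have hg2 : (fun p : ℝ × ℝ => -((1 - lam * p.1) * (1 + 2 * lam * p.1)))
      =O[𝓝 (0 : ℝ × ℝ)] (fun _ => (1 : ℝ)) := by
    have hc : Continuous fun p : ℝ × ℝ => -((1 - lam * p.1) * (1 + 2 * lam * p.1)) := by
      fun_prop
    exact (hc.tendsto 0).isBigO_one ℝ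
  have hg3 : (fun p : ℝ × ℝ => -(1 + 2 * lam * p.1))
      =O[𝓝 (0 : ℝ × ℝ)] (fun _ => (1 : ℝ)) := by
    have hc : Continuous fun p : ℝ × ℝ => -(1 + 2 * lam * p.1) := by fun_prop
    exact (hc.tendsto 0).isBigO_one ℝ
  have hbO1 : (fun p : ℝ × ℝ => -lam * ((Ψ (Ψ p)).1 - p.1) + E (Ψ (Ψ p)))
      =O[𝓝 (0 : ℝ × ℝ)] (fun _ => (1 : ℝ)) := htb.isBigO_one ℝ
  have ht1 : (fun p : ℝ × ℝ => p.1 * p.1 * (3 * lam ^ 2 - 2 * lam ^ 3 * p.1))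
      =O[𝓝 (0 : ℝ × ℝ)] fun p => ‖p‖ ^ 2 := by
    have := (omul ofst ofst).mul hg1
    simpa using this
  have ht2 : (fun p : ℝ × ℝ =>
      ((-lam * ((Ψ p).1 - p.1) + E (Ψ p)) + (-lam * ((Ψ (Ψ p)).1 - p.1) + E (Ψ (Ψ p))))
        * (-((1 - lam * p.1) * (1 + 2 * lam * p.1))))
      =O[𝓝 (0 : ℝ × ℝ)] fun p => ‖p‖ ^ 2 := by
    have := (ha.add hb).mul hg2
    simpa using this
  have ht3 : (fun p : ℝ × ℝ =>
      ((-lam * ((Ψ p).1 - p.1) + E (Ψ p)) * (-lam * ((Ψ (Ψ p)).1 - p.1) + E (Ψ (Ψ p))))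
        * (-(1 + 2 * lam * p.1)))
      =O[𝓝 (0 : ℝ × ℝ)] fun p => ‖p‖ ^ 2 := by
    have := (ha.mul hbO1).mul hg3
    simpa using this
  have hN : (fun p : ℝ × ℝ =>
      1 - (1 - lam * (Ψ p).1 + E (Ψ p)) * (1 - lam * (Ψ (Ψ p)).1 + E (Ψ (Ψ p)))
        * (1 + 2 * lam * p.1))
      =O[𝓝 (0 : ℝ × ℝ)] fun p => ‖p‖ ^ 2 := by
    have heq : (fun p : ℝ × ℝ =>
        1 - (1 - lam * (Ψ p).1 + E (Ψ p)) * (1 - lam * (Ψ (Ψ p)).1 + E (Ψ (Ψ p)))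
          * (1 + 2 * lam * p.1))
        = fun p =>
          p.1 * p.1 * (3 * lam ^ 2 - 2 * lam ^ 3 * p.1)
          + ((-lam * ((Ψ p).1 - p.1) + E (Ψ p)) + (-lam * ((Ψ (Ψ p)).1 - p.1) + E (Ψ (Ψ p))))
            * (-((1 - lam * p.1) * (1 + 2 * lam * p.1)))
          + ((-lam * ((Ψ p).1 - p.1) + E (Ψ p)) * (-lam * ((Ψ (Ψ p)).1 - p.1) + E (Ψ (Ψ p))))
            * (-(1 + 2 * lam * p.1)) := by
      funext p; ring
    rw [heq]
    exact (ht1.add ht2).add ht3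
  -- define E₂
  refine ⟨fun p => 1 / ((1 - lam * (Ψ p).1 + E (Ψ p))
      * (1 - lam * (Ψ (Ψ p)).1 + E (Ψ (Ψ p)))) - 1 - 2 * lam * p.1, ?_, ?_⟩
  · -- E₂ = O(‖p‖²)
    obtain ⟨C, hC⟩ := isBigO_iff.1 hN
    rw [isBigO_iff]
    refine ⟨2 * C, ?_⟩
    filter_upwards [hC, hDhalf] with p hNp hDp
    set D : ℝ := (1 - lam * (Ψ p).1 + E (Ψ p)) * (1 - lam * (Ψ (Ψ p)).1 + E (Ψ (Ψ p)))
      with hDdef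
    have hDpos : 0 < D := by linarith
    have hEeq : 1 / D - 1 - 2 * lam * p.1 = (1 - D * (1 + 2 * lam * p.1)) / D := by
      field_simp
      ring
    have hn2 : ‖‖p‖ ^ 2‖ = ‖p‖ ^ 2 := by
      simp [abs_of_nonneg (pow_nonneg (norm_nonneg p) 2)]
    rw [hn2] at hNp ⊢
    have hNabs : |1 - D * (1 + 2 * lam * p.1)| ≤ C * ‖p‖ ^ 2 := hNp
    have habs : |1 / D - 1 - 2 * lam * p.1| ≤ 2 * |1 - D * (1 + 2 * lam * p.1)| := by
      rw [hEeq, abs_div, abs_of_pos hDpos, div_le_iff₀ hDpos]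
      nlinarith [abs_nonneg (1 - D * (1 + 2 * lam * p.1))]
    calc ‖1 / D - 1 - 2 * lam * p.1‖
        = |1 / D - 1 - 2 * lam * p.1| := rfl
      _ ≤ 2 * |1 - D * (1 + 2 * lam * p.1)| := habs
      _ ≤ 2 * (C * ‖p‖ ^ 2) := by linarith [hNabs, abs_nonneg (1 - D * (1 + 2 * lam * p.1))]
      _ = 2 * C * ‖p‖ ^ 2 := by ring
  · -- the eventual identity for the second component
    filter_upwards [hWev, htΨ.eventually hWev, htΨΨ.eventually hWev, hDhalf]
      with p hpW hΨpW hΨΨpW hDp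
    have e1 := (hinv p hpW).1
    have e2 := (hinv (Ψ p) hΨpW).1
    have e3 := hY (Ψ p) (hWU hΨpW)
    have e4 := hY (Ψ (Ψ p)) (hWU hΨΨpW)
    rw [e1] at e3
    rw [e2] at e4
    have hDpos : 0 < (1 - lam * (Ψ p).1 + E (Ψ p))
        * (1 - lam * (Ψ (Ψ p)).1 + E (Ψ (Ψ p))) := by linarith
    have hD0 := hDpos.ne'
    have hd1 : (1 - lam * (Ψ p).1 + E (Ψ p)) ≠ 0 := left_ne_zero_of_mul hD0
    have hd2 : (1 - lam * (Ψ (Ψ p)).1 + E (Ψ (Ψ p))) ≠ 0 := right_ne_zero_of_mul hD0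
    rw [e3, e4]
    field_simp
    ring
end
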